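/- arXiv:1601.04194 — 9 statements merged into one kernel-verified Lean document; each statement's English description precedes it below -/
import Mathlib

section
/- Let q be a prime power, m ≥ 1, and let a partition of the nonzero vectors of F_q^{2m} be induced by a collection of proper nonzero subspaces (i.e., the subspaces pairwise intersect in 0 and their union is all of F_q^{2m} minus 0). Then the collection has at least q^m + 1 subspaces, with equality if and only if all subspaces have dimension m. -/
/-- A collection of proper nonzero subspaces of `F_q^{2m}` that
partitions the nonzero vectors has at least `q^m + 1` members, with equality
iff all members have dimension `m`. -/
theorem stmt_0 (q m : ℕ) (hq : IsPrimePow q) (hm : 1 ≤ m)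
    (K : Type) [Field K] [Fintype K] (hK : Fintype.card K = q)
    (S : Set (Submodule K (Fin (2 * m) → K)))
    (hne : ∀ X ∈ S, X ≠ ⊥) (hproper : ∀ X ∈ S, X ≠ ⊤)
    (hpart : ∀ v : Fin (2 * m) → K, v ≠ 0 → ∃! X, X ∈ S ∧ v ∈ X) :
    q ^ m + 1 ≤ S.ncard ∧
      (S.ncard = q ^ m + 1 ↔ ∀ X ∈ S, Module.finrank K X = m) := by
  classical
  set V := Fin (2 * m) → K with hV
  have hq2 : 2 ≤ q := hq.two_le
  haveI : FiniteDimensional K V := by infer_instance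
  have hVrank : Module.finrank K V = 2 * m := by
    show Module.finrank K (Fin (2 * m) → K) = 2 * m
    simp [Module.finrank_pi]
  have hVcard : Fintype.card V = q ^ (2 * m) := by
    rw [Module.card_eq_pow_finrank (K := K), hK, hVrank]
  haveI hfinSub : Finite (Submodule K V) :=
    Finite.of_injective (fun X => (X : Set V)) SetLike.coe_injective
  have hfinS : S.Finite := Set.toFinite S
  set t : Finset (Submodule K V) := hfinS.toFinset with ht
  have hmem : ∀ X, X ∈ t ↔ X ∈ S := fun X => hfinS.mem_toFinset
  have hncard : S.ncard = t.card := by exact Set.ncard_eq_toFinset_card S hfinS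
  set d : Submodule K V → ℕ := fun X => Module.finrank K X with hd
  -- cardinality of each subspace
  have hcardX : ∀ X : Submodule K V, Fintype.card X = q ^ d X := by
    intro X
    rw [Module.card_eq_pow_finrank (K := K), hK]
  -- the punctured finsets
  set F : Submodule K V → Finset V := fun X => (X : Set V).toFinset.erase 0 with hF
  have hFcard : ∀ X : Submodule K V, (F X).card = q ^ d X - 1 := by
    intro X
    rw [hF]
    rw [Finset.card_erase_of_mem (by simp), Set.toFinset_card]
    rw [show Fintype.card ((X : Set V)) = Fintype.card X from Fintype.card_congr (Equiv.refl _), hcardX]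
  -- uniqueness consequence
  have huniq : ∀ (v : V), v ≠ 0 → ∀ X ∈ S, v ∈ X → ∀ Y ∈ S, v ∈ Y → X = Y := by
    intro v hv X hX hvX Y hY hvY
    obtain ⟨Z, _, hZ⟩ := hpart v hv
    exact (hZ X ⟨hX, hvX⟩).trans (hZ Y ⟨hY, hvY⟩).symm
  have hdisj : ∀ X ∈ t, ∀ Y ∈ t, X ≠ Y → Disjoint (F X) (F Y) := by
    intro X hX Y hY hXY
    rw [Finset.disjoint_left]
    intro v hvX hvY
    rw [hF, Finset.mem_erase, Set.mem_toFinset] at hvX hvY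
    exact hXY (huniq v hvX.1 X ((hmem X).mp hX) hvX.2 Y ((hmem Y).mp hY) hvY.2)
  have hbiU : t.biUnion F = Finset.univ.erase 0 := by
    ext v
    simp only [Finset.mem_biUnion, hF, Finset.mem_erase, Set.mem_toFinset, Finset.mem_univ,
      and_true, SetLike.mem_coe]
    constructor
    · rintro ⟨X, _, hv0, _⟩; exact hv0
    · intro hv0
      obtain ⟨X, ⟨hXS, hvX⟩, _⟩ := hpart v hv0
      exact ⟨X, (hmem X).mpr hXS, hv0, hvX⟩
  have hsum : ∑ X ∈ t, (q ^ d X - 1) = q ^ (2 * m) - 1 := by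
    have h1 := Finset.card_biUnion hdisj
    rw [hbiU, Finset.card_erase_of_mem (Finset.mem_univ 0), Finset.card_univ, hVcard] at h1
    rw [h1]
    exact Finset.sum_congr rfl fun X _ => (hFcard X).symm
  -- dimension bounds
  have hd1 : ∀ X ∈ t, 1 ≤ d X := by
    intro X hX
    have : Nontrivial X := Submodule.nontrivial_iff_ne_bot.mpr (hne X ((hmem X).mp hX))
    exact Module.finrank_pos
  have hdlt : ∀ X ∈ t, d X < 2 * m := by
    intro X hX
    have := Submodule.finrank_lt (K := K) (hproper X ((hmem X).mp hX))
    rwa [hVrank] at this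
  have hpairs : ∀ X ∈ t, ∀ Y ∈ t, X ≠ Y → d X + d Y ≤ 2 * m := by
    intro X hX Y hY hXY
    have hIbot : X ⊓ Y = ⊥ := by
      by_contra h
      obtain ⟨v, hvI, hv0⟩ := Submodule.exists_mem_ne_zero_of_ne_bot h
      exact hXY (huniq v hv0 X ((hmem X).mp hX) hvI.1 Y ((hmem Y).mp hY) hvI.2)
    have heq := Submodule.finrank_sup_add_finrank_inf_eq X Y
    rw [hIbot] at heq
    simp only [finrank_bot, add_zero] at heq
    have hle : Module.finrank K ↥(X ⊔ Y) ≤ 2 * m :=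
      le_of_le_of_eq (Submodule.finrank_le _) hVrank
    have heq' : Module.finrank K ↥(X ⊔ Y) = d X + d Y := heq
    omega
  have hpowm2 : 2 ≤ q ^ m := le_trans hq2 (Nat.le_self_pow (by omega) q)
  have hsq : q ^ (2 * m) = q ^ m * q ^ m := by rw [two_mul, pow_add]
  -- main case analysis
  have key : q ^ m + 1 ≤ t.card ∧ (t.card = q ^ m + 1 → ∀ X ∈ t, d X = m) := by
    by_cases hall : ∀ X ∈ t, d X ≤ m
    · have hub : ∀ X ∈ t, q ^ d X - 1 ≤ q ^ m - 1 :=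
        fun X hX => Nat.sub_le_sub_right (Nat.pow_le_pow_right (by omega) (hall X hX)) 1
      have hsle : q ^ (2 * m) - 1 ≤ t.card * (q ^ m - 1) := by
        rw [← hsum]
        calc ∑ X ∈ t, (q ^ d X - 1) ≤ ∑ _X ∈ t, (q ^ m - 1) := Finset.sum_le_sum hub
          _ = t.card * (q ^ m - 1) := by rw [Finset.sum_const, smul_eq_mul]
      have hfac : q ^ (2 * m) - 1 = (q ^ m + 1) * (q ^ m - 1) := by
        have := Nat.sq_sub_sq (q ^ m) 1
        simp only [one_pow, pow_one] at this
        rw [hsq, ← pow_two, ← this]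
      have hlb : q ^ m + 1 ≤ t.card := by
        rw [hfac] at hsle
        exact Nat.le_of_mul_le_mul_right hsle (by omega)
      refine ⟨hlb, fun hcard X hX => ?_⟩
      -- equality forces each term to hit the max
      have hterm : q ^ d X - 1 = q ^ m - 1 := by
        by_contra hne'
        have hlt : q ^ d X - 1 < q ^ m - 1 := lt_of_le_of_ne (hub X hX) hne'
        have : ∑ Y ∈ t, (q ^ d Y - 1) < ∑ _Y ∈ t, (q ^ m - 1) :=
          Finset.sum_lt_sum hub ⟨X, hX, hlt⟩
        rw [hsum, Finset.sum_const, smul_eq_mul, hcard, ← hfac] at this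
        omega
      have hpe : q ^ d X = q ^ m := by
        have h1 : 1 ≤ q ^ d X := Nat.one_le_pow _ _ (by omega)
        omega
      exact Nat.pow_right_injective hq2 hpe
    · push_neg at hall
      obtain ⟨X₀, hX₀, hdgt⟩ := hall
      have hd₀lt := hdlt X₀ hX₀
      -- sum over the rest
      have hsplit : (q ^ d X₀ - 1) + ∑ Y ∈ t.erase X₀, (q ^ d Y - 1) = q ^ (2 * m) - 1 := by
        rw [← hsum]
        exact Finset.add_sum_erase t (fun X => q ^ d X - 1) hX₀
      have hrest : ∀ Y ∈ t.erase X₀, q ^ d Y - 1 ≤ q ^ (2 * m - d X₀) - 1 := by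
        intro Y hY
        obtain ⟨hYne, hYt⟩ := Finset.mem_erase.mp hY
        have := hpairs Y hYt X₀ hX₀ hYne
        exact Nat.sub_le_sub_right (Nat.pow_le_pow_right (by omega) (by omega)) 1
      have hrle : ∑ Y ∈ t.erase X₀, (q ^ d Y - 1) ≤ (t.card - 1) * (q ^ (2 * m - d X₀) - 1) := by
        calc ∑ Y ∈ t.erase X₀, (q ^ d Y - 1) ≤ ∑ _Y ∈ t.erase X₀, (q ^ (2 * m - d X₀) - 1) :=
              Finset.sum_le_sum hrest
          _ = (t.card - 1) * (q ^ (2 * m - d X₀) - 1) := by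
              rw [Finset.sum_const, smul_eq_mul, Finset.card_erase_of_mem hX₀]
      have hfac2 : q ^ d X₀ * (q ^ (2 * m - d X₀) - 1) = q ^ (2 * m) - q ^ d X₀ := by
        rw [Nat.mul_sub_one]
        rw [← pow_add, Nat.add_sub_cancel' (le_of_lt hd₀lt)]
      have hple : q ^ d X₀ ≤ q ^ (2 * m) := Nat.pow_le_pow_right (by omega) (le_of_lt hd₀lt)
      have hlhs : q ^ (2 * m) - q ^ d X₀ ≤ (t.card - 1) * (q ^ (2 * m - d X₀) - 1) := by
        have h1 : 1 ≤ q ^ d X₀ := Nat.one_le_pow _ _ (by omega)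
        omega
      have hpos : 0 < q ^ (2 * m - d X₀) - 1 := by
        have : q ≤ q ^ (2 * m - d X₀) := Nat.le_self_pow (by omega) q
        omega
      have hcardge : q ^ d X₀ ≤ t.card - 1 := by
        rw [← hfac2] at hlhs
        exact Nat.le_of_mul_le_mul_right
          (by rw [mul_comm (q ^ d X₀), mul_comm (t.card - 1)] at hlhs ⊢; exact hlhs) hpos
      have hbig : q ^ m + 2 ≤ q ^ d X₀ := by
        have : q ^ (m + 1) ≤ q ^ d X₀ := Nat.pow_le_pow_right (by omega) (by omega)
        have h2 : 2 * q ^ m ≤ q ^ (m + 1) := by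
          calc 2 * q ^ m ≤ q * q ^ m := Nat.mul_le_mul_right _ hq2
            _ = q ^ (m + 1) := by rw [pow_succ, mul_comm]
        omega
      constructor
      · omega
      · intro hcard; omega
  constructor
  · rw [hncard]; exact key.1
  · constructor
    · intro hcard X hX
      exact key.2 (by omega) X ((hmem X).mpr hX)
    · intro halldim
      have hconst : ∑ X ∈ t, (q ^ d X - 1) = t.card * (q ^ m - 1) := by
        rw [Finset.sum_congr rfl
            (fun X hX => show q ^ d X - 1 = q ^ m - 1 by
              rw [show d X = m from halldim X ((hmem X).mp hX)]),
          Finset.sum_const, smul_eq_mul]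
      have hfac : q ^ (2 * m) - 1 = (q ^ m + 1) * (q ^ m - 1) := by
        have := Nat.sq_sub_sq (q ^ m) 1
        simp only [one_pow, pow_one] at this
        rw [hsq, ← pow_two, ← this]
      rw [hsum, hfac] at hconst
      rw [hncard]
      exact (Nat.eq_of_mul_eq_mul_right (by omega) hconst).symm
end

section
/- Let q be a prime power and m ≥ 1. Let F = F_{q^{2m}}, E = F_{q^m}, K = F_q, and T : F → K the trace map. Then the set {x ∈ F : T(xE) = 0} equals θE for some θ ∈ F. -/
/-- With `K = F_q ⊆ E = F_{q^m} ⊆ F = F_{q^{2m}}` and `T` the trace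
map `F → K`, the set `{x ∈ F : T(xE) = 0}` equals `θE` for some `θ ∈ F`. -/
theorem stmt_1 (q m : ℕ) (hq : IsPrimePow q) (hm : 1 ≤ m)
    (K E F : Type) [Field K] [Field E] [Field F]
    [Algebra K E] [Algebra E F] [Algebra K F] [IsScalarTower K E F]
    [Fintype K] [Fintype E] [Fintype F]
    (hK : Fintype.card K = q) (hE : Fintype.card E = q ^ m)
    (hF : Fintype.card F = q ^ (2 * m)) :
    ∃ θ : F,
      {x : F | ∀ e : E, Algebra.trace K F (x * algebraMap E F e) = 0} =
        {y : F | ∃ e : E, y = θ * algebraMap E F e} := by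
  have hFD1 : FiniteDimensional K E := Module.Finite.of_finite
  have hFD2 : FiniteDimensional E F := Module.Finite.of_finite
  have hFD3 : FiniteDimensional K F := Module.Finite.of_finite
  -- finrank of F over E is 2
  have hcardE : Fintype.card E = (Fintype.card E) ^ Module.finrank E E := by simp
  have hrank : Module.finrank E F = 2 := by
    have h1 : Fintype.card F = (Fintype.card E) ^ Module.finrank E F :=
      Module.card_eq_pow_finrank (K := E) (V := F)
    rw [hE, hF] at h1
    have hq1 : 1 < q := hq.two_le
    have hqm : 1 < q ^ m := one_lt_pow₀ (n := m) hq1 (by omega)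
    have : (q ^ m) ^ 2 = (q ^ m) ^ Module.finrank E F := by
      rw [← pow_mul, ← h1]; ring_nf
    exact (Nat.pow_right_injective hqm this.symm)
  -- the set equals the kernel of trace E F
  have hkey : ∀ x : F, (∀ e : E, Algebra.trace K F (x * algebraMap E F e) = 0)
      ↔ Algebra.trace E F x = 0 := by
    intro x
    constructor
    · intro h
      have hnd := traceForm_nondegenerate K E
      apply hnd.1
      intro e
      have := h e
      rw [← Algebra.trace_trace (S := E)] at this
      rw [mul_comm x, ← Algebra.smul_def, map_smul, smul_eq_mul] at this
      simpa [Algebra.traceForm_apply, mul_comm] using this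
    · intro h e
      rw [← Algebra.trace_trace (S := E), mul_comm x, ← Algebra.smul_def, map_smul,
        smul_eq_mul, h, mul_zero, map_zero]
  -- kernel has finrank 1
  set f := (Algebra.trace E F)
  have hsurj : Function.Surjective f := Algebra.trace_surjective E F
  have hrange : LinearMap.range f = ⊤ := LinearMap.range_eq_top.mpr hsurj
  have hker : Module.finrank E (LinearMap.ker f) = 1 := by
    have h := f.finrank_range_add_finrank_ker
    rw [hrange, finrank_top, Module.finrank_self, hrank] at h
    omega
  obtain ⟨θ, hθmem, hθne⟩ : ∃ θ : F, θ ∈ LinearMap.ker f ∧ θ ≠ 0 := by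
    by_contra hcon
    push_neg at hcon
    have : LinearMap.ker f = ⊥ := by
      ext x; simp only [Submodule.mem_bot]
      exact ⟨fun hx => by by_contra hne; exact hne (by by_contra h0; exact h0 (hcon x hx)),
        fun hx => by simp [hx]⟩
    rw [this] at hker; simp at hker
  have hspan : Submodule.span E {θ} = LinearMap.ker f := by
    apply Submodule.eq_of_le_of_finrank_le
    · rwa [Submodule.span_singleton_le_iff_mem]
    · rw [hker, finrank_span_singleton hθne]
  refine ⟨θ, ?_⟩
  ext x
  simp only [Set.mem_setOf_eq, hkey]
  rw [show (Algebra.trace E F x = 0) ↔ x ∈ LinearMap.ker f from Iff.rfl, ← hspan,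
    Submodule.mem_span_singleton]
  constructor
  · rintro ⟨e, rfl⟩
    exact ⟨e, by rw [Algebra.smul_def, mul_comm]⟩
  · rintro ⟨e, rfl⟩
    exact ⟨e, by rw [Algebra.smul_def, mul_comm]⟩
end

section
/- Let q be a prime power, m ≥ 1, F = F_{q^{2m}} ⊇ E = F_{q^m} ⊇ K = F_q, T : F → K the trace map, and θ ∈ F with {x ∈ F : T(xE) = 0} = θE. Equip V = F² with the alternating K-bilinear form f((x,y),(x',y')) = T(xy') − T(x'y). Let Σ_⋆ consist of the K-subspaces [x = 0] = {(0,y) : y ∈ F} and [y = aθx] = {(x, aθx) : x ∈ F} for a ∈ E. Then the number of totally isotropic 2m-dimensional K-subspaces Z of V that meet each member of Σ_⋆ in an m-dimensional K-subspace is exactly gcd(2, q−1), and if there are two such subspaces they intersect in 0. -/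
section Stmt2Aux

variable {K E F : Type} [Field K] [Field E] [Field F]
  [Algebra K E] [Algebra E F] [Algebra K F] [IsScalarTower K E F]

/-- The inclusion `E → F` as a `K`-linear map. -/
noncomputable def auxIota (K : Type) {E F : Type} [Field K] [Field E] [Field F]
    [Algebra K E] [Algebra E F] [Algebra K F] [IsScalarTower K E F] : E →ₗ[K] F :=
  (Algebra.linearMap E F).restrictScalars K

@[simp] lemma auxIota_apply (e : E) : auxIota K (F := F) e = algebraMap E F e := rfl

/-- The `K`-subspace `c·E` of `F`. -/
noncomputable def auxLine (K E : Type) {F : Type} [Field K] [Field E] [Field F]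
    [Algebra K E] [Algebra E F] [Algebra K F] [IsScalarTower K E F] (c : F) :
    Submodule K F :=
  Submodule.map (LinearMap.mulLeft K c) (LinearMap.range (auxIota K (E := E) (F := F)))

lemma mem_auxLine {c x : F} :
    x ∈ auxLine K E c ↔ ∃ e : E, x = c * algebraMap E F e := by
  constructor
  · rintro ⟨y, ⟨e, rfl⟩, rfl⟩
    exact ⟨e, rfl⟩
  · rintro ⟨e, rfl⟩
    exact ⟨algebraMap E F e, ⟨e, rfl⟩, rfl⟩

lemma self_mem_auxLine (c : F) : c ∈ auxLine K E c :=
  mem_auxLine.2 ⟨1, by simp⟩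

/-- If `c' ∈ cE` and `c' ≠ 0`, then `c'E = cE`. -/
lemma auxLine_eq_of_mem {c c' : F} (hc' : c' ≠ 0) (h : c' ∈ auxLine K E c) :
    auxLine K E c' = auxLine K E c := by
  rcases mem_auxLine.1 h with ⟨e, rfl⟩
  have hc : c ≠ 0 := by rintro rfl; simp at hc'
  have he : e ≠ 0 := by rintro rfl; simp at hc'
  ext x
  simp only [mem_auxLine]
  constructor
  · rintro ⟨d, rfl⟩
    exact ⟨e * d, by rw [map_mul]; ring⟩
  · rintro ⟨d, rfl⟩
    refine ⟨e⁻¹ * d, ?_⟩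
    have hie : (algebraMap E F) e ≠ 0 := by
      simpa using he
    rw [map_mul, map_inv₀]
    field_simp

/-- Two lines either coincide or intersect trivially. -/
lemma auxLine_inf_eq_bot {c c' : F} (h : auxLine K E c ≠ auxLine K E c') :
    auxLine K E c ⊓ auxLine K E c' = ⊥ := by
  rw [eq_bot_iff]
  rintro x ⟨hx1, hx2⟩
  simp only [Submodule.mem_bot]
  by_contra hx
  rcases mem_auxLine.1 hx1 with ⟨e, rfl⟩
  have he : e ≠ 0 := by rintro rfl; simp at hx
  have hcc : c ∈ auxLine K E c' := by
    have hie : (algebraMap E F) e ≠ 0 := by simpa using he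
    have : c * algebraMap E F e * algebraMap E F e⁻¹ = c := by
      rw [map_inv₀]; field_simp
    have hmem : c * algebraMap E F e * algebraMap E F e⁻¹ ∈ auxLine K E c' := by
      rcases mem_auxLine.1 hx2 with ⟨d, hd⟩
      exact mem_auxLine.2 ⟨d * e⁻¹, by rw [map_mul, hd]; ring⟩
    rwa [this] at hmem
  have hc : c ≠ 0 := by rintro rfl; simp at hx
  exact h (auxLine_eq_of_mem hc hcc)

lemma auxLine_map (b c : F) :
    Submodule.map (LinearMap.mulLeft K b) (auxLine K E c) = auxLine K E (b * c) := by
  rw [auxLine, auxLine, ← Submodule.map_comp, ← LinearMap.mulLeft_mul]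

lemma finrank_auxLine [FiniteDimensional K F] {c : F} (hc : c ≠ 0) :
    Module.finrank K (auxLine K E c) = Module.finrank K E := by
  rw [auxLine, ← LinearMap.range_comp]
  refine LinearMap.finrank_range_of_inj ?_
  intro a b hab
  simp only [LinearMap.coe_comp, Function.comp_apply, auxIota_apply,
    LinearMap.mulLeft_apply] at hab
  exact (algebraMap E F).injective (mul_left_cancel₀ hc hab)

end Stmt2Aux

section Aux2

variable {K V W : Type} [Field K] [AddCommGroup V] [Module K V]
  [AddCommGroup W] [Module K W]

lemma auxFinrankMap (f : V →ₗ[K] W) (hf : Function.Injective f) (p : Submodule K V) :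
    Module.finrank K (p.map f) = Module.finrank K p :=
  (LinearEquiv.finrank_eq (Submodule.equivMapOfInjective f hf p)).symm

lemma auxFinrankProd [FiniteDimensional K V] [FiniteDimensional K W]
    (p : Submodule K V) (q : Submodule K W) :
    Module.finrank K (p.prod q) = Module.finrank K p + Module.finrank K q := by
  have hsup : p.prod q = p.map (LinearMap.inl K V W) ⊔ q.map (LinearMap.inr K V W) := by
    rw [Submodule.map_inl, Submodule.map_inr]
    ext ⟨x, y⟩
    constructor
    · rintro ⟨hx, hy⟩
      refine Submodule.mem_sup.2 ⟨(x, 0), ⟨hx, Submodule.zero_mem _⟩, (0, y),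
        ⟨Submodule.zero_mem _, hy⟩, by simp⟩
    · rintro h
      rcases Submodule.mem_sup.1 h with ⟨⟨a, b⟩, ⟨ha, hb⟩, ⟨c, d⟩, ⟨hc, hd⟩, heq⟩
      simp only [SetLike.mem_coe, Submodule.mem_bot] at hb hc ha hd
      subst hb; subst hc
      have h1 : a + 0 = x := congrArg Prod.fst heq
      have h2 : 0 + d = y := congrArg Prod.snd heq
      simp only [add_zero] at h1
      simp only [zero_add] at h2
      subst h1; subst h2
      exact ⟨ha, hd⟩
  rw [hsup]
  have h := Submodule.finrank_sup_add_finrank_inf_eq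
    (p.map (LinearMap.inl K V W)) (q.map (LinearMap.inr K V W))
  have hinf : p.map (LinearMap.inl K V W) ⊓ q.map (LinearMap.inr K V W) = ⊥ := by
    rw [Submodule.map_inl, Submodule.map_inr, Submodule.prod_inf_prod]
    simp
  rw [hinf, finrank_bot, add_zero] at h
  rw [h, auxFinrankMap _ LinearMap.inl_injective, auxFinrankMap _ LinearMap.inr_injective]

lemma auxSqEq {L : Type} {a b : L} [Field L] (h : a * a = b * b) : a = b ∨ a = -b := by
  have h2 : (a - b) * (a + b) = 0 := by linear_combination h
  rcases mul_eq_zero.1 h2 with h3 | h3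
  · exact Or.inl (sub_eq_zero.1 h3)
  · exact Or.inr (add_eq_zero_iff_eq_neg.1 h3)

end Aux2

set_option maxHeartbeats 1000000 in
/-- In `V = F²` over `K = F_q` (with `F = F_{q^{2m}}`, `E = F_{q^m}`,
trace `T : F → K`, and `θ` with `{x : T(xE) = 0} = θE`), equipped with the
alternating form `f((x,y),(x',y')) = T(xy') − T(x'y)`, the number of totally
isotropic `2m`-dimensional `K`-subspaces meeting each member of
`Σ_⋆ = {[x=0]} ∪ {[y = aθx] : a ∈ E}` in an `m`-dimensional subspace is exactly
`gcd(2, q−1)`, and two such subspaces intersect in `0`. -/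
theorem stmt_2 (q m : ℕ) (hq : IsPrimePow q) (hm : 1 ≤ m)
    (K E F : Type) [Field K] [Field E] [Field F]
    [Algebra K E] [Algebra E F] [Algebra K F] [IsScalarTower K E F]
    [Fintype K] [Fintype E] [Fintype F]
    (hK : Fintype.card K = q) (hE : Fintype.card E = q ^ m)
    (hF : Fintype.card F = q ^ (2 * m))
    (θ : F)
    (hθ : {x : F | ∀ e : E, Algebra.trace K F (x * algebraMap E F e) = 0} =
          {y : F | ∃ e : E, y = θ * algebraMap E F e})
    (f : F × F → F × F → K)
    (hf : ∀ u v : F × F,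
      f u v = Algebra.trace K F (u.1 * v.2) - Algebra.trace K F (v.1 * u.2))
    (Sstar : Set (Submodule K (F × F)))
    (hSstar : Sstar = {LinearMap.ker (LinearMap.fst K F F)} ∪
        {W | ∃ a : E,
          W = LinearMap.graph (LinearMap.mulLeft K (algebraMap E F a * θ))}) :
    {Z : Submodule K (F × F) |
        Module.finrank K Z = 2 * m ∧
        (∀ u ∈ Z, ∀ v ∈ Z, f u v = 0) ∧
        ∀ W ∈ Sstar, Module.finrank K ↥(Z ⊓ W) = m}.ncard = Nat.gcd 2 (q - 1) ∧
      ∀ Z₁ Z₂ : Submodule K (F × F),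
        (Module.finrank K Z₁ = 2 * m ∧ (∀ u ∈ Z₁, ∀ v ∈ Z₁, f u v = 0) ∧
          ∀ W ∈ Sstar, Module.finrank K ↥(Z₁ ⊓ W) = m) →
        (Module.finrank K Z₂ = 2 * m ∧ (∀ u ∈ Z₂, ∀ v ∈ Z₂, f u v = 0) ∧
          ∀ W ∈ Sstar, Module.finrank K ↥(Z₂ ⊓ W) = m) →
        Z₁ ≠ Z₂ → Z₁ ⊓ Z₂ = ⊥ := by
  classical
  have hq2 : 2 ≤ q := hq.two_le
  -- finrank computations
  have hfE : Module.finrank K E = m := by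
    have h1 : Fintype.card E = Fintype.card K ^ Module.finrank K E := by
      rw [Module.card_fintype (Module.finBasis K E)]
      simp
    rw [hK, hE] at h1
    exact (Nat.pow_right_injective hq2 h1).symm
  have hfF : Module.finrank K F = 2 * m := by
    have h1 : Fintype.card F = Fintype.card K ^ Module.finrank K F := by
      rw [Module.card_fintype (Module.finBasis K F)]
      simp
    rw [hK, hF] at h1
    exact (Nat.pow_right_injective hq2 h1).symm
  have hθE : ∀ x : F, (∀ e : E, Algebra.trace K F (x * algebraMap E F e) = 0) ↔
      (∃ e : E, x = θ * algebraMap E F e) := fun x => Set.ext_iff.1 hθ x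
  -- θ ≠ 0
  have hθ0 : θ ≠ 0 := by
    have hB : ∃ x : F, x ≠ 0 ∧ ∀ e : E, Algebra.trace K F (x * algebraMap E F e) = 0 := by
      set B : F →ₗ[K] E →ₗ[K] K := LinearMap.mk₂ K
        (fun x e => Algebra.trace K F (x * auxIota K e))
        (fun x y e => by
          show Algebra.trace K F ((x + y) * auxIota K e) = _
          rw [add_mul, map_add])
        (fun k x e => by
          show Algebra.trace K F ((k • x) * auxIota K e) = k • Algebra.trace K F (x * auxIota K e)
          rw [smul_mul_assoc, map_smul])
        (fun x e e' => by
          show Algebra.trace K F (x * auxIota K (e + e')) = _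
          rw [map_add, mul_add, map_add])
        (fun k x e => by
          show Algebra.trace K F (x * auxIota K (k • e)) = k • Algebra.trace K F (x * auxIota K e)
          rw [map_smul, mul_smul_comm, map_smul]) with hBdef
      have hrange : Module.finrank K (LinearMap.range B) ≤ m := by
        have h1 : Module.finrank K (LinearMap.range B) ≤ Module.finrank K (E →ₗ[K] K) :=
          Submodule.finrank_le _
        rwa [Module.finrank_linearMap, hfE, Module.finrank_self, mul_one] at h1
      have h2 := LinearMap.finrank_range_add_finrank_ker B
      rw [hfF] at h2
      have hker : LinearMap.ker B ≠ ⊥ := by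
        intro hbot
        rw [hbot, finrank_bot] at h2
        omega
      rcases (Submodule.ne_bot_iff _).1 hker with ⟨x, hxk, hx0⟩
      refine ⟨x, hx0, fun e => ?_⟩
      have h3 := LinearMap.congr_fun (LinearMap.mem_ker.1 hxk) e
      simpa [hBdef] using h3
    rcases hB with ⟨x, hx0, hxall⟩
    rcases (hθE x).1 hxall with ⟨e, rfl⟩
    intro h
    exact hx0 (by rw [h, zero_mul])
  -- trace of θ·E vanishes
  have htrθ : ∀ a : E, Algebra.trace K F (θ * algebraMap E F a) = 0 := by
    intro a
    have h := (hθE (θ * algebraMap E F a)).2 ⟨a, rfl⟩ 1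
    simpa using h
  -- finrank of lines is m
  have hlrk : ∀ c : F, c ≠ 0 → Module.finrank K (auxLine K E c) = m := by
    intro c hc
    rw [finrank_auxLine hc, hfE]
  -- the key characterization
  have key : ∀ Z : Submodule K (F × F),
      (Module.finrank K Z = 2 * m ∧ (∀ u ∈ Z, ∀ v ∈ Z, f u v = 0) ∧
        ∀ W ∈ Sstar, Module.finrank K ↥(Z ⊓ W) = m) ↔
      ∃ c : F, c ≠ 0 ∧ (∃ e : E, c * c = algebraMap E F e) ∧
        Z = (auxLine K E c).prod (auxLine K E (c * θ)) := by
    intro Z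
    constructor
    · rintro ⟨hrk, hiso, hint⟩
      -- the two intersection conditions
      have hintker : Module.finrank K
          ↥(Z ⊓ LinearMap.ker (LinearMap.fst K F F)) = m :=
        hint _ (by rw [hSstar]; exact Set.mem_union_left _ rfl)
      have hintg : ∀ a : E, Module.finrank K
          ↥(Z ⊓ LinearMap.graph (LinearMap.mulLeft K (algebraMap E F a * θ))) = m :=
        fun a => hint _ (by rw [hSstar]; exact Set.mem_union_right _ ⟨a, rfl⟩)
      set X : Submodule K F := Z.comap (LinearMap.inl K F F) with hXdef
      set Y : Submodule K F := Z.comap (LinearMap.inr K F F) with hYdef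
      have hYm : Module.finrank K Y = m := by
        have h1 : Z ⊓ LinearMap.ker (LinearMap.fst K F F)
            = Y.map (LinearMap.inr K F F) := by
          ext ⟨x, y⟩
          constructor
          · rintro ⟨hz, hk⟩
            have hx : x = 0 := hk
            subst hx
            exact ⟨y, hz, rfl⟩
          · rintro ⟨y', hy', heq⟩
            have h2 : ((0 : F), y') = (x, y) := heq
            rw [← h2]
            exact ⟨hy', rfl⟩
        rw [h1, auxFinrankMap _ LinearMap.inr_injective] at hintker
        exact hintker
      have hXm : Module.finrank K X = m := by
        have h0 := hintg 0
        have hg0 : LinearMap.graph (LinearMap.mulLeft K (algebraMap E F (0:E) * θ))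
            = (⊤ : Submodule K F).prod ⊥ := by
          ext ⟨x, y⟩
          simp [LinearMap.mem_graph_iff]
        have h1 : Z ⊓ (⊤ : Submodule K F).prod ⊥ = X.map (LinearMap.inl K F F) := by
          ext ⟨x, y⟩
          constructor
          · rintro ⟨hz, -, hy⟩
            simp only [SetLike.mem_coe, Submodule.mem_bot] at hy
            subst hy
            exact ⟨x, hz, rfl⟩
          · rintro ⟨x', hx', heq⟩
            have h2 : (x', (0 : F)) = (x, y) := heq
            rw [← h2]
            exact ⟨hx', trivial, rfl⟩
        rw [hg0, h1, auxFinrankMap _ LinearMap.inl_injective] at h0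
        exact h0
      have hprodle : X.prod Y ≤ Z := by
        rintro ⟨x, y⟩ ⟨hx, hy⟩
        have h1 : (x, (0:F)) ∈ Z := hx
        have h2 : ((0:F), y) ∈ Z := hy
        have := Z.add_mem h1 h2
        simpa using this
      have hZeq : Z = X.prod Y := by
        refine (Submodule.eq_of_le_of_finrank_le hprodle ?_).symm
        rw [hrk, auxFinrankProd, hXm, hYm]; omega
      -- graph conditions: a·θ·X ⊆ Y
      have claim0 : ∀ (a : E) (x : F), x ∈ X → (algebraMap E F a * θ) * x ∈ Y := by
        intro a
        set g := LinearMap.mulLeft K (algebraMap E F a * θ) with hgdef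
        have h1 : Z ⊓ LinearMap.graph g
            = Submodule.map (LinearMap.prod LinearMap.id g) (X ⊓ Y.comap g) := by
          ext ⟨x, y⟩
          constructor
          · rintro ⟨hz, hgr⟩
            have hy : y = g x := (LinearMap.mem_graph_iff _ _).1 hgr
            subst hy
            rw [hZeq] at hz
            exact ⟨x, ⟨hz.1, hz.2⟩, rfl⟩
          · rintro ⟨x', ⟨hx1, hx2⟩, heq⟩
            have h2 : (x', g x') = (x, y) := heq
            rw [← h2]
            refine ⟨?_, (LinearMap.mem_graph_iff _ _).2 rfl⟩
            rw [hZeq]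
            exact ⟨hx1, hx2⟩
        have hinj : Function.Injective (LinearMap.prod (LinearMap.id (R := K) (M := F)) g) :=
          fun u v h => congrArg Prod.fst h
        have h2 : Module.finrank K ↥(X ⊓ Y.comap g) = m := by
          have := hintg a
          rw [h1, auxFinrankMap _ hinj] at this
          exact this
        have h3 : X ⊓ Y.comap g = X :=
          Submodule.eq_of_le_of_finrank_le inf_le_left (by rw [hXm, h2])
        intro x hx
        exact Submodule.mem_comap.1 ((inf_eq_left.1 h3) hx)
      -- isotropy: T(X·Y) = 0
      have hiso' : ∀ x ∈ X, ∀ y ∈ Y, Algebra.trace K F (x * y) = 0 := by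
        intro x hx y hy
        have h1 : ((x, (0:F)) : F × F) ∈ Z := by rw [hZeq]; exact ⟨hx, Y.zero_mem⟩
        have h2 : (((0:F), y) : F × F) ∈ Z := by rw [hZeq]; exact ⟨X.zero_mem, hy⟩
        have h3 := hiso _ h1 _ h2
        rw [hf] at h3
        simpa using h3
      -- products of elements of X lie in E
      have hmulE : ∀ x ∈ X, ∀ x' ∈ X, ∃ e : E, x * x' = algebraMap E F e := by
        intro x hx x' hx'
        have h1 : ∀ a : E, Algebra.trace K F ((θ * (x * x')) * algebraMap E F a) = 0 := by
          intro a
          have h0 := claim0 a x hx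
          have h2 := hiso' x' hx' _ h0
          have heq : (θ * (x * x')) * algebraMap E F a
              = x' * ((algebraMap E F a * θ) * x) := by ring
          rw [heq]
          exact h2
        rcases (hθE (θ * (x * x'))).1 h1 with ⟨e, he⟩
        exact ⟨e, mul_left_cancel₀ hθ0 he⟩
      -- pick a nonzero element of X
      have hXne : X ≠ ⊥ := by
        intro h
        rw [h, finrank_bot] at hXm
        omega
      rcases (Submodule.ne_bot_iff X).1 hXne with ⟨x₀, hx₀X, hx₀⟩
      -- x₀ · X = E
      have hmapE : Submodule.map (LinearMap.mulLeft K x₀) X = auxLine K E 1 := by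
        refine Submodule.eq_of_le_of_finrank_le ?_ ?_
        · rintro z ⟨x, hx, rfl⟩
          rcases hmulE x₀ hx₀X x hx with ⟨e, he⟩
          exact mem_auxLine.2 ⟨e, by rw [← he]; simp [LinearMap.mulLeft_apply]⟩
        · rw [hlrk 1 one_ne_zero,
            auxFinrankMap _ (fun a b h => mul_left_cancel₀ hx₀ h), hXm]
      have hXline : X = auxLine K E x₀⁻¹ := by
        have hcomp : Submodule.map (LinearMap.mulLeft K x₀⁻¹)
            (Submodule.map (LinearMap.mulLeft K x₀) X) = X := by
          rw [← Submodule.map_comp, ← LinearMap.mulLeft_mul, inv_mul_cancel₀ hx₀]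
          have : LinearMap.mulLeft K (1 : F) = LinearMap.id := by
            ext z; simp
          rw [this, Submodule.map_id]
        rw [← hcomp, hmapE, auxLine_map, mul_one]
      -- Y = θ·x₀⁻¹·E
      have hYline : Y = auxLine K E (x₀⁻¹ * θ) := by
        have hle : Submodule.map (LinearMap.mulLeft K θ) X ≤ Y := by
          rintro z ⟨x, hx, rfl⟩
          have h0 := claim0 1 x hx
          simpa using h0
        have hmap : Submodule.map (LinearMap.mulLeft K θ) X = auxLine K E (θ * x₀⁻¹) := by
          rw [hXline, auxLine_map]
        rw [hmap] at hle
        have := Submodule.eq_of_le_of_finrank_le hle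
          (by rw [hYm, hlrk _ (mul_ne_zero hθ0 (inv_ne_zero hx₀))])
        rw [← this, mul_comm]
      -- conclude
      rcases hmulE x₀ hx₀X x₀ hx₀X with ⟨e, he⟩
      have he0 : e ≠ 0 := by
        rintro rfl
        simp only [map_zero] at he
        exact hx₀ (by
          rcases mul_eq_zero.1 he with h | h <;> exact h)
      refine ⟨x₀⁻¹, inv_ne_zero hx₀, ⟨e⁻¹, ?_⟩, ?_⟩
      · rw [map_inv₀, ← he, mul_inv]
      · rw [hZeq, hXline, hYline]
    · rintro ⟨c, hc, ⟨e₀, he₀⟩, rfl⟩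
      have hcθ : c * θ ≠ 0 := mul_ne_zero hc hθ0
      refine ⟨?_, ?_, ?_⟩
      · rw [auxFinrankProd, hlrk c hc, hlrk _ hcθ]
        omega
      · rintro ⟨u1, u2⟩ hu ⟨v1, v2⟩ hv
        rcases Submodule.mem_prod.1 hu with ⟨hu1, hu2⟩
        rcases Submodule.mem_prod.1 hv with ⟨hv1, hv2⟩
        rcases mem_auxLine.1 hu1 with ⟨e1, rfl⟩
        rcases mem_auxLine.1 hu2 with ⟨e2, rfl⟩
        rcases mem_auxLine.1 hv1 with ⟨e3, rfl⟩
        rcases mem_auxLine.1 hv2 with ⟨e4, rfl⟩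
        have habs : ∀ a b : E,
            Algebra.trace K F ((c * algebraMap E F a) * ((c * θ) * algebraMap E F b)) = 0 := by
          intro a b
          have heq : (c * algebraMap E F a) * ((c * θ) * algebraMap E F b)
              = θ * algebraMap E F (e₀ * (a * b)) := by
            rw [map_mul, map_mul, ← he₀]
            ring
          rw [heq]
          exact htrθ _
        rw [hf]
        simp only
        rw [habs e1 e4, habs e3 e2, sub_zero]
      · intro W hW
        rw [hSstar] at hW
        rcases hW with hW | ⟨a, rfl⟩
        · simp only [Set.mem_singleton_iff] at hW
          subst hW
          have h1 : (auxLine K E c).prod (auxLine K E (c * θ))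
              ⊓ LinearMap.ker (LinearMap.fst K F F)
              = (⊥ : Submodule K F).prod (auxLine K E (c * θ)) := by
            have hker : LinearMap.ker (LinearMap.fst K F F)
                = (⊥ : Submodule K F).prod ⊤ := by
              ext ⟨x, y⟩
              simp [LinearMap.mem_ker]
            rw [hker, Submodule.prod_inf_prod]
            simp
          rw [h1, auxFinrankProd, finrank_bot, zero_add, hlrk _ hcθ]
        · set g := LinearMap.mulLeft K (algebraMap E F a * θ) with hgdef
          have himg : ∀ x ∈ auxLine K E c, g x ∈ auxLine K E (c * θ) := by
            intro x hx
            rcases mem_auxLine.1 hx with ⟨d, rfl⟩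
            refine mem_auxLine.2 ⟨a * d, ?_⟩
            rw [hgdef]
            simp only [LinearMap.mulLeft_apply]
            rw [map_mul]
            ring
          have h1 : (auxLine K E c).prod (auxLine K E (c * θ)) ⊓ LinearMap.graph g
              = Submodule.map (LinearMap.prod LinearMap.id g) (auxLine K E c) := by
            ext ⟨x, y⟩
            constructor
            · rintro ⟨hz, hgr⟩
              have hy : y = g x := (LinearMap.mem_graph_iff _ _).1 hgr
              subst hy
              exact ⟨x, (Submodule.mem_prod.1 hz).1, rfl⟩
            · rintro ⟨x', hx', heq⟩
              have h2 : (x', g x') = (x, y) := heq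
              rw [← h2]
              exact ⟨Submodule.mem_prod.2 ⟨hx', himg _ hx'⟩,
                (LinearMap.mem_graph_iff _ _).2 rfl⟩
          have hinj : Function.Injective
              (LinearMap.prod (LinearMap.id (R := K) (M := F)) g) :=
            fun u v h => congrArg Prod.fst h
          rw [h1, auxFinrankMap _ hinj, hlrk c hc]
  -- lines determine the solution; distinct solutions are disjoint
  have disj : ∀ c₁ c₂ : F, c₁ ≠ 0 → c₂ ≠ 0 →
      (auxLine K E c₁).prod (auxLine K E (c₁ * θ))
        ≠ (auxLine K E c₂).prod (auxLine K E (c₂ * θ)) →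
      (auxLine K E c₁).prod (auxLine K E (c₁ * θ))
        ⊓ (auxLine K E c₂).prod (auxLine K E (c₂ * θ)) = ⊥ := by
    intro c₁ c₂ hc₁ hc₂ hne
    have hlines : auxLine K E c₁ ≠ auxLine K E c₂ := by
      intro h
      apply hne
      have hmem : c₂ ∈ auxLine K E c₁ := h ▸ self_mem_auxLine c₂
      rcases mem_auxLine.1 hmem with ⟨e, he⟩
      have hmem2 : c₂ * θ ∈ auxLine K E (c₁ * θ) :=
        mem_auxLine.2 ⟨e, by rw [he]; ring⟩
      rw [h, auxLine_eq_of_mem (mul_ne_zero hc₂ hθ0) hmem2]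
    have hlinesθ : auxLine K E (c₁ * θ) ≠ auxLine K E (c₂ * θ) := by
      intro h
      apply hlines
      have hmem : c₂ * θ ∈ auxLine K E (c₁ * θ) := h ▸ self_mem_auxLine (c₂ * θ)
      rcases mem_auxLine.1 hmem with ⟨e, he⟩
      have he' : c₂ = c₁ * algebraMap E F e := by
        have : c₂ * θ = (c₁ * algebraMap E F e) * θ := by rw [he]; ring
        exact mul_right_cancel₀ hθ0 this
      have hmem2 : c₂ ∈ auxLine K E c₁ := mem_auxLine.2 ⟨e, he'⟩
      exact (auxLine_eq_of_mem hc₂ hmem2).symm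
    rw [Submodule.prod_inf_prod, auxLine_inf_eq_bot hlines,
      auxLine_inf_eq_bot hlinesθ, Submodule.prod_bot]
  constructor
  · -- the counting statement
    rcases Nat.even_or_odd q with hqe | hqo
    · -- q even: unique solution
      have hchar2E : ringChar E = 2 := by
        rw [FiniteField.even_card_iff_char_two, hE]
        rcases hqe with ⟨k, hk⟩
        have : q % 2 = 0 := by omega
        have h2 : q ^ m % 2 = 0 := by
          have : (2 : ℕ) ∣ q := by omega
          have h3 : (2 : ℕ) ∣ q ^ m := this.trans (dvd_pow_self q (by omega))
          omega
        exact h2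
      haveI : CharP E 2 := hchar2E ▸ ringChar.charP E
      have hsqsurj : Function.Surjective (fun d : E => d * d) := by
        rw [← Finite.injective_iff_surjective]
        intro d₁ d₂ h
        rcases auxSqEq h with h | h
        · exact h
        · rw [CharTwo.neg_eq] at h
          exact h
      have huniq : {Z : Submodule K (F × F) |
          Module.finrank K Z = 2 * m ∧ (∀ u ∈ Z, ∀ v ∈ Z, f u v = 0) ∧
          ∀ W ∈ Sstar, Module.finrank K ↥(Z ⊓ W) = m}
          = {(auxLine K E (1:F)).prod (auxLine K E ((1:F) * θ))} := by
        ext Z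
        simp only [Set.mem_setOf_eq, Set.mem_singleton_iff]
        rw [key]
        constructor
        · rintro ⟨c, hc, ⟨e, he⟩, rfl⟩
          rcases hsqsurj e with ⟨d, hd⟩
          have hcd : c * c = algebraMap E F d * algebraMap E F d := by
            rw [he, ← hd, map_mul]
          have hd0 : d ≠ 0 := by
            rintro rfl
            apply hc
            simp only [map_zero, mul_zero] at hcd
            rcases mul_eq_zero.1 hcd with h | h <;> exact h
          have hcE : c ∈ auxLine K E 1 := by
            rcases auxSqEq hcd with h | h
            · exact mem_auxLine.2 ⟨d, by rw [h, one_mul]⟩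
            · exact mem_auxLine.2 ⟨-d, by rw [h, one_mul, map_neg]⟩
          rcases mem_auxLine.1 hcE with ⟨d', hd'⟩
          have hcθE : c * θ ∈ auxLine K E (1 * θ) :=
            mem_auxLine.2 ⟨d', by rw [hd']; ring⟩
          rw [auxLine_eq_of_mem hc hcE,
            auxLine_eq_of_mem (mul_ne_zero hc hθ0) hcθE]
        · rintro rfl
          exact ⟨1, one_ne_zero, ⟨1, by simp⟩, rfl⟩
      rw [huniq, Set.ncard_singleton]
      have hodd : Odd (q - 1) := Nat.Even.sub_odd (by omega) hqe odd_one
      rw [Nat.gcd_rec, Nat.odd_iff.1 hodd]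
      simp
    · -- q odd: exactly two solutions
      have hcharE : ringChar E ≠ 2 := by
        intro h
        have h2 := FiniteField.even_card_iff_char_two.1 h
        rw [hE] at h2
        have h3 : Odd (q ^ m) := hqo.pow
        rw [Nat.odd_iff] at h3
        omega
      have hcharF : ringChar F ≠ 2 := by
        intro h
        have h2 := FiniteField.even_card_iff_char_two.1 h
        rw [hF] at h2
        have h3 : Odd (q ^ (2 * m)) := hqo.pow
        rw [Nat.odd_iff] at h3
        omega
      obtain ⟨u, hu⟩ := FiniteField.exists_nonsquare (F := E) hcharE
      have hu0 : u ≠ 0 := by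
        rintro rfl
        exact hu ⟨0, by ring⟩
      have hιu0 : algebraMap E F u ≠ 0 := by
        simpa using hu0
      -- u is a square in F
      have hιu : IsSquare (algebraMap E F u) := by
        rw [FiniteField.isSquare_iff hcharF hιu0]
        obtain ⟨k, hk⟩ : ∃ k, q ^ m = k + 1 := by
          have : 1 ≤ q ^ m := Nat.one_le_pow _ _ (by omega)
          exact ⟨q ^ m - 1, by omega⟩
        obtain ⟨t, ht⟩ : ∃ t, k + 2 = 2 * t := by
          have : Odd (q ^ m) := hqo.pow
          rcases this with ⟨j, hj⟩
          exact ⟨j + 1, by omega⟩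
        have hcard2 : Fintype.card F / 2 = k * t := by
          have h1 : Fintype.card F = (k + 1) ^ 2 := by
            rw [hF, mul_comm 2 m, pow_mul, hk]
          have h2 : (k + 1) ^ 2 = 2 * (k * t) + 1 := by
            calc (k + 1) ^ 2 = k * (k + 2) + 1 := by ring
              _ = k * (2 * t) + 1 := by rw [ht]
              _ = 2 * (k * t) + 1 := by ring
          omega
        have hpow : (algebraMap E F u) ^ k = 1 := by
          have h1 : u ^ (Fintype.card E - 1) = 1 :=
            FiniteField.pow_card_sub_one_eq_one u hu0
          rw [hE, hk] at h1
          simp only [Nat.add_sub_cancel] at h1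
          rw [← map_pow, h1, map_one]
        rw [hcard2, pow_mul, hpow, one_pow]
      obtain ⟨w, hw⟩ := hιu
      have hw0 : w ≠ 0 := by
        rintro rfl
        rw [mul_zero] at hw
        exact hιu0 hw
      have hwE : ∀ d : E, w ≠ algebraMap E F d := by
        intro d h
        apply hu
        refine ⟨d, ?_⟩
        apply (algebraMap E F).injective
        rw [hw, map_mul, h]
      -- the set is the pair {Z1, Z2}
      have hpair : {Z : Submodule K (F × F) |
          Module.finrank K Z = 2 * m ∧ (∀ u ∈ Z, ∀ v ∈ Z, f u v = 0) ∧
          ∀ W ∈ Sstar, Module.finrank K ↥(Z ⊓ W) = m}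
          = {(auxLine K E (1:F)).prod (auxLine K E ((1:F) * θ)),
             (auxLine K E w).prod (auxLine K E (w * θ))} := by
        ext Z
        simp only [Set.mem_setOf_eq, Set.mem_insert_iff, Set.mem_singleton_iff]
        rw [key]
        constructor
        · rintro ⟨c, hc, ⟨e₀, he₀⟩, rfl⟩
          have he₀0 : e₀ ≠ 0 := by
            rintro rfl
            apply hc
            simp only [map_zero] at he₀
            rcases mul_eq_zero.1 he₀ with h | h <;> exact h
          by_cases hsq : IsSquare e₀
          · left
            rcases hsq with ⟨d, hd⟩
            have hcd : c * c = algebraMap E F d * algebraMap E F d := by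
              rw [he₀, hd, map_mul]
            have hcE : c ∈ auxLine K E 1 := by
              rcases auxSqEq hcd with h | h
              · exact mem_auxLine.2 ⟨d, by rw [h, one_mul]⟩
              · exact mem_auxLine.2 ⟨-d, by rw [h, one_mul, map_neg]⟩
            rcases mem_auxLine.1 hcE with ⟨d', hd'⟩
            have hcθE : c * θ ∈ auxLine K E (1 * θ) :=
              mem_auxLine.2 ⟨d', by rw [hd']; ring⟩
            rw [auxLine_eq_of_mem hc hcE,
              auxLine_eq_of_mem (mul_ne_zero hc hθ0) hcθE]
          · right
            -- e₀·u is a square in E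
            have hsq2 : IsSquare (e₀ * u) := by
              have h1 : quadraticChar E e₀ = -1 :=
                quadraticChar_neg_one_iff_not_isSquare.2 hsq
              have h2 : quadraticChar E u = -1 :=
                quadraticChar_neg_one_iff_not_isSquare.2 hu
              have h3 : quadraticChar E (e₀ * u) = 1 := by
                rw [map_mul, h1, h2]
                ring
              exact (quadraticChar_one_iff_isSquare (mul_ne_zero he₀0 hu0)).1 h3
            rcases hsq2 with ⟨d, hd⟩
            have hd0 : d ≠ 0 := by
              rintro rfl
              rw [mul_zero] at hd
              rcases mul_eq_zero.1 hd with h | h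
              · exact he₀0 h
              · exact hu0 h
            have hcw : (c * w) * (c * w) = algebraMap E F d * algebraMap E F d := by
              rw [← map_mul, ← hd, map_mul, ← he₀, hw]
              ring
            have hιd0 : algebraMap E F d ≠ 0 := by simpa using hd0
            have hcwE : c ∈ auxLine K E w := by
              rcases auxSqEq hcw with h | h
              · refine mem_auxLine.2 ⟨d * u⁻¹, ?_⟩
                rw [map_mul, map_inv₀, hw, ← h]
                field_simp
              · refine mem_auxLine.2 ⟨-(d * u⁻¹), ?_⟩
                have h' : algebraMap E F d = -(c * w) := by linear_combination h
                rw [map_neg, map_mul, map_inv₀, hw, h']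
                field_simp
            rcases mem_auxLine.1 hcwE with ⟨d', hd'⟩
            have hcθE : c * θ ∈ auxLine K E (w * θ) :=
              mem_auxLine.2 ⟨d', by rw [hd']; ring⟩
            rw [auxLine_eq_of_mem hc hcwE,
              auxLine_eq_of_mem (mul_ne_zero hc hθ0) hcθE]
        · rintro (rfl | rfl)
          · exact ⟨1, one_ne_zero, ⟨1, by simp⟩, rfl⟩
          · exact ⟨w, hw0, ⟨u, hw.symm⟩, rfl⟩
      have hne12 : (auxLine K E (1:F)).prod (auxLine K E ((1:F) * θ))
          ≠ (auxLine K E w).prod (auxLine K E (w * θ)) := by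
        intro h
        have hmem : (w, w * θ) ∈ (auxLine K E w).prod (auxLine K E (w * θ)) :=
          ⟨self_mem_auxLine w, self_mem_auxLine (w * θ)⟩
        rw [← h] at hmem
        rcases mem_auxLine.1 hmem.1 with ⟨d, hd⟩
        have hd' : w = 1 * algebraMap E F d := hd
        rw [one_mul] at hd'
        exact hwE d hd'
      rw [hpair, Set.ncard_pair hne12]
      have h2dvd : (2 : ℕ) ∣ q - 1 := by
        rcases hqo with ⟨j, hj⟩
        exact ⟨j, by omega⟩
      rw [Nat.gcd_eq_left h2dvd]
  · -- intersections
    intro Z₁ Z₂ h₁ h₂ hne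
    rcases (key Z₁).1 h₁ with ⟨c₁, hc₁, -, rfl⟩
    rcases (key Z₂).1 h₂ with ⟨c₂, hc₂, -, rfl⟩
    exact disj c₁ c₂ hc₁ hc₂ hne
end

section
/- Let q be an even prime power, k ≥ 1, E = F_q ⊆ F = F_{q^k}, and let V be an F-vector space equipped with a quadratic form Q : V → F. If X is an E-subspace of V with |X| > q^{k² + k}, then X contains a nonzero vector v with Q(v) = 0. -/
/-- Let `q` be even, `E = F_q ⊆ F = F_{q^k}`, and `V` an `F`-vector
space with a quadratic form `Q : V → F`.  Any `E`-subspace `X` of `V` with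
`|X| > q^{k²+k}` contains a nonzero vector `v` with `Q v = 0`. -/
theorem stmt_4 (q k : ℕ) (hq : IsPrimePow q) (hqe : Even q) (hk : 1 ≤ k)
    (E F : Type) [Field E] [Field F] [Algebra E F]
    [Fintype E] [Fintype F]
    (hE : Fintype.card E = q) (hF : Fintype.card F = q ^ k)
    (V : Type) [AddCommGroup V] [Module F V] [Module E V] [IsScalarTower E F V]
    (Q : QuadraticForm F V)
    (X : Submodule E V) (hX : Nat.card X > q ^ (k ^ 2 + k)) :
    ∃ v ∈ X, v ≠ 0 ∧ Q v = 0 := by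
  classical
  have hq2 : 2 ≤ q := hq.two_le
  -- characteristic of E is 2
  have hchar : ringChar E = 2 := by
    have hprime : (ringChar E).Prime := CharP.char_is_prime E (ringChar E)
    obtain ⟨m, hp, hcard⟩ := FiniteField.card E (ringChar E)
    have h2 : (2 : ℕ) ∣ ringChar E ^ (m : ℕ) := by
      rw [← hcard, hE]; exact hqe.two_dvd
    have := Nat.Prime.dvd_of_dvd_pow Nat.prime_two h2
    exact ((Nat.prime_dvd_prime_iff_eq Nat.prime_two hprime).mp this).symm
  haveI : CharP E 2 := hchar ▸ ringChar.charP E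
  -- X is finite
  have hfinX : Finite X := by
    have hpos : 0 < Nat.card X := lt_of_lt_of_le (Nat.pow_pos (by omega)) hX.le
    exact (Nat.card_pos_iff.mp hpos).2
  haveI := Fintype.ofFinite X
  haveI : Module.Finite E X := Module.Finite.of_finite
  set n := Module.finrank E X with hn
  have hcardX : Fintype.card X = q ^ n := by
    rw [Module.card_eq_pow_finrank (K := E), hE]
  have hnk : k ^ 2 + k < n := by
    rw [Nat.card_eq_fintype_card, hcardX] at hX
    exact (Nat.pow_lt_pow_iff_right (by omega)).mp hX
  have h2kn : 2 * k < n := by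
    have : k ≤ k ^ 2 := Nat.le_self_pow two_ne_zero k
    omega
  -- finrank of F over E is k
  have hkF : Module.finrank E F = k := by
    have : q ^ Module.finrank E F = q ^ k := by
      rw [← hE, ← Module.card_eq_pow_finrank (K := E) (V := F), hF, hE]
    exact Nat.pow_right_injective hq2 this
  let c : Module.Basis (Fin k) E F := Module.finBasisOfFinrankEq E F hkF
  let b : Module.Basis (Fin n) E X := Module.finBasis E X
  let vec : Fin n → V := fun i => (b i : V)
  let L : Fin k → F →ₗ[E] E := fun j => (Finsupp.lapply j).comp c.repr.toLinearMap
  let P : Fin k → MvPolynomial (Fin n) E := fun j =>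
    (∑ i : Fin n, MvPolynomial.C (L j (Q (vec i))) * MvPolynomial.X i ^ 2) +
    ∑ ij ∈ Finset.univ.sym2 with ¬ ij.IsDiag,
      Sym2.lift ⟨fun a a' => MvPolynomial.C (L j (QuadraticMap.polar Q (vec a) (vec a'))) *
          (MvPolynomial.X a * MvPolynomial.X a'),
        fun a a' => by beta_reduce; rw [QuadraticMap.polar_comm]; ring⟩ ij
  -- key evaluation identity
  have key : ∀ (x : Fin n → E) (j : Fin k),
      MvPolynomial.eval x (P j) = L j (Q (∑ i : Fin n, x i • vec i)) := by
    intro x j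
    have hrw : (∑ i : Fin n, x i • vec i) = ∑ i : Fin n, (algebraMap E F (x i)) • vec i :=
      Finset.sum_congr rfl fun i _ => (algebraMap_smul F (x i) (vec i)).symm
    rw [hrw, QuadraticMap.map_sum, map_add, map_sum, map_sum]
    simp only [P, map_add, map_sum]
    congr 1
    · refine Finset.sum_congr rfl fun i _ => ?_
      rw [QuadraticMap.map_smul, smul_eq_mul, ← map_mul, ← Algebra.smul_def, map_smul]
      simp [sq, mul_comm, mul_assoc]
    · refine Finset.sum_congr rfl fun ij _ => ?_
      induction ij using Sym2.ind with
      | _ a a' =>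
        dsimp only [Sym2.lift_mk]
        rw [Sym2.map_mk, QuadraticMap.polarSym2_sym2Mk, QuadraticMap.polar_smul_left,
          QuadraticMap.polar_smul_right, smul_eq_mul, smul_eq_mul, ← Algebra.smul_def,
          ← Algebra.smul_def, map_smul, map_smul]
        simp [mul_comm, mul_assoc, mul_left_comm]
  -- total degree bound
  have hdeg : ∀ j, (P j).totalDegree ≤ 2 := by
    intro j
    simp only [P]
    refine le_trans (MvPolynomial.totalDegree_add _ _) (max_le ?_ ?_)
    · refine le_trans (MvPolynomial.totalDegree_finset_sum _ _) (Finset.sup_le fun i _ => ?_)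
      refine le_trans (MvPolynomial.totalDegree_mul _ _) ?_
      simp [MvPolynomial.totalDegree_C, MvPolynomial.totalDegree_X_pow]
    · refine le_trans (MvPolynomial.totalDegree_finset_sum _ _) (Finset.sup_le fun ij _ => ?_)
      induction ij using Sym2.ind with
      | _ a a' =>
        rw [Sym2.lift_mk]
        refine le_trans (MvPolynomial.totalDegree_mul _ _) ?_
        refine le_trans (add_le_add le_rfl (MvPolynomial.totalDegree_mul _ _)) ?_
        simp [MvPolynomial.totalDegree_C, MvPolynomial.totalDegree_X]
  -- Chevalley–Warning
  have hsum : (∑ j : Fin k, (P j).totalDegree) < Fintype.card (Fin n) := by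
    rw [Fintype.card_fin]
    calc (∑ j : Fin k, (P j).totalDegree) ≤ ∑ _j : Fin k, 2 :=
          Finset.sum_le_sum fun j _ => hdeg j
      _ = 2 * k := by simp [mul_comm]
      _ < n := h2kn
  have hCW := char_dvd_card_solutions_of_fintype_sum_lt (K := E) 2 hsum
  have h0 : ∀ j, MvPolynomial.eval (fun _ => (0 : E)) (P j) = 0 := by
    intro j
    rw [key]
    simp
  have hpos : 0 < Fintype.card { x : Fin n → E // ∀ j, MvPolynomial.eval x (P j) = 0 } :=
    Fintype.card_pos_iff.mpr ⟨⟨fun _ => 0, h0⟩⟩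
  have hlt : 1 < Fintype.card { x : Fin n → E // ∀ j, MvPolynomial.eval x (P j) = 0 } := by
    simp only [← Nat.card_eq_fintype_card] at hCW hpos ⊢
    obtain ⟨m, hm⟩ := hCW
    omega
  obtain ⟨y, hy⟩ := Fintype.exists_ne_of_one_lt_card hlt ⟨fun _ => 0, h0⟩
  have hy0 : y.1 ≠ 0 := fun h => hy (Subtype.ext (by funext i; exact congrFun h i))
  -- construct the vector
  let ξ : X := ∑ i : Fin n, y.1 i • b i
  have hξ : ξ = b.equivFun.symm y.1 := by
    rw [Module.Basis.equivFun_symm_apply]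
  have hξ0 : ξ ≠ 0 := by
    rw [hξ]
    exact (LinearEquiv.map_ne_zero_iff _).mpr hy0
  have hcoe : (ξ : V) = ∑ i : Fin n, y.1 i • vec i := by
    simp [ξ, vec]
  refine ⟨(ξ : V), ξ.2, ?_, ?_⟩
  · simpa [Submodule.coe_eq_zero] using hξ0
  · have hz : c.repr (Q (ξ : V)) = 0 := by
      ext j
      have hkey := key y.1 j
      rw [y.2 j] at hkey
      have hLz : L j (Q ((ξ : V))) = 0 := by rw [hcoe]; exact hkey.symm
      simpa [L, Finsupp.lapply_apply] using hLz
    exact (LinearEquiv.map_eq_zero_iff _).mp hz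
end

section
/- Let q be even and let V be an F_{q^k}-vector space of dimension 4m with a nondegenerate hyperbolic quadratic form Q over F_{q^k}, where m > (k+1)/2. Let T : F_{q^k} → F_q be the trace and set Q'(v) = T(Q(v)), making V an F_q-orthogonal space of dimension 4mk. If Σ is an orthogonal spread of (V, Q) over F_{q^k}, then Σ is a maximal partial spread of the F_q-space V of dimension 4mk: every F_q-subspace of dimension 2mk meets some member of Σ nontrivially. -/
open MvPolynomial

/-- A quadratic form evaluated on a linear combination is a polynomial of degree ≤ 2
in the coefficients. -/
lemma quad_poly {F V : Type*} [Field F] [AddCommGroup V] [Module F V]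
    (Q : QuadraticForm F V) {ι : Type*} [DecidableEq ι] (w : ι → V) (s : Finset ι) :
    ∃ P : MvPolynomial ι F, P.totalDegree ≤ 2 ∧
      ∀ c : ι → F, MvPolynomial.eval c P = Q (∑ i ∈ s, c i • w i) := by
  classical
  have h2 : ∀ (i j : ι) (r : F), (X i * X j * C r : MvPolynomial ι F).totalDegree ≤ 2 := by
    intro i j r
    calc (X i * X j * C r : MvPolynomial ι F).totalDegree
        ≤ (X i * X j : MvPolynomial ι F).totalDegree + (C r : MvPolynomial ι F).totalDegree :=
          totalDegree_mul _ _
      _ ≤ ((X i : MvPolynomial ι F).totalDegree + (X j : MvPolynomial ι F).totalDegree) + 0 :=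
          add_le_add (totalDegree_mul _ _) (le_of_eq (totalDegree_C r))
      _ ≤ 2 := by simp [totalDegree_X]
  induction s using Finset.induction with
  | empty => exact ⟨0, by simp, fun c => by simp⟩
  | @insert a s ha ih =>
    obtain ⟨P, hPd, hPe⟩ := ih
    refine ⟨X a * X a * C (Q (w a)) + P
        + ∑ i ∈ s, X a * X i * C (QuadraticMap.polar Q (w a) (w i)), ?_, ?_⟩
    · refine le_trans (totalDegree_add _ _) (max_le (le_trans (totalDegree_add _ _)
        (max_le (h2 a a _) hPd)) ?_)
      exact le_trans (totalDegree_finset_sum _ _) (Finset.sup_le fun i _ => h2 a i _)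
    · intro c
      rw [Finset.sum_insert ha]
      have hQadd : Q (c a • w a + ∑ i ∈ s, c i • w i)
          = QuadraticMap.polar Q (c a • w a) (∑ i ∈ s, c i • w i)
            + Q (c a • w a) + Q (∑ i ∈ s, c i • w i) := by
        simp [QuadraticMap.polar]; ring_nf
      have hpol : QuadraticMap.polar Q (c a • w a) (∑ i ∈ s, c i • w i)
          = ∑ i ∈ s, c a * (c i * QuadraticMap.polar Q (w a) (w i)) := by
        rw [QuadraticMap.polar_smul_left]
        rw [show QuadraticMap.polar Q (w a) (∑ i ∈ s, c i • w i)
            = (QuadraticMap.polarBilin Q (w a)) (∑ i ∈ s, c i • w i) from rfl]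
        rw [map_sum]
        rw [smul_eq_mul, Finset.mul_sum]
        refine Finset.sum_congr rfl fun i _ => ?_
        rw [map_smul]
        simp [QuadraticMap.polarBilin]
      rw [hQadd, hpol, QuadraticMap.map_smul, ← hPe c]
      simp only [map_add, map_sum, eval_mul, eval_X, eval_C, smul_eq_mul]
      ring

/-- Coordinates (w.r.t. an `E`-basis of `F`) of a polynomial over `F` evaluated at
points of `E` are given by polynomials over `E` of no greater total degree. -/
lemma coord_poly {E F : Type*} [Field E] [Field F] [Algebra E F] {ι κ : Type*}
    (bF : Module.Basis κ E F) (P : MvPolynomial ι F) (j : κ) :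
    ∃ Pj : MvPolynomial ι E, Pj.totalDegree ≤ P.totalDegree ∧ ∀ x : ι → E,
      MvPolynomial.eval x Pj
        = bF.repr (MvPolynomial.eval (fun i => algebraMap E F (x i)) P) j := by
  classical
  set L : F →ₗ[E] E := (Finsupp.lapply j) ∘ₗ (bF.repr : F →ₗ[E] κ →₀ E) with hL
  refine ⟨∑ d ∈ P.support, monomial d (L (P.coeff d)), ?_, ?_⟩
  · refine le_trans (totalDegree_finset_sum _ _) (Finset.sup_le fun d hd => ?_)
    exact le_trans (totalDegree_monomial_le _ _) (le_totalDegree hd)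
  · intro x
    have hR : MvPolynomial.eval (fun i => algebraMap E F (x i)) P
        = ∑ d ∈ P.support, (∏ i ∈ d.support, x i ^ d i) • P.coeff d := by
      rw [eval_eq]
      refine Finset.sum_congr rfl fun d _ => ?_
      rw [Algebra.smul_def, mul_comm, map_prod]
      simp [map_pow]
    rw [hR]
    have h1 : bF.repr (∑ d ∈ P.support, (∏ i ∈ d.support, x i ^ d i) • P.coeff d) j
        = L (∑ d ∈ P.support, (∏ i ∈ d.support, x i ^ d i) • P.coeff d) := rfl
    rw [h1, map_sum, map_sum]
    refine Finset.sum_congr rfl fun d _ => ?_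
    rw [eval_monomial, map_smul, smul_eq_mul, mul_comm]
    rfl

/-- Let `q` be even, `V` an `F_{q^k}`-space of dimension `4m` with
a nondegenerate hyperbolic quadratic form `Q`, where `m > (k+1)/2`.  Any
orthogonal spread `Σ` of `(V, Q)` is a maximal partial spread of the `F_q`-space
`V` of dimension `4mk`: every `F_q`-subspace of dimension `2mk` meets some
member of `Σ` nontrivially. -/
theorem stmt_6 (q k m : ℕ) (hq : IsPrimePow q) (hqe : Even q) (hk : 1 ≤ k)
    (hm : k + 1 < 2 * m)
    (E F : Type) [Field E] [Field F] [Algebra E F] [Fintype E] [Fintype F]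
    (hE : Fintype.card E = q) (hF : Fintype.card F = q ^ k)
    (V : Type) [AddCommGroup V] [Module F V] [Module E V] [IsScalarTower E F V]
    (hdim : Module.finrank F V = 4 * m)
    (Q : QuadraticForm F V)
    -- nondegenerate (the polar form is nondegenerate):
    (hnd : ∀ v : V, (∀ w : V, QuadraticMap.polar Q v w = 0) → v = 0)
    -- hyperbolic (plus type): there is a totally singular `2m`-subspace
    (hhyp : ∃ W : Submodule F V, Module.finrank F W = 2 * m ∧ ∀ v ∈ W, Q v = 0)
    (S : Set (Submodule F V))
    (hts : ∀ X ∈ S, Module.finrank F X = 2 * m ∧ ∀ v ∈ X, Q v = 0)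
    (hdisj : ∀ X ∈ S, ∀ Y ∈ S, X ≠ Y → X ⊓ Y = ⊥)
    (hcover : ∀ v : V, v ≠ 0 → Q v = 0 → ∃ X ∈ S, v ∈ X) :
    ∀ X : Submodule E V, Module.finrank E X = 2 * m * k →
      ∃ Y ∈ S, Y.restrictScalars E ⊓ X ≠ ⊥ := by
  classical
  intro X hX
  have hq2 : 2 ≤ q := hq.two_le
  -- finite dimensionality
  haveI : Module.Finite F V := Module.finite_of_finrank_pos (by omega)
  haveI : FiniteDimensional E V := FiniteDimensional.trans E F V
  -- `finrank E F = k`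
  have hEF : Module.finrank E F = k := by
    have h1 : Fintype.card F = Fintype.card E ^ Module.finrank E F :=
      Module.card_eq_pow_finrank
    rw [hE, hF] at h1
    exact Nat.pow_right_injective hq2 h1.symm
  let bF : Module.Basis (Fin k) E F := Module.finBasisOfFinrankEq E F hEF
  let bX : Module.Basis (Fin (2 * m * k)) E X := Module.finBasisOfFinrankEq E X hX
  let w : Fin (2 * m * k) → V := fun i => (bX i : V)
  obtain ⟨P, hPd, hPe⟩ := quad_poly Q w Finset.univ
  choose Pj hPjd hPje using fun j : Fin k => coord_poly bF P j
  -- Chevalley–Warning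
  set p : ℕ := ringChar E with hp
  haveI : CharP E p := ringChar.charP E
  have hpp : p.Prime := CharP.char_is_prime E p
  have hsum : (∑ j : Fin k, (Pj j).totalDegree) < Fintype.card (Fin (2 * m * k)) := by
    have h1 : (∑ j : Fin k, (Pj j).totalDegree) ≤ ∑ _j : Fin k, 2 :=
      Finset.sum_le_sum fun j _ => le_trans (hPjd j) hPd
    have h2 : (∑ _j : Fin k, (2:ℕ)) = 2 * k := by
      simp [Finset.sum_const, mul_comm]
    have h3 : 2 * k < 2 * m * k :=
      Nat.mul_lt_mul_of_lt_of_le (by omega) (le_refl k) (by omega)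
    rw [Fintype.card_fin]
    omega
  have hdvd0 := char_dvd_card_solutions_of_fintype_sum_lt p hsum
  have hdvd : p ∣ Fintype.card { x : Fin (2 * m * k) → E // ∀ j, MvPolynomial.eval x (Pj j) = 0 } := by
    convert hdvd0 using 2
  -- the zero solution
  have h0 : ∀ j : Fin k, MvPolynomial.eval (0 : Fin (2 * m * k) → E) (Pj j) = 0 := by
    intro j
    rw [hPje j 0]
    have : (fun i => algebraMap E F ((0 : Fin (2 * m * k) → E) i)) = fun _ => (0 : F) := by
      funext i; simp
    rw [this, hPe (fun _ => (0:F))]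
    simp
  -- a nonzero solution exists
  have hcard1 : 1 < Fintype.card { x : Fin (2 * m * k) → E // ∀ j, MvPolynomial.eval x (Pj j) = 0 } := by
    have hpos : 0 < Fintype.card { x : Fin (2 * m * k) → E // ∀ j, MvPolynomial.eval x (Pj j) = 0 } :=
      Fintype.card_pos_iff.mpr ⟨⟨0, h0⟩⟩
    rcases Nat.lt_or_ge 1 (Fintype.card { x : Fin (2 * m * k) → E // ∀ j, MvPolynomial.eval x (Pj j) = 0 }) with h | h
    · exact h
    · exfalso
      have : Fintype.card { x : Fin (2 * m * k) → E // ∀ j, MvPolynomial.eval x (Pj j) = 0 } = 1 := by omega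
      rw [this] at hdvd
      exact hpp.one_lt.ne' (Nat.eq_one_of_dvd_one hdvd)
  obtain ⟨y, hy⟩ := Fintype.exists_ne_of_one_lt_card hcard1 ⟨0, h0⟩
  have hxne : (y : Fin (2 * m * k) → E) ≠ 0 := fun h => hy (Subtype.ext h)
  set x : Fin (2 * m * k) → E := (y : Fin (2 * m * k) → E) with hxdef
  have hxsol : ∀ j, MvPolynomial.eval x (Pj j) = 0 := y.2
  -- build the singular vector
  set u : X := ∑ i, x i • bX i with hu
  set v : V := (u : V) with hv
  have hvdef : v = ∑ i, x i • w i := by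
    rw [hv, hu]
    push_cast
    rfl
  have hQv : Q v = 0 := by
    have hQeval : Q v = MvPolynomial.eval (fun i => algebraMap E F (x i)) P := by
      rw [hPe, hvdef]
      congr 1
      refine Finset.sum_congr rfl fun i _ => ?_
      rw [algebraMap_smul]
    have hrepr : bF.repr (Q v) = 0 := by
      ext j
      rw [hQeval, ← hPje j x, hxsol j]
      simp
    have := congrArg bF.repr.symm hrepr
    rwa [bF.repr.symm_apply_apply, map_zero] at this
  have hune : u ≠ 0 := by
    intro h
    apply hxne
    funext i
    exact (Fintype.linearIndependent_iff.mp bX.linearIndependent) x (by rw [← hu, h]) i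
  have hvne : v ≠ 0 := by
    rw [hv]
    exact fun h => hune (Subtype.ext h)
  obtain ⟨Y, hYS, hvY⟩ := hcover v hvne hQv
  refine ⟨Y, hYS, ?_⟩
  rw [Submodule.ne_bot_iff]
  refine ⟨v, Submodule.mem_inf.mpr ⟨?_, ?_⟩, hvne⟩
  · simpa [Submodule.restrictScalars_mem] using hvY
  · rw [hv]; exact u.2
end

section
/- Let q be even and let V be a hyperbolic orthogonal F_q-space of dimension 4m with m ≥ 2. If Σ is a maximal orthogonal partial spread of V (a maximal set of totally singular 2m-spaces pairwise intersecting in 0), then Σ is also a maximal symplectic partial spread of V with respect to the alternating form associated to the quadratic form. -/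
open Module

section EvenRank
variable {K : Type} [Field K]

/-- An "alternating" map into the dual has even rank. -/
theorem alt_rank_even_aux : ∀ (n : ℕ) (W : Type) [AddCommGroup W] [Module K W]
    [FiniteDimensional K W], finrank K W = n →
    ∀ f : W →ₗ[K] Module.Dual K W, (∀ w, f w w = 0) →
    Even (n - finrank K (LinearMap.ker f)) := by
  intro n
  induction n using Nat.strong_induction_on with
  | _ n IH =>
    intro W _ _ _ hW f halt
    by_cases hf : f = 0
    · subst hf
      rw [LinearMap.ker_zero]; rw [finrank_top K W, hW]; simp
    · -- skew-symmetry
      have hskew : ∀ a b : W, f a b = - f b a := by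
        intro a b
        have h := halt (a + b)
        simp only [map_add, LinearMap.add_apply, halt a, halt b] at h
        linear_combination h
      obtain ⟨u, hu⟩ : ∃ u, f u ≠ 0 := by
        by_contra h; push_neg at h; exact hf (LinearMap.ext h)
      obtain ⟨v, hc⟩ : ∃ v, f u v ≠ 0 := by
        by_contra h; push_neg at h; exact hu (LinearMap.ext h)
      set c := f u v with hcdef
      -- the "symplectic plane" and its perp
      set U : Submodule K W := Submodule.span K {u, v} with hU
      set P : Submodule K W := LinearMap.ker (f u) ⊓ LinearMap.ker (f v) with hP
      have hUP_inf : U ⊓ P = ⊥ := by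
        rw [Submodule.eq_bot_iff]
        rintro w ⟨hw1, hw2⟩
        obtain ⟨s, t, rfl⟩ := Submodule.mem_span_pair.mp hw1
        obtain ⟨h1, h2⟩ := Submodule.mem_inf.mp hw2
        have e1 : f u (s • u + t • v) = t * c := by
          simp [map_add, map_smul, halt u, smul_eq_mul, hcdef]
        have e2 : f v (s • u + t • v) = - (s * c) := by
          have : f v u = - c := by rw [hcdef, ← hskew]
          simp [map_add, map_smul, halt v, smul_eq_mul, this]
        rw [LinearMap.mem_ker] at h1 h2
        have ht : t = 0 := by
          have := e1.symm.trans h1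
          rcases mul_eq_zero.mp this with h | h
          · exact h
          · exact absurd h hc
        have hs : s = 0 := by
          rw [e2, neg_eq_zero] at h2
          rcases mul_eq_zero.mp h2 with h | h
          · exact h
          · exact absurd h hc
        simp [ht, hs]
      have hUP_sup : U ⊔ P = ⊤ := by
        rw [Submodule.eq_top_iff']
        intro w
        have hmem : w - (c⁻¹ * f u w) • v + (c⁻¹ * f v w) • u ∈ P := by
          refine Submodule.mem_inf.mpr ⟨?_, ?_⟩ <;> rw [LinearMap.mem_ker]
          · simp only [map_add, map_sub, map_smul, smul_eq_mul, halt u]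
            field_simp
            rw [← hcdef]; ring
          · have hvu : f v u = - c := by rw [hcdef, ← hskew]
            simp only [map_add, map_sub, map_smul, smul_eq_mul, halt v, hvu]
            field_simp
            ring
        have huv : (c⁻¹ * f u w) • v - (c⁻¹ * f v w) • u ∈ U := by
          refine Submodule.sub_mem _ ?_ ?_ <;>
            exact Submodule.smul_mem _ _ (Submodule.subset_span (by simp))
        have : w = ((c⁻¹ * f u w) • v - (c⁻¹ * f v w) • u) +
            (w - (c⁻¹ * f u w) • v + (c⁻¹ * f v w) • u) := by abel
        rw [this]
        exact Submodule.add_mem _ (Submodule.mem_sup_left huv) (Submodule.mem_sup_right hmem)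
      have hUdim : finrank K U = 2 := by
        have hind : LinearIndependent K ![u, v] := by
          refine LinearIndependent.pair_iff.mpr fun s t hst => ?_
          have e1 : f u (s • u + t • v) = t * c := by
            simp [map_add, map_smul, halt u, smul_eq_mul, hcdef]
          have e2 : f v (s • u + t • v) = - (s * c) := by
            have : f v u = - c := by rw [hcdef, ← hskew]
            simp [map_add, map_smul, halt v, smul_eq_mul, this]
          rw [hst] at e1 e2
          simp only [map_zero] at e1 e2
          constructor
          · rcases mul_eq_zero.mp (neg_eq_zero.mp e2.symm) with h | h
            · exact h
            · exact absurd h hc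
          · rcases mul_eq_zero.mp e1.symm with h | h
            · exact h
            · exact absurd h hc
        have hr : Set.range ![u, v] = {u, v} := by
          ext x; simp [Fin.exists_fin_two]; tauto
        have := finrank_span_eq_card hind
        rw [hr] at this
        simpa [hU] using this
      have hdims := Submodule.finrank_sup_add_finrank_inf_eq U P
      rw [hUP_sup, hUP_inf, finrank_top, hW, hUdim] at hdims
      simp only [finrank_bot, add_zero] at hdims
      -- so n = 2 + finrank P
      have h2n : 2 ≤ n := by omega
      have hPdim : finrank K ↥P = n - 2 := by omega
      let g : ↥P →ₗ[K] Module.Dual K ↥P := LinearMap.BilinForm.restrict f P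
      have hgapp : ∀ p p' : ↥P, g p p' = f p.1 p'.1 := fun _ _ => rfl
      have hgalt : ∀ p : ↥P, g p p = 0 := fun p => halt p.1
      have hker_le : LinearMap.ker f ≤ P := by
        intro w hw
        rw [LinearMap.mem_ker] at hw
        refine Submodule.mem_inf.mpr ⟨?_, ?_⟩ <;> rw [LinearMap.mem_ker]
        · rw [hskew u w, hw]; simp
        · rw [hskew v w, hw]; simp
      have hkerg : LinearMap.ker g = Submodule.comap P.subtype (LinearMap.ker f) := by
        ext p
        simp only [LinearMap.mem_ker, Submodule.mem_comap, Submodule.coe_subtype]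
        constructor
        · intro h
          ext w
          have hw : w ∈ U ⊔ P := hUP_sup ▸ Submodule.mem_top
          obtain ⟨a, ha, b, hb, rfl⟩ := Submodule.mem_sup.mp hw
          obtain ⟨s, t, rfl⟩ := Submodule.mem_span_pair.mp ha
          have h1 : f p.1 u = 0 := by
            rw [hskew]; rw [(Submodule.mem_inf.mp p.2).1]; simp
          have h2 : f p.1 v = 0 := by
            rw [hskew]; rw [(Submodule.mem_inf.mp p.2).2]; simp
          have h3 : f p.1 b = 0 := by
            have := congrArg (fun φ => φ ⟨b, hb⟩) (h)
            simpa [hgapp] using this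
          simp [map_add, map_smul, h1, h2, h3, smul_eq_mul]
        · intro h
          ext p'
          simp [hgapp, h]
      have hkf_eq : finrank K ↥(LinearMap.ker g) = finrank K ↥(LinearMap.ker f) := by
        rw [hkerg]
        exact (Submodule.comapSubtypeEquivOfLe hker_le).finrank_eq
      have hkfle : finrank K ↥(LinearMap.ker f) ≤ finrank K ↥P :=
        Submodule.finrank_mono hker_le
      have hIH := IH (n - 2) (by omega) ↥P hPdim g hgalt
      rw [hkf_eq] at hIH
      obtain ⟨k, hk⟩ := hIH
      exact ⟨k + 1, by omega⟩
end EvenRank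

section Orth

open LinearMap.BilinForm

variable {K V : Type} [Field K] [AddCommGroup V] [Module K V] [FiniteDimensional K V]
variable {B : LinearMap.BilinForm K V}

theorem orth_sup (U W : Submodule K V) :
    B.orthogonal (U ⊔ W) = B.orthogonal U ⊓ B.orthogonal W := by
  ext x
  simp only [mem_orthogonal_iff, Submodule.mem_inf]
  constructor
  · intro h
    exact ⟨fun n hn => h n (Submodule.mem_sup_left hn),
      fun n hn => h n (Submodule.mem_sup_right hn)⟩
  · rintro ⟨h1, h2⟩ n hn
    obtain ⟨a, ha, b, hb, rfl⟩ := Submodule.mem_sup.mp hn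
    have := h1 a ha
    have := h2 b hb
    rw [map_add, LinearMap.add_apply, h1 a ha, h2 b hb, add_zero]

theorem orth_inf (hB : B.Nondegenerate) (hr : B.IsRefl) (U W : Submodule K V) :
    B.orthogonal (U ⊓ W) = B.orthogonal U ⊔ B.orthogonal W := by
  conv_lhs => rw [← orthogonal_orthogonal hB hr U, ← orthogonal_orthogonal hB hr W]
  rw [← orth_sup, orthogonal_orthogonal hB hr]

/-- A totally isotropic subspace of half the dimension is its own orthogonal complement. -/
theorem orth_self (hB : B.Nondegenerate) (hr : B.IsRefl) {h : ℕ}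
    (hV : Module.finrank K V = 2 * h) {A : Submodule K V}
    (hA : Module.finrank K A = h) (hts : ∀ u ∈ A, ∀ v ∈ A, B u v = 0) :
    B.orthogonal A = A := by
  have hle : A ≤ B.orthogonal A := fun x hx => by
    intro n hn; exact hts n hn x hx
  have hfr : Module.finrank K (B.orthogonal A) = h := by
    rw [finrank_orthogonal hB, hV, hA]; omega
  exact (Submodule.eq_of_le_of_finrank_le hle (by rw [hfr, hA])).symm

end Orth

section Triangle

open LinearMap.BilinForm Module

variable {K V : Type} [Field K] [AddCommGroup V] [Module K V] [FiniteDimensional K V]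

/-- Totally singular subspaces have vanishing polar form. -/
theorem polar_zero_of_ts {Q : QuadraticForm K V} {A : Submodule K V}
    (hA : ∀ v ∈ A, Q v = 0) : ∀ u ∈ A, ∀ v ∈ A, QuadraticMap.polar Q u v = 0 := by
  intro u hu v hv
  rw [QuadraticMap.polar, hA u hu, hA v hv, hA (u + v) (Submodule.add_mem _ hu hv)]
  ring

/-- Triangle parity for maximal totally singular subspaces: for `A`, `C`, `D` totally
singular of dimension `h` in a `2h`-dimensional space with nondegenerate polar form,
`dim(A∩C) + dim(C∩D) + dim(A∩D) + h` is even. -/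
theorem ts_triangle_parity (Q : QuadraticForm K V)
    (hB : LinearMap.BilinForm.Nondegenerate (QuadraticMap.polarBilin Q)) {h : ℕ}
    (hV : finrank K V = 2 * h) (A C D : Submodule K V)
    (hAr : finrank K A = h) (hCr : finrank K C = h) (hDr : finrank K D = h)
    (hAs : ∀ v ∈ A, Q v = 0) (hCs : ∀ v ∈ C, Q v = 0) (hDs : ∀ v ∈ D, Q v = 0) :
    Even (finrank K ↥(A ⊓ C) + finrank K ↥(C ⊓ D) + finrank K ↥(A ⊓ D) + h) := by
  set B : LinearMap.BilinForm K V := QuadraticMap.polarBilin Q with hBdef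
  have hBapp : ∀ u v : V, B u v = QuadraticMap.polar Q u v := fun u v => rfl
  have hr : B.IsRefl := by
    intro u v huv
    rw [hBapp] at *
    rw [QuadraticMap.polar_comm]; exact huv
  have hAts : ∀ u ∈ A, ∀ v ∈ A, B u v = 0 := fun u hu v hv => polar_zero_of_ts hAs u hu v hv
  have hCts : ∀ u ∈ C, ∀ v ∈ C, B u v = 0 := fun u hu v hv => polar_zero_of_ts hCs u hu v hv
  have hDts : ∀ u ∈ D, ∀ v ∈ D, B u v = 0 := fun u hu v hv => polar_zero_of_ts hDs u hu v hv
  set W : Submodule K V := A ⊓ (C ⊔ D) with hWdef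
  set R : Submodule K V := (A ⊓ C) ⊔ (A ⊓ D) with hRdef
  have hRW : R ≤ W := by
    rw [hRdef, hWdef]
    refine sup_le ?_ ?_
    · exact le_inf inf_le_left (inf_le_right.trans le_sup_left)
    · exact le_inf inf_le_left (inf_le_right.trans le_sup_right)
  -- the coproduct map C × D → V
  set Scd : ↥C × ↥D →ₗ[K] V := C.subtype.coprod D.subtype with hScd
  have hScd_apply : ∀ p : ↥C × ↥D, Scd p = p.1.1 + p.2.1 := fun p => rfl
  have hrange : LinearMap.range Scd = C ⊔ D := by
    rw [hScd, LinearMap.range_coprod, Submodule.range_subtype, Submodule.range_subtype]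
  -- the bilinear pairing as a map to the dual of W
  set g : ↥C × ↥D →ₗ[K] Module.Dual K ↥W :=
    (W.subtype.dualMap) ∘ₗ (B ∘ₗ (C.subtype ∘ₗ LinearMap.fst K ↥C ↥D)) with hg
  have hg_apply : ∀ (p : ↥C × ↥D) (w : ↥W), g p w = B p.1.1 w.1 := fun p w => rfl
  have hkerle : LinearMap.ker Scd ≤ LinearMap.ker g := by
    rintro ⟨c, d⟩ hcd
    rw [LinearMap.mem_ker] at hcd ⊢
    rw [hScd_apply] at hcd
    have hcD : (c : V) ∈ D := by
      have : (c : V) = -(d : V) := eq_neg_of_add_eq_zero_left hcd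
      rw [this]; exact Submodule.neg_mem _ d.2
    ext w
    rw [LinearMap.zero_apply, hg_apply]
    obtain ⟨c', hc', d', hd', hw⟩ := Submodule.mem_sup.mp ((Submodule.mem_inf.mp w.2).2)
    rw [← hw, map_add, hCts c.1 c.2 c' hc', hDts c.1 hcD d' hd', add_zero]
  -- build the induced map on W
  have hWle : W ≤ LinearMap.range Scd := by rw [hrange]; exact inf_le_right
  set q : ((↥C × ↥D) ⧸ LinearMap.ker Scd) →ₗ[K] Module.Dual K ↥W :=
    Submodule.liftQ (LinearMap.ker Scd) g hkerle with hq
  set e : ((↥C × ↥D) ⧸ LinearMap.ker Scd) ≃ₗ[K] LinearMap.range Scd :=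
    Scd.quotKerEquivRange with he
  set incl : ↥W →ₗ[K] ↥(LinearMap.range Scd) := Submodule.inclusion hWle with hincl
  set hbar : ↥W →ₗ[K] Module.Dual K ↥W := q ∘ₗ (e.symm : _ →ₗ[K] _) ∘ₗ incl with hhbar
  have hbar_apply : ∀ (c : ↥C) (d : ↥D) (hw : (c : V) + (d : V) ∈ W),
      hbar ⟨(c : V) + (d : V), hw⟩ = g (c, d) := by
    intro c d hw
    have h1 : incl ⟨(c : V) + (d : V), hw⟩ =
        ⟨(c : V) + (d : V), hWle hw⟩ := rfl
    have h2 : e (Submodule.Quotient.mk (c, d)) = ⟨(c : V) + (d : V), hWle hw⟩ := by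
      apply Subtype.ext
      rw [he, LinearMap.quotKerEquivRange_apply_mk]
      exact hScd_apply _
    have h3 : e.symm ⟨(c : V) + (d : V), hWle hw⟩ = Submodule.Quotient.mk (c, d) := by
      rw [← h2, LinearEquiv.symm_apply_apply]
    rw [hhbar]
    simp only [LinearMap.comp_apply, LinearEquiv.coe_coe]
    rw [h1, h3, hq, Submodule.liftQ_apply]
  have hdecomp : ∀ w : ↥W, ∃ (c : ↥C) (d : ↥D), (w : V) = (c : V) + (d : V) := by
    intro w
    obtain ⟨c', hc', d', hd', hw⟩ := Submodule.mem_sup.mp ((Submodule.mem_inf.mp w.2).2)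
    exact ⟨⟨c', hc'⟩, ⟨d', hd'⟩, hw.symm⟩
  -- hbar is alternating
  have halt : ∀ w : ↥W, hbar w w = 0 := by
    intro w
    obtain ⟨c, d, hw⟩ := hdecomp w
    have hw' : (c : V) + (d : V) ∈ W := hw ▸ w.2
    have : w = ⟨(c : V) + (d : V), hw'⟩ := Subtype.ext hw
    rw [this, hbar_apply, hg_apply]
    -- B c (c + d) = B c c + B c d = polar Q c d = Q (c+d) - Q c - Q d = 0
    have hwA : (c : V) + (d : V) ∈ A := (Submodule.mem_inf.mp hw').1
    rw [map_add]
    rw [hCts c.1 c.2 c.1 c.2, zero_add, hBapp, QuadraticMap.polar,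
      hCs c.1 c.2, hDs d.1 d.2, hAs _ hwA]
    ring
  -- kernel of hbar
  have horthW : B.orthogonal W = A ⊔ (C ⊓ D) := by
    rw [hWdef, orth_inf hB hr, orth_sup,
      orth_self hB hr hV hAr hAts, orth_self hB hr hV hCr hCts,
      orth_self hB hr hV hDr hDts]
  have hker : LinearMap.ker hbar = Submodule.comap W.subtype R := by
    ext w
    simp only [LinearMap.mem_ker, Submodule.mem_comap, Submodule.coe_subtype]
    constructor
    · intro hw0
      obtain ⟨c, d, hw⟩ := hdecomp w
      have hw' : (c : V) + (d : V) ∈ W := hw ▸ w.2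
      have hwe : w = ⟨(c : V) + (d : V), hw'⟩ := Subtype.ext hw
      rw [hwe, hbar_apply] at hw0
      -- c is orthogonal to W
      have hcorth : (c : V) ∈ B.orthogonal W := by
        intro n hn
        have := congrArg (fun φ => φ ⟨n, hn⟩) hw0
        simp only [hg_apply, LinearMap.zero_apply] at this
        exact hr _ _ this
      rw [horthW] at hcorth
      obtain ⟨a, ha, ecd, hecd, hce⟩ := Submodule.mem_sup.mp hcorth
      -- a = c - ecd ∈ C, w - a = d + ecd ∈ D
      have haC : a ∈ C := by
        have : a = (c : V) - ecd := eq_sub_of_add_eq hce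
        rw [this]
        exact Submodule.sub_mem _ c.2 (Submodule.mem_inf.mp hecd).1
      have hwaD : (w : V) - a ∈ D := by
        have : (w : V) - a = (d : V) + ecd := by
          rw [hw, ← hce]; abel
        rw [this]
        exact Submodule.add_mem _ d.2 (Submodule.mem_inf.mp hecd).2
      have hwA : (w : V) ∈ A := (Submodule.mem_inf.mp w.2).1
      have h1 : a ∈ A ⊓ C := Submodule.mem_inf.mpr ⟨ha, haC⟩
      have h2 : (w : V) - a ∈ A ⊓ D :=
        Submodule.mem_inf.mpr ⟨Submodule.sub_mem _ hwA ha, hwaD⟩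
      rw [hRdef]
      have : (w : V) = a + ((w : V) - a) := by abel
      rw [this]
      exact Submodule.add_mem _ (Submodule.mem_sup_left h1) (Submodule.mem_sup_right h2)
    · intro hwR
      rw [hRdef] at hwR
      obtain ⟨a1, ha1, a2, ha2, hw⟩ := Submodule.mem_sup.mp hwR
      have hc : a1 ∈ C := (Submodule.mem_inf.mp ha1).2
      have hd : a2 ∈ D := (Submodule.mem_inf.mp ha2).2
      have hw' : ((⟨a1, hc⟩ : ↥C) : V) + ((⟨a2, hd⟩ : ↥D) : V) ∈ W := by
        simpa [hw] using w.2
      have hwe : w = ⟨((⟨a1, hc⟩ : ↥C) : V) + ((⟨a2, hd⟩ : ↥D) : V), hw'⟩ :=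
        Subtype.ext (by simp [← hw])
      rw [hwe, hbar_apply]
      ext w'
      rw [hg_apply, LinearMap.zero_apply]
      exact hAts a1 (Submodule.mem_inf.mp ha1).1 w'.1 (Submodule.mem_inf.mp w'.2).1
  -- dimension bookkeeping
  have heven : Even (finrank K ↥W - finrank K ↥(LinearMap.ker hbar)) :=
    alt_rank_even_aux (finrank K ↥W) ↥W rfl hbar halt
  have hkerdim : finrank K ↥(LinearMap.ker hbar) = finrank K ↥R := by
    rw [hker]
    exact (Submodule.comapSubtypeEquivOfLe hRW).finrank_eq
  have hrle : finrank K ↥R ≤ finrank K ↥W := Submodule.finrank_mono hRW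
  have d1 : finrank K ↥(A ⊔ (C ⊔ D)) + finrank K ↥W = finrank K ↥A + finrank K ↥(C ⊔ D) :=
    Submodule.finrank_sup_add_finrank_inf_eq A (C ⊔ D)
  have d2 : finrank K ↥(C ⊔ D) + finrank K ↥(C ⊓ D) = h + h := by
    have := Submodule.finrank_sup_add_finrank_inf_eq C D
    rw [hCr, hDr] at this; exact this
  have d3 : finrank K ↥R + finrank K ↥(A ⊓ (C ⊓ D)) =
      finrank K ↥(A ⊓ C) + finrank K ↥(A ⊓ D) := by
    have := Submodule.finrank_sup_add_finrank_inf_eq (A ⊓ C) (A ⊓ D)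
    rw [← inf_inf_distrib_left] at this
    exact this
  have horthsup : B.orthogonal (A ⊔ (C ⊔ D)) = A ⊓ (C ⊓ D) := by
    rw [orth_sup, orth_sup,
      orth_self hB hr hV hAr hAts, orth_self hB hr hV hCr hCts,
      orth_self hB hr hV hDr hDts]
  have d4 : finrank K ↥(A ⊓ (C ⊓ D)) = 2 * h - finrank K ↥(A ⊔ (C ⊔ D)) := by
    rw [← horthsup, LinearMap.BilinForm.finrank_orthogonal hB, hV]
  have d5 : finrank K ↥(A ⊔ (C ⊔ D)) ≤ 2 * h := hV ▸ Submodule.finrank_le _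
  rw [Nat.even_iff] at heven ⊢
  rw [hkerdim] at heven
  omega

end Triangle

section Helpers
variable {K V : Type} [Field K] [AddCommGroup V] [Module K V] [FiniteDimensional K V]

theorem inf_span_singleton_bot {U : Submodule K V} {x : V} (hx : x ∉ U) :
    U ⊓ (K ∙ x) = ⊥ := by
  rw [Submodule.eq_bot_iff]
  rintro v ⟨hv1, hv2⟩
  obtain ⟨c, rfl⟩ := Submodule.mem_span_singleton.mp hv2
  by_cases hc : c = 0
  · simp [hc]
  · exfalso
    apply hx
    have := Submodule.smul_mem U c⁻¹ hv1
    rwa [smul_smul, inv_mul_cancel₀ hc, one_smul] at this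

theorem finrank_sup_span_singleton {U : Submodule K V} {x : V} (hx : x ∉ U) :
    Module.finrank K ↥(U ⊔ (K ∙ x)) = Module.finrank K ↥U + 1 := by
  have hxne : x ≠ 0 := fun h => hx (h ▸ U.zero_mem)
  have h1 := Submodule.finrank_sup_add_finrank_inf_eq U (K ∙ x)
  rw [inf_span_singleton_bot hx, finrank_bot, finrank_span_singleton hxne] at h1
  omega

end Helpers

open Module

/-- For `q` even and `V` a hyperbolic orthogonal `F_q`-space of
dimension `4m` (`m ≥ 2`), any maximal orthogonal partial spread `Σ` of `V` is
also a maximal symplectic partial spread with respect to the alternating polar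
form of the quadratic form. -/
theorem stmt_7 (q m : ℕ) (hq : IsPrimePow q) (hqe : Even q) (hm : 2 ≤ m)
    (K : Type) [Field K] [Fintype K] (hK : Fintype.card K = q)
    (V : Type) [AddCommGroup V] [Module K V]
    (hdim : Module.finrank K V = 4 * m)
    (Q : QuadraticForm K V)
    (hnd : ∀ v : V, (∀ w : V, QuadraticMap.polar Q v w = 0) → v = 0)
    (hhyp : ∃ W : Submodule K V, Module.finrank K W = 2 * m ∧ ∀ v ∈ W, Q v = 0)
    (S : Set (Submodule K V))
    -- `S` is an orthogonal partial spread: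
    (hts : ∀ X ∈ S, Module.finrank K X = 2 * m ∧ ∀ v ∈ X, Q v = 0)
    (hdisj : ∀ X ∈ S, ∀ Y ∈ S, X ≠ Y → X ⊓ Y = ⊥)
    -- maximal as an orthogonal partial spread:
    (hmax : ∀ Y : Submodule K V, Y ∉ S →
      Module.finrank K Y = 2 * m → (∀ v ∈ Y, Q v = 0) →
      ∃ X ∈ S, X ⊓ Y ≠ ⊥) :
    -- `S` is a maximal symplectic partial spread for the polar form:
    (∀ X ∈ S, ∀ u ∈ X, ∀ v ∈ X, QuadraticMap.polar Q u v = 0) ∧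
    (∀ Y : Submodule K V, Y ∉ S →
      Module.finrank K Y = 2 * m →
      (∀ u ∈ Y, ∀ v ∈ Y, QuadraticMap.polar Q u v = 0) →
      ∃ X ∈ S, X ⊓ Y ≠ ⊥) := by
  classical
  have hfd : FiniteDimensional K V := FiniteDimensional.of_finrank_pos (by omega)
  refine ⟨fun X hX => polar_zero_of_ts (hts X hX).2, ?_⟩
  intro Y hYS hYr hYpol
  by_contra hcon
  push_neg at hcon
  -- characteristic two
  have hchar : ringChar K = 2 :=
    FiniteField.even_card_iff_char_two.mpr (by rw [hK]; exact Nat.even_iff.mp hqe)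
  haveI : CharP K 2 := ringChar.of_eq hchar
  haveI : Fact (Nat.Prime 2) := ⟨Nat.prime_two⟩
  have h2K : (2 : K) = 0 := by
    have := CharP.cast_eq_zero K 2
    exact_mod_cast this
  set B : LinearMap.BilinForm K V := QuadraticMap.polarBilin Q with hBdef
  have hBapp : ∀ u v : V, B u v = QuadraticMap.polar Q u v := fun u v => rfl
  have hB : LinearMap.BilinForm.Nondegenerate B :=
    ⟨fun v hv => hnd v fun w => hv w,
      fun v hv => hnd v fun w => by rw [QuadraticMap.polar_comm]; exact hv w⟩
  have hr : B.IsRefl := by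
    intro u v huv
    rw [hBapp] at *; rw [QuadraticMap.polar_comm]; exact huv
  -- the square root map
  let φ := frobeniusEquiv K 2
  have hφ : ∀ c : K, φ c = c * c := fun c => by
    show frobenius K 2 c = c * c
    rw [frobenius_def]; ring
  let l : ↥Y →ₗ[K] K :=
    { toFun := fun y => φ.symm (Q y.1)
      map_add' := by
        intro a b
        have hpol : QuadraticMap.polar Q a.1 b.1 = 0 := hYpol a.1 a.2 b.1 b.2
        have : Q ((a : V) + b) = Q a.1 + Q b.1 := by
          have := QuadraticMap.polar Q a.1 b.1
          rw [QuadraticMap.polar] at hpol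
          linear_combination hpol
        show φ.symm (Q ((a : V) + b)) = φ.symm (Q a.1) + φ.symm (Q b.1)
        rw [this, map_add]
      map_smul' := by
        intro c a
        show φ.symm (Q (c • (a : V))) = c * φ.symm (Q a.1)
        apply φ.injective
        rw [RingEquiv.apply_symm_apply, map_mul, RingEquiv.apply_symm_apply, hφ,
          QuadraticMap.map_smul, smul_eq_mul] }
  have hl : ∀ y : ↥Y, l y = φ.symm (Q y.1) := fun y => rfl
  set Y0 : Submodule K V := (LinearMap.ker l).map Y.subtype with hY0def
  have hY0le : Y0 ≤ Y := Submodule.map_subtype_le _ _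
  have hY0mem : ∀ v : V, v ∈ Y0 ↔ v ∈ Y ∧ Q v = 0 := by
    intro v
    constructor
    · intro hv
      obtain ⟨y, hy, rfl⟩ := Submodule.mem_map.mp hv
      refine ⟨y.2, ?_⟩
      have h1 := LinearMap.mem_ker.mp hy
      rw [hl] at h1
      have h2 := congrArg φ h1
      rwa [RingEquiv.apply_symm_apply, map_zero] at h2
    · rintro ⟨hv, hQ⟩
      exact Submodule.mem_map.mpr ⟨⟨v, hv⟩,
        LinearMap.mem_ker.mpr (by rw [hl]; simp [hQ]), rfl⟩
  have hY0rank : finrank K ↥Y0 = finrank K ↥(LinearMap.ker l) :=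
    ((LinearMap.ker l).equivMapOfInjective Y.subtype (Submodule.injective_subtype Y)).symm.finrank_eq
  have hY0ge : 2 * m - 1 ≤ finrank K ↥Y0 := by
    have hrn := LinearMap.finrank_range_add_finrank_ker l
    have hr1 : finrank K ↥(LinearMap.range l) ≤ 1 := by
      have := Submodule.finrank_le (LinearMap.range l)
      simpa [finrank_self] using this
    rw [hY0rank]
    have : finrank K ↥Y = 2 * m := hYr
    omega
  have hY0le' : finrank K ↥Y0 ≤ 2 * m := hYr ▸ Submodule.finrank_mono hY0le
  -- Case: Y is totally singular
  by_cases hcase : finrank K ↥Y0 = 2 * m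
  · have hY0eq : Y0 = Y := Submodule.eq_of_le_of_finrank_le hY0le (by omega)
    have hYsing : ∀ v ∈ Y, Q v = 0 := fun v hv =>
      ((hY0mem v).mp (hY0eq ▸ hv)).2
    by_cases hYS' : Y ∈ S
    · have := hcon Y hYS'
      rw [inf_idem] at this
      rw [this] at hYr
      rw [finrank_bot] at hYr
      omega
    · obtain ⟨X, hX, hXY⟩ := hmax Y hYS' hYr hYsing
      exact hXY (hcon X hX)
  · -- Main case: dim Y0 = 2m - 1
    have hY0r : finrank K ↥Y0 = 2 * m - 1 := by
      rcases Nat.lt_or_ge (finrank K ↥Y0) (2 * m) with h | h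
      · omega
      · omega
    have hY0ne : Y0 ≠ ⊥ := by
      intro h
      rw [h, finrank_bot] at hY0r; omega
    have hY0sing : ∀ v ∈ Y0, Q v = 0 := fun v hv => ((hY0mem v).mp hv).2
    have hY0pol : ∀ u ∈ Y0, ∀ v ∈ Y0, B u v = 0 := by
      intro u hu v hv
      rw [hBapp]
      exact hYpol u (hY0le hu) v (hY0le hv)
    have halt_self : ∀ v : V, B v v = 0 := by
      intro v
      rw [hBapp, QuadraticMap.polar_self, nsmul_eq_mul, Nat.cast_ofNat, h2K, zero_mul]
    set P : Submodule K V := B.orthogonal Y0 with hPdef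
    have hPdim : finrank K ↥P = 2 * m + 1 := by
      rw [hPdef, LinearMap.BilinForm.finrank_orthogonal hB, hdim, hY0r]; omega
    have hYP : Y ≤ P := fun v hv => fun n hn =>
      show B n v = 0 from hBapp n v ▸ hYpol n (hY0le hn) v hv
    have hY0P : Y0 ≤ P := le_trans hY0le hYP
    -- a member of S
    obtain ⟨W0, hW0r, hW0s⟩ := hhyp
    have hSne : ∃ X, X ∈ S := by
      by_cases hW0 : W0 ∈ S
      · exact ⟨W0, hW0⟩
      · obtain ⟨X, hX, -⟩ := hmax W0 hW0 hW0r hW0s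
        exact ⟨X, hX⟩
    obtain ⟨X, hXS⟩ := hSne
    -- a nonzero singular vector in X ∩ Y0^⊥
    have hXP : X ⊓ P ≠ ⊥ := by
      intro h
      have h1 := Submodule.finrank_sup_add_finrank_inf_eq X P
      rw [h, finrank_bot, (hts X hXS).1, hPdim] at h1
      have h2 : finrank K ↥(X ⊔ P) ≤ 4 * m := hdim ▸ Submodule.finrank_le _
      omega
    obtain ⟨x, hxXP, hxne⟩ := (Submodule.ne_bot_iff _).mp hXP
    have hxX : x ∈ X := (Submodule.mem_inf.mp hxXP).1
    have hxP : x ∈ P := (Submodule.mem_inf.mp hxXP).2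
    have hxY : x ∉ Y := by
      intro h
      have h1 : x ∈ X ⊓ Y := Submodule.mem_inf.mpr ⟨hxX, h⟩
      rw [hcon X hXS] at h1
      exact hxne h1
    have hxQ : Q x = 0 := (hts X hXS).2 x hxX
    -- a nonsingular vector y in Y
    have hY0lt : Y0 < Y := lt_of_le_of_ne hY0le (by
      intro h; rw [h, hYr] at hY0r; omega)
    obtain ⟨y, hyY, hyY0⟩ := SetLike.exists_of_lt hY0lt
    have hyQ : Q y ≠ 0 := fun h => hyY0 ((hY0mem y).mpr ⟨hyY, h⟩)
    have hyP : y ∈ P := hYP hyY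
    have hyne : y ≠ 0 := fun h => hyY0 (h ▸ Y0.zero_mem)
    -- b = polar x y is nonzero
    set b : K := QuadraticMap.polar Q x y with hbdef
    have hbne : b ≠ 0 := by
      intro hb0
      have hxnotin1 : x ∉ Y0 ⊔ (K ∙ y) := by
        intro hx
        apply hxY
        have hle : Y0 ⊔ (K ∙ y) ≤ Y :=
          sup_le hY0le ((Submodule.span_singleton_le_iff_mem _ _).mpr hyY)
        exact hle hx
      have hyY0' : y ∉ Y0 := hyY0
      have hUdim : finrank K ↥((Y0 ⊔ (K ∙ y)) ⊔ (K ∙ x)) = 2 * m + 1 := by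
        rw [finrank_sup_span_singleton hxnotin1, finrank_sup_span_singleton hyY0', hY0r]
        omega
      have hUP : (Y0 ⊔ (K ∙ y)) ⊔ (K ∙ x) ≤ P :=
        sup_le (sup_le hY0P ((Submodule.span_singleton_le_iff_mem _ _).mpr hyP))
          ((Submodule.span_singleton_le_iff_mem _ _).mpr hxP)
      have hUeq : (Y0 ⊔ (K ∙ y)) ⊔ (K ∙ x) = P :=
        Submodule.eq_of_le_of_finrank_le hUP (by rw [hUdim, hPdim])
      have hxorthP : x ∈ B.orthogonal P := by
        intro n hn
        rw [← hUeq] at hn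
        obtain ⟨u, hu, z, hz, rfl⟩ := Submodule.mem_sup.mp hn
        obtain ⟨u0, hu0, z', hz', rfl⟩ := Submodule.mem_sup.mp hu
        obtain ⟨c, rfl⟩ := Submodule.mem_span_singleton.mp hz
        obtain ⟨d, rfl⟩ := Submodule.mem_span_singleton.mp hz'
        show B (u0 + d • y + c • x) x = 0
        have e1 : B u0 x = 0 := hxP u0 hu0
        have e2 : B y x = 0 := by
          rw [hBapp, QuadraticMap.polar_comm]
          exact hb0
        simp only [map_add, LinearMap.add_apply, map_smul, LinearMap.smul_apply,
          smul_eq_mul, e1, e2, halt_self x]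
        ring
      rw [hPdef, LinearMap.BilinForm.orthogonal_orthogonal hB hr] at hxorthP
      exact hxY (hY0le hxorthP)
    -- the second singular vector x'
    set t : K := b * (Q y)⁻¹ with htdef
    have htne : t ≠ 0 := mul_ne_zero hbne (inv_ne_zero hyQ)
    set x' : V := x + t • y with hx'def
    have hty : t * Q y = b := by
      rw [htdef]; field_simp
    have hx'Q : Q x' = 0 := by
      have hexp : Q (x + t • y) = Q x + Q (t • y) + QuadraticMap.polar Q x (t • y) := by
        rw [QuadraticMap.polar]; ring
      rw [hx'def, hexp, QuadraticMap.map_smul, smul_eq_mul, QuadraticMap.polar_smul_right,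
        hxQ, smul_eq_mul, ← hbdef]
      have : t * t * Q y + t * b = 2 * (t * b) := by
        rw [show t * t * Q y = t * (t * Q y) from by ring, hty]; ring
      rw [zero_add, this, h2K, zero_mul]
    have hx'P : x' ∈ P := Submodule.add_mem _ hxP (Submodule.smul_mem _ _ hyP)
    have hx'Y : x' ∉ Y := by
      intro h
      apply hxY
      have h1 := Submodule.sub_mem Y h (Submodule.smul_mem Y t hyY)
      rwa [hx'def, add_sub_cancel_right] at h1
    -- the two totally singular extensions of Y0
    have hZ : ∀ u : V, u ∈ P → Q u = 0 → u ∉ Y →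
        finrank K ↥(Y0 ⊔ (K ∙ u)) = 2 * m ∧ (∀ v ∈ Y0 ⊔ (K ∙ u), Q v = 0) := by
      intro u huP huQ huY
      have huY0 : u ∉ Y0 := fun h => huY (hY0le h)
      constructor
      · rw [finrank_sup_span_singleton huY0, hY0r]; omega
      · intro v hv
        obtain ⟨u0, hu0, z, hz, rfl⟩ := Submodule.mem_sup.mp hv
        obtain ⟨c, rfl⟩ := Submodule.mem_span_singleton.mp hz
        have hexp : Q (u0 + c • u) = Q u0 + Q (c • u) + QuadraticMap.polar Q u0 (c • u) := by
          rw [QuadraticMap.polar]; ring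
        have e1 : QuadraticMap.polar Q u0 u = 0 := hBapp u0 u ▸ (huP u0 hu0)
        rw [hexp, hY0sing u0 hu0, QuadraticMap.map_smul, smul_eq_mul, huQ,
          QuadraticMap.polar_smul_right, smul_eq_mul, e1]
        ring
    set Z1 : Submodule K V := Y0 ⊔ (K ∙ x) with hZ1def
    set Z2 : Submodule K V := Y0 ⊔ (K ∙ x') with hZ2def
    obtain ⟨hZ1r, hZ1s⟩ := hZ x hxP hxQ hxY
    obtain ⟨hZ2r, hZ2s⟩ := hZ x' hx'P hx'Q hx'Y
    -- Z1 ≠ Z2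
    have hZne : Z1 ≠ Z2 := by
      intro h
      have hx'Z1 : x' ∈ Z1 := by
        rw [h, hZ2def]
        exact Submodule.mem_sup_right (Submodule.mem_span_singleton_self x')
      rw [hZ1def] at hx'Z1
      obtain ⟨u0, hu0, z, hz, hsum⟩ := Submodule.mem_sup.mp hx'Z1
      obtain ⟨c, rfl⟩ := Submodule.mem_span_singleton.mp hz
      -- u0 + c • x = x + t • y
      by_cases hc : c = 1
      · subst hc
        have h1 : u0 = t • y := by
          have : u0 + (1 : K) • x = x + t • y := hsum ▸ hx'def
          rw [one_smul] at this
          linear_combination (norm := abel) this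
        have h2 : Q (t • y) = 0 := by
          rw [← h1]; exact hY0sing u0 hu0
        rw [QuadraticMap.map_smul, smul_eq_mul] at h2
        rcases mul_eq_zero.mp h2 with h3 | h3
        · exact htne (by rcases mul_eq_zero.mp h3 with h4 | h4 <;> exact h4)
        · exact hyQ h3
      · apply hxY
        have h1 : (c - 1) • x = t • y - u0 := by
          have : u0 + c • x = x + t • y := hsum ▸ hx'def
          have h2 : c • x - x = t • y - u0 := by
            linear_combination (norm := abel) this
          rw [← h2, sub_smul, one_smul]
        have h2 : x = (c - 1)⁻¹ • (t • y - u0) := by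
          rw [← h1, smul_smul, inv_mul_cancel₀ (sub_ne_zero.mpr hc), one_smul]
        rw [h2]
        exact Submodule.smul_mem _ _
          (Submodule.sub_mem _ (Submodule.smul_mem _ _ hyY) (hY0le hu0))
    -- dim (Z1 ⊓ Z2) = 2m - 1
    have hZ12 : finrank K ↥(Z1 ⊓ Z2) = 2 * m - 1 := by
      have hle1 : Y0 ≤ Z1 ⊓ Z2 := le_inf le_sup_left le_sup_left
      have h1 : 2 * m - 1 ≤ finrank K ↥(Z1 ⊓ Z2) := hY0r ▸ Submodule.finrank_mono hle1
      have h2 : finrank K ↥(Z1 ⊓ Z2) ≤ 2 * m := hZ1r ▸ Submodule.finrank_mono inf_le_left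
      by_contra hne
      have h3 : finrank K ↥(Z1 ⊓ Z2) = 2 * m := by omega
      have h4 : Z1 ⊓ Z2 = Z1 :=
        Submodule.eq_of_le_of_finrank_le inf_le_left (by rw [h3, hZ1r])
      have h5 : Z1 ≤ Z2 := h4 ▸ inf_le_right
      exact hZne (Submodule.eq_of_le_of_finrank_le h5 (by rw [hZ1r, hZ2r]))
    -- no member of S contains Y0
    have hZnotS : ∀ Z : Submodule K V, Y0 ≤ Z → Z ∉ S := by
      intro Z hle hZS
      have h1 : Y0 ≤ Z ⊓ Y := le_inf hle hY0le
      rw [hcon Z hZS] at h1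
      exact hY0ne (le_bot_iff.mp h1)
    -- intersections with members of S have dim ≤ 1
    have hdim_le1 : ∀ (Z X' : Submodule K V), X' ∈ S → finrank K ↥Z = 2 * m → Y0 ≤ Z →
        finrank K ↥(X' ⊓ Z) ≤ 1 := by
      intro Z X' hX'S hZr hY0Z
      have hinf : (X' ⊓ Z) ⊓ Y0 = ⊥ := by
        rw [Submodule.eq_bot_iff]
        rintro v ⟨⟨hvX, _⟩, hvY0⟩
        have h1 : v ∈ X' ⊓ Y := Submodule.mem_inf.mpr ⟨hvX, hY0le hvY0⟩
        rwa [hcon X' hX'S] at h1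
      have h1 := Submodule.finrank_sup_add_finrank_inf_eq (X' ⊓ Z) Y0
      rw [hinf, finrank_bot, hY0r] at h1
      have h2 : finrank K ↥((X' ⊓ Z) ⊔ Y0) ≤ 2 * m := by
        have hle : (X' ⊓ Z) ⊔ Y0 ≤ Z := sup_le inf_le_right hY0Z
        exact hZr ▸ Submodule.finrank_mono hle
      omega
    -- apply maximality to Z1 and Z2
    obtain ⟨X1, hX1S, hX1Z1⟩ := hmax Z1 (hZnotS Z1 le_sup_left) hZ1r hZ1s
    obtain ⟨X2, hX2S, hX2Z2⟩ := hmax Z2 (hZnotS Z2 le_sup_left) hZ2r hZ2s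
    have hd1 : finrank K ↥(X1 ⊓ Z1) = 1 := by
      have hge : finrank K ↥(X1 ⊓ Z1) ≠ 0 := by
        intro h
        exact hX1Z1 (Submodule.finrank_eq_zero.mp h)
      have hle := hdim_le1 Z1 X1 hX1S hZ1r le_sup_left
      omega
    have hd2 : finrank K ↥(X2 ⊓ Z2) = 1 := by
      have hge : finrank K ↥(X2 ⊓ Z2) ≠ 0 := by
        intro h
        exact hX2Z2 (Submodule.finrank_eq_zero.mp h)
      have hle := hdim_le1 Z2 X2 hX2S hZ2r le_sup_left
      omega
    -- triangle parity contradictions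
    have hV2 : finrank K V = 2 * (2 * m) := by omega
    have hX1r := (hts X1 hX1S).1
    have hX2r := (hts X2 hX2S).1
    have hX1s := (hts X1 hX1S).2
    have hX2s := (hts X2 hX2S).2
    by_cases h12 : X1 = X2
    · subst h12
      have hT := ts_triangle_parity Q hB hV2 Z1 X1 Z2 hZ1r hX1r hZ2r hZ1s hX1s hZ2s
      rw [inf_comm Z1 X1] at hT
      rw [Nat.even_iff] at hT
      rw [hd1, hd2, hZ12] at hT
      omega
    · have h0 : X1 ⊓ X2 = ⊥ := hdisj X1 hX1S X2 hX2S h12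
      have hT1 := ts_triangle_parity Q hB hV2 Z1 X1 X2 hZ1r hX1r hX2r hZ1s hX1s hX2s
      have hT2 := ts_triangle_parity Q hB hV2 Z1 X2 Z2 hZ1r hX2r hZ2r hZ1s hX2s hZ2s
      rw [inf_comm Z1 X1] at hT1
      rw [Nat.even_iff] at hT1 hT2
      rw [hd1, h0, finrank_bot] at hT1
      rw [hd2, hZ12] at hT2
      omega
end

section
/- Let q be even and let V be a hyperbolic orthogonal F_q-space of dimension 4m (m ≥ 2) with quadratic form Q and associated alternating form. Let z be a point of V with Q(z) ≠ 0 (nonsingular). If Σ is a maximal orthogonal partial spread of V, then Σ/z := { ⟨z^⊥ ∩ X, z⟩/z : X ∈ Σ } is a maximal symplectic partial spread of the (4m−2)-dimensional symplectic space z^⊥/z. -/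
open Module Submodule

/-- An alternating bilinear form on an odd-dimensional space has a nonzero radical vector. -/
lemma alt_odd_radical (K : Type) [Field K] :
    ∀ (n : ℕ), Odd n → ∀ (V : Type) [AddCommGroup V] [Module K V] [FiniteDimensional K V],
      finrank K V = n → ∀ (b : V →ₗ[K] V →ₗ[K] K), (∀ x, b x x = 0) →
      ∃ x : V, x ≠ 0 ∧ ∀ y, b x y = 0 := by
  intro n
  induction n using Nat.strong_induction_on with
  | _ n ih =>
    intro hodd V _ _ _ hdim b halt
    have hskew : ∀ x y : V, b y x = - b x y := by
      intro x y
      have h := halt (x + y)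
      simp only [map_add, LinearMap.add_apply, halt, zero_add, add_zero] at h
      exact eq_neg_of_add_eq_zero_left h
    by_cases hb : ∀ x y : V, b x y = 0
    · have hpos : 0 < finrank K V := by
        obtain ⟨k, hk⟩ := hodd; omega
      have : Nontrivial V := Module.finrank_pos_iff.mp hpos
      obtain ⟨x, hx⟩ := exists_ne (0 : V)
      exact ⟨x, hx, fun y => hb x y⟩
    · push_neg at hb
      obtain ⟨e, f0, hef0⟩ := hb
      set f : V := (b e f0)⁻¹ • f0 with hf
      have hef : b e f = 1 := by
        rw [hf, map_smul, smul_eq_mul, inv_mul_cancel₀ hef0]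
      have hfe : b f e = -1 := by rw [hskew e f, hef]
      have hene : e ≠ 0 := by
        intro h; rw [h] at hef; simp at hef
      have hfne : f ≠ 0 := by
        intro h; rw [h] at hef; simp at hef
      set M : Submodule K V := LinearMap.ker (b e) ⊓ LinearMap.ker (b f) with hM
      -- decompose any vector
      have hdecomp : ∀ y : V, ∃ x ∈ M, ∃ a c : K, y = x + (a • e + c • f) := by
        intro y
        refine ⟨y - ((- (b f y)) • e + (b e y) • f), mem_inf.mpr ⟨?_, ?_⟩, - (b f y), b e y,
          by abel⟩
        · rw [LinearMap.mem_ker]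
          simp only [map_sub, map_add, map_smul, smul_eq_mul]
          rw [halt, hef]
          ring
        · rw [LinearMap.mem_ker]
          simp only [map_sub, map_add, map_smul, smul_eq_mul]
          rw [halt, hfe]
          ring
      have hsup : M ⊔ Submodule.span K {e, f} = ⊤ := by
        rw [eq_top_iff]
        intro y _
        obtain ⟨x, hx, a, c, hy⟩ := hdecomp y
        rw [hy]
        exact add_mem (mem_sup_left hx)
          (mem_sup_right (add_mem
            (smul_mem _ _ (subset_span (by simp)))
            (smul_mem _ _ (subset_span (by simp)))))
      have hinf : M ⊓ Submodule.span K {e, f} = ⊥ := by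
        rw [eq_bot_iff]
        rintro x ⟨hxM, hxs⟩
        obtain ⟨a, c, rfl⟩ := mem_span_pair.mp hxs
        obtain ⟨hxe0, hxf0⟩ := hxM
        have hxe : (b e) (a • e + c • f) = 0 := hxe0
        have hxf : (b f) (a • e + c • f) = 0 := hxf0
        simp only [map_add, map_smul, smul_eq_mul] at hxe hxf
        rw [halt, hef] at hxe
        rw [halt, hfe] at hxf
        have hc : c = 0 := by linear_combination hxe
        have ha : a = 0 := by linear_combination -hxf
        simp [ha, hc]
      -- span {e,f} has dimension 2
      have hspan2 : finrank K (Submodule.span K {e, f} : Submodule K V) = 2 := by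
        have h1 : Submodule.span K ({e, f} : Set V) =
            Submodule.span K {e} ⊔ Submodule.span K {f} := by
          rw [Submodule.span_insert]
        have hinf2 : (Submodule.span K {e} : Submodule K V) ⊓ Submodule.span K {f} = ⊥ := by
          rw [eq_bot_iff]
          rintro x ⟨hxe, hxf⟩
          obtain ⟨a, rfl⟩ := mem_span_singleton.mp hxe
          obtain ⟨c, hc⟩ := mem_span_singleton.mp hxf
          have h2 : b e (a • e) = a * b e e := by rw [map_smul, smul_eq_mul]
          rw [halt, mul_zero] at h2
          have h3 : b e (c • f) = c := by rw [map_smul, smul_eq_mul, hef, mul_one]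
          rw [hc] at h3
          rw [h2] at h3
          rw [← hc, ← h3]
          simp
        have := Submodule.finrank_sup_add_finrank_inf_eq
          (Submodule.span K {e} : Submodule K V) (Submodule.span K {f})
        rw [hinf2, finrank_bot, finrank_span_singleton hene, finrank_span_singleton hfne] at this
        rw [h1]
        omega
      have hMdim : finrank K M + 2 = n := by
        have := Submodule.finrank_sup_add_finrank_inf_eq M (Submodule.span K {e, f})
        rw [hsup, hinf, finrank_bot, hspan2, finrank_top, hdim] at this
        omega
      have hn2 : 2 ≤ n := by omega
      have hodd' : Odd (finrank K M) := by
        obtain ⟨k, hk⟩ := hodd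
        exact ⟨k - 1, by omega⟩
      -- restrict the form to M
      set b' : M →ₗ[K] M →ₗ[K] K := b.compl₁₂ M.subtype M.subtype with hb'
      have halt' : ∀ x : M, b' x x = 0 := fun x => halt x
      obtain ⟨x₀, hx₀ne, hx₀⟩ := ih (finrank K M) (by omega) hodd' M rfl b' halt'
      refine ⟨(x₀ : V), by simpa using hx₀ne, ?_⟩
      intro y
      obtain ⟨x, hx, a, c, hy⟩ := hdecomp y
      have hbx : b (x₀ : V) x = 0 := hx₀ ⟨x, hx⟩
      have hbe : b (x₀ : V) e = 0 := by
        rw [hskew e (x₀ : V)]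
        have : b e (x₀ : V) = 0 := x₀.2.1
        rw [this, neg_zero]
      have hbf : b (x₀ : V) f = 0 := by
        rw [hskew f (x₀ : V)]
        have : b f (x₀ : V) = 0 := x₀.2.2
        rw [this, neg_zero]
      rw [hy]
      simp only [map_add, map_smul, smul_eq_mul, hbx, hbe, hbf]
      ring

open Module Submodule QuadraticMap

section Helpers

variable {K V : Type} [Field K] [AddCommGroup V] [Module K V]

/-- `Q(x+y) = Q x + Q y + polar Q x y`. -/
lemma hQadd' (Q : QuadraticForm K V) (x y : V) :
    Q (x + y) = Q x + Q y + polar Q x y := by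
  rw [polar]; ring

end Helpers

/-- Projection of a maximal orthogonal partial spread.  For `q`
even, `V` hyperbolic orthogonal of dimension `4m` and `z` a nonsingular point,
if `Σ` is a maximal orthogonal partial spread of `V` then
`Σ/z = { ⟨z^⊥ ∩ X, z⟩/z : X ∈ Σ }` is a maximal symplectic partial spread of
`z^⊥/z`.  We encode the totally isotropic `(2m−1)`-subspaces of `z^⊥/z` by
their preimages: the totally isotropic `2m`-subspaces of `V` containing `z`
(such subspaces automatically lie in `z^⊥`); two subspaces of the quotient
intersect trivially iff the preimages meet exactly in `⟨z⟩`. -/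
theorem stmt_9 (q m : ℕ) (hq : IsPrimePow q) (hqe : Even q) (hm : 2 ≤ m)
    (K : Type) [Field K] [Fintype K] (hK : Fintype.card K = q)
    (V : Type) [AddCommGroup V] [Module K V]
    (hdim : Module.finrank K V = 4 * m)
    (Q : QuadraticForm K V)
    (hnd : ∀ v : V, (∀ w : V, QuadraticMap.polar Q v w = 0) → v = 0)
    (hhyp : ∃ W : Submodule K V, Module.finrank K W = 2 * m ∧ ∀ v ∈ W, Q v = 0)
    (z : V) (hz0 : z ≠ 0) (hzns : Q z ≠ 0)
    (S : Set (Submodule K V))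
    (hts : ∀ X ∈ S, Module.finrank K X = 2 * m ∧ ∀ v ∈ X, Q v = 0)
    (hdisj : ∀ X ∈ S, ∀ Y ∈ S, X ≠ Y → X ⊓ Y = ⊥)
    (hmax : ∀ Y : Submodule K V, Y ∉ S →
      Module.finrank K Y = 2 * m → (∀ v ∈ Y, Q v = 0) →
      ∃ X ∈ S, X ⊓ Y ≠ ⊥) :
    -- write `P X = ⟨z^⊥ ∩ X, z⟩` for the preimage in `V` of the projected space
    ∀ P : Submodule K V → Submodule K V,
      (∀ X, P X = (X ⊓ LinearMap.ker (Q.polarBilin z)) ⊔ Submodule.span K {z}) →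
      -- `Σ/z` consists of totally isotropic `2m`-spaces containing `z`:
      (∀ X ∈ S, Module.finrank K (P X) = 2 * m ∧ z ∈ P X ∧
        ∀ u ∈ P X, ∀ v ∈ P X, QuadraticMap.polar Q u v = 0) ∧
      -- pairwise the projections meet trivially:
      (∀ X ∈ S, ∀ Y ∈ S, X ≠ Y → P X ⊓ P Y = Submodule.span K {z}) ∧
      -- maximality in the quotient `z^⊥/z`:
      (∀ U : Submodule K V, z ∈ U → Module.finrank K U = 2 * m →
        (∀ u ∈ U, ∀ v ∈ U, QuadraticMap.polar Q u v = 0) →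
        U ∉ P '' S →
        ∃ X ∈ S, P X ⊓ U ≠ Submodule.span K {z}) := by
  intro P hP
  -- basic setup
  haveI hfd : FiniteDimensional K V := .of_finrank_pos (by rw [hdim]; omega)
  have hchar : ringChar K = 2 :=
    FiniteField.even_card_iff_char_two.mpr (by rw [hK]; exact Nat.even_iff.mp hqe)
  have h2K : (2 : K) = 0 := by
    haveI : CharP K 2 := hchar ▸ ringChar.charP K
    exact_mod_cast CharP.cast_eq_zero K 2
  have haa : ∀ a : K, a + a = 0 := fun a => by
    rw [← two_mul, h2K, zero_mul]
  have hpss : ∀ x : V, polar Q x x = 0 := fun x => by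
    rw [polar_self, two_smul]; exact haa _
  -- square roots exist
  have hsq : ∀ a : K, ∃ b : K, b * b = a := by
    have hinj : Function.Injective (fun a : K => a * a) := by
      intro a b hab
      simp only at hab
      have h1 : (a - b) * (a - b) = a * a + b * b - 2 * (a * b) := by ring
      rw [h2K, zero_mul, sub_zero, hab] at h1
      rw [haa (b*b)] at h1
      have := mul_self_eq_zero.mp h1
      exact sub_eq_zero.mp this
    exact fun a => Finite.injective_iff_surjective.mp hinj a
  -- polar vanishes on totally singular subspaces
  have hpolarW : ∀ (W : Submodule K V), (∀ v ∈ W, Q v = 0) →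
      ∀ u ∈ W, ∀ v ∈ W, polar Q u v = 0 := by
    intro W hW u hu v hv
    rw [polar, hW _ (add_mem hu hv), hW _ hu, hW _ hv]
    ring
  -- bilinear form facts
  have hBapp : ∀ x y : V, Q.polarBilin x y = polar Q x y := fun _ _ => rfl
  have hrefl : (Q.polarBilin).IsRefl := by
    intro x y h
    rw [hBapp] at h ⊢
    rw [polar_comm]
    exact h
  have hndB : LinearMap.BilinForm.Nondegenerate Q.polarBilin := by
    refine ⟨fun x hx => hnd x fun w => hx w, fun x hx => hnd x fun w => ?_⟩
    rw [polar_comm]; exact hx w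
  have horthdim : ∀ W : Submodule K V,
      finrank K (LinearMap.BilinForm.orthogonal Q.polarBilin W) = 4 * m - finrank K W := by
    intro W
    rw [LinearMap.BilinForm.finrank_orthogonal hndB, hdim]
  have horthorth : ∀ W : Submodule K V,
      LinearMap.BilinForm.orthogonal Q.polarBilin (LinearMap.BilinForm.orthogonal Q.polarBilin W) = W :=
    fun W => LinearMap.BilinForm.orthogonal_orthogonal hndB hrefl W
  have hmemorth : ∀ (W : Submodule K V) (x : V),
      x ∈ LinearMap.BilinForm.orthogonal Q.polarBilin W ↔ ∀ n ∈ W, polar Q n x = 0 := by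
    intro W x
    rw [LinearMap.BilinForm.mem_orthogonal_iff]
    constructor
    · intro h n hn; exact h n hn
    · intro h n hn; exact h n hn
  -- total singularity kills intersections with span z
  have hWz : ∀ (W : Submodule K V), (∀ v ∈ W, Q v = 0) →
      W ⊓ Submodule.span K {z} = ⊥ := by
    intro W hW
    rw [eq_bot_iff]
    rintro x ⟨hxW, hxz⟩
    obtain ⟨c, rfl⟩ := mem_span_singleton.mp hxz
    have hQx := hW _ hxW
    rw [QuadraticMap.map_smul, smul_eq_mul] at hQx
    rcases mul_eq_zero.mp hQx with h | h
    · rw [mul_self_eq_zero.mp h, zero_smul]; exact zero_mem _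
    · exact absurd h hzns
  -- isotropic subspaces have dimension at most 2m
  have hisotr : ∀ W : Submodule K V,
      (∀ u ∈ W, ∀ v ∈ W, polar Q u v = 0) → 2 * finrank K W ≤ 4 * m := by
    intro W hW
    have hle : W ≤ LinearMap.BilinForm.orthogonal Q.polarBilin W := by
      intro x hx
      rw [hmemorth]
      exact fun n hn => hW n hn x hx
    have h1 := Submodule.finrank_mono hle
    have h2 := horthdim W
    have h3 : finrank K W ≤ 4 * m := hdim ▸ Submodule.finrank_le W
    omega
  -- Part 1 computations, given X ∈ S
  have part1 : ∀ X ∈ S, finrank K (P X) = 2 * m ∧ z ∈ P X ∧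
      ∀ u ∈ P X, ∀ v ∈ P X, polar Q u v = 0 := by
    intro X hX
    obtain ⟨hX2m, hXQ⟩ := hts X hX
    -- X is not contained in z-perp
    have hexx : ∃ x ∈ X, polar Q z x ≠ 0 := by
      by_contra hc
      push_neg at hc
      set W := X ⊔ Submodule.span K {z} with hW
      have hWiso : ∀ u ∈ W, ∀ v ∈ W, polar Q u v = 0 := by
        intro u hu v hv
        obtain ⟨x, hx, s, hs, rfl⟩ := mem_sup.mp hu
        obtain ⟨y, hy, t, ht, rfl⟩ := mem_sup.mp hv
        obtain ⟨a, rfl⟩ := mem_span_singleton.mp hs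
        obtain ⟨b, rfl⟩ := mem_span_singleton.mp ht
        rw [polar_add_left, polar_add_right, polar_add_right, polar_smul_left,
          polar_smul_right, polar_smul_right, polar_smul_left]
        rw [hpolarW X hXQ x hx y hy, hpss]
        rw [polar_comm _ x z, hc x hx, hc y hy]
        simp
      have hdimW : finrank K W = 2 * m + 1 := by
        have h := Submodule.finrank_sup_add_finrank_inf_eq X (Submodule.span K {z})
        rw [hWz X hXQ, finrank_bot, finrank_span_singleton hz0, hX2m] at h
        rw [hW]
        omega
      have := hisotr W hWiso
      rw [hdimW] at this
      omega
    -- dimension of X ∩ z-perp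
    have hXcap : finrank K (X ⊓ LinearMap.ker (Q.polarBilin z) : Submodule K V) + 1 = 2 * m := by
      set g := Q.polarBilin z with hg
      set f := g.comp X.subtype with hf
      have e1 : X ⊓ LinearMap.ker g = Submodule.map X.subtype (LinearMap.ker f) := by
        rw [hf, LinearMap.ker_comp, Submodule.map_comap_subtype]
      have e2 : finrank K (Submodule.map X.subtype (LinearMap.ker f)) =
          finrank K (LinearMap.ker f) := Submodule.finrank_map_subtype_eq X _
      have e3 := LinearMap.finrank_range_add_finrank_ker f
      have e4 : finrank K (LinearMap.range f) = 1 := by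
        obtain ⟨x, hxX, hxp⟩ := hexx
        have hne : LinearMap.range f ≠ ⊥ := by
          intro hbot
          have : f ⟨x, hxX⟩ = 0 := by
            have : f ⟨x, hxX⟩ ∈ LinearMap.range f := LinearMap.mem_range_self f _
            rw [hbot] at this
            exact this
          exact hxp this
        have h5 : finrank K (LinearMap.range f) ≤ 1 := by
          have := Submodule.finrank_le (LinearMap.range f)
          rw [finrank_self] at this
          exact this
        have h6 : finrank K (LinearMap.range f) ≠ 0 := by
          intro h0
          exact hne (Submodule.finrank_eq_zero.mp h0)
        omega
      rw [e1, e2]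
      rw [e4] at e3
      rw [hX2m] at e3
      omega
    have hsub : ∀ v ∈ X ⊓ LinearMap.ker (Q.polarBilin z), Q v = 0 :=
      fun v hv => hXQ v hv.1
    have hdimPX : finrank K (P X) = 2 * m := by
      rw [hP]
      have h := Submodule.finrank_sup_add_finrank_inf_eq
        (X ⊓ LinearMap.ker (Q.polarBilin z)) (Submodule.span K {z})
      rw [hWz _ hsub, finrank_bot, finrank_span_singleton hz0] at h
      omega
    refine ⟨hdimPX, ?_, ?_⟩
    · rw [hP]
      exact mem_sup_right (mem_span_singleton_self z)
    · intro u hu v hv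
      rw [hP] at hu hv
      obtain ⟨x, hx, s, hs, rfl⟩ := mem_sup.mp hu
      obtain ⟨y, hy, t, ht, rfl⟩ := mem_sup.mp hv
      obtain ⟨a, rfl⟩ := mem_span_singleton.mp hs
      obtain ⟨b, rfl⟩ := mem_span_singleton.mp ht
      have hxz : polar Q z x = 0 := LinearMap.mem_ker.mp hx.2
      have hyz : polar Q z y = 0 := LinearMap.mem_ker.mp hy.2
      rw [polar_add_left, polar_add_right, polar_add_right, polar_smul_left,
        polar_smul_right, polar_smul_right, polar_smul_left]
      rw [hpolarW X hXQ x hx.1 y hy.1, hpss, polar_comm _ x z, hxz, hyz]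
      simp
  refine ⟨part1, ?_, ?_⟩
  -- Part 2
  · intro X hX Y hY hXY
    apply le_antisymm
    · intro v hv
      obtain ⟨hvX, hvY⟩ := hv
      rw [hP] at hvX hvY
      obtain ⟨x, hx, s, hs, hveq1⟩ := mem_sup.mp hvX
      obtain ⟨y, hy, t, ht, hveq2⟩ := mem_sup.mp hvY
      obtain ⟨a, rfl⟩ := mem_span_singleton.mp hs
      obtain ⟨b, rfl⟩ := mem_span_singleton.mp ht
      have hxy : x = y + (b - a) • z := by
        have : x + a • z = y + b • z := by rw [hveq1, hveq2]
        have h7 : x = y + b • z - a • z := by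
          rw [← this]; abel
        rw [h7, sub_smul]; abel
      have hQx : Q x = 0 := (hts X hX).2 x hx.1
      have hQy : Q y = 0 := (hts Y hY).2 y hy.1
      have hyz : polar Q y ((b - a) • z) = 0 := by
        have h6 : polar Q z y = 0 := LinearMap.mem_ker.mp hy.2
        rw [polar_smul_right, polar_comm _ y z, h6, smul_zero]
      have hQxc : Q x = (b - a) * (b - a) * Q z := by
        rw [hxy, hQadd' Q y ((b-a) • z), hQy, QuadraticMap.map_smul, smul_eq_mul, hyz]
        ring
      have hba : b - a = 0 := by
        rw [hQx] at hQxc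
        rcases mul_eq_zero.mp hQxc.symm with h | h
        · exact mul_self_eq_zero.mp h
        · exact absurd h hzns
      have hxy2 : x = y := by rw [hxy, hba, zero_smul, add_zero]
      have hxbot : x ∈ X ⊓ Y := ⟨hx.1, hxy2 ▸ hy.1⟩
      rw [hdisj X hX Y hY hXY] at hxbot
      have : x = 0 := hxbot
      rw [← hveq1, this, zero_add]
      exact smul_mem _ _ (mem_span_singleton_self z)
    · apply le_inf
      · rw [Submodule.span_le, Set.singleton_subset_iff]
        exact (part1 X hX).2.1
      · rw [Submodule.span_le, Set.singleton_subset_iff]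
        exact (part1 Y hY).2.1
  -- Part 3: maximality
  · intro U hzU hU2m hUiso hUnotin
    by_contra hcon
    push_neg at hcon
    have hcon' : ∀ X ∈ S, P X ⊓ U = Submodule.span K {z} := hcon
    clear hcon hUnotin
    have hUperp : ∀ u ∈ U, polar Q z u = 0 := fun u hu => hUiso z hzU u hu
    -- the singular radical U₀ of U
    set U₀ : Submodule K V :=
      { carrier := {u | u ∈ U ∧ Q u = 0}
        add_mem' := by
          rintro x y ⟨hxU, hxQ⟩ ⟨hyU, hyQ⟩
          refine ⟨add_mem hxU hyU, ?_⟩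
          rw [hQadd' Q x y, hxQ, hyQ, hUiso x hxU y hyU]
          ring
        zero_mem' := ⟨zero_mem U, map_zero Q⟩
        smul_mem' := by
          rintro c x ⟨hxU, hxQ⟩
          refine ⟨smul_mem U c hxU, ?_⟩
          rw [QuadraticMap.map_smul, hxQ, smul_zero] } with hU₀
    have hU₀le : U₀ ≤ U := fun u hu => hu.1
    have hU₀Q : ∀ v ∈ U₀, Q v = 0 := fun v hv => hv.2
    -- U = U₀ ⊕ span z
    have hsupU : U₀ ⊔ Submodule.span K {z} = U := by
      apply le_antisymm
      · exact sup_le hU₀le ((Submodule.span_le).mpr (Set.singleton_subset_iff.mpr hzU))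
      · intro u hu
        obtain ⟨c, hc⟩ := hsq (Q u * (Q z)⁻¹)
        have hc2 : c * c * Q z = Q u := by
          rw [hc]
          field_simp
        have hQu0 : Q (u - c • z) = 0 := by
          have heq : u - c • z = u + (-c) • z := by
            rw [neg_smul]; abel
          rw [heq, hQadd' Q u ((-c) • z), QuadraticMap.map_smul, smul_eq_mul,
            polar_smul_right, polar_comm _ u z, hUperp u hu, smul_zero, add_zero]
          have h12 : -c * -c * Q z = Q u := by rw [← hc2]; ring
          rw [h12]
          exact haa _
        have hmem : u - c • z ∈ U₀ := ⟨sub_mem hu (smul_mem U c hzU), hQu0⟩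
        have : u = (u - c • z) + c • z := by abel
        rw [this]
        exact add_mem (mem_sup_left hmem)
          (mem_sup_right (smul_mem _ _ (mem_span_singleton_self z)))
    have hinfU : U₀ ⊓ Submodule.span K {z} = ⊥ := hWz U₀ hU₀Q
    have hdimU₀ : finrank K U₀ + 1 = 2 * m := by
      have h := Submodule.finrank_sup_add_finrank_inf_eq U₀ (Submodule.span K {z})
      rw [hsupU, hinfU, finrank_bot, finrank_span_singleton hz0, hU2m] at h
      omega
    -- every member of S meets U₀ trivially
    have hXU₀ : ∀ X ∈ S, ∀ x, x ∈ X → x ∈ U₀ → x = 0 := by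
      intro X hX x hxX hxU₀
      have hxker : x ∈ LinearMap.ker (Q.polarBilin z) := by
        rw [LinearMap.mem_ker, hBapp]
        exact hUperp x (hU₀le hxU₀)
      have hxPX : x ∈ P X := by
        rw [hP]
        exact mem_sup_left ⟨hxX, hxker⟩
      have hxspan : x ∈ Submodule.span K {z} := by
        rw [← hcon' X hX]
        exact ⟨hxPX, hU₀le hxU₀⟩
      obtain ⟨c, rfl⟩ := mem_span_singleton.mp hxspan
      have hQx : Q (c • z) = 0 := hxU₀.2
      rw [QuadraticMap.map_smul, smul_eq_mul] at hQx
      rcases mul_eq_zero.mp hQx with h | h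
      · rw [mul_self_eq_zero.mp h, zero_smul]
      · exact absurd h hzns
    -- the orthogonal complement of U₀
    set O := LinearMap.BilinForm.orthogonal Q.polarBilin U₀ with hO
    have hdimO : finrank K O = 2 * m + 1 := by
      rw [hO, horthdim]
      omega
    have hU₀O : U₀ ≤ O := by
      intro x hx
      rw [hO, hmemorth]
      exact fun n hn => hpolarW U₀ hU₀Q n hn x hx
    have hU₀netop : U₀ ≠ ⊥ := by
      intro hbot
      rw [hbot, finrank_bot] at hdimU₀
      omega
    -- S is nonempty
    obtain ⟨X', hX'S⟩ : ∃ X, X ∈ S := by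
      obtain ⟨W, hW1, hW2⟩ := hhyp
      by_cases hWS : W ∈ S
      · exact ⟨W, hWS⟩
      · obtain ⟨X, hXS, _⟩ := hmax W hWS hW1 hW2
        exact ⟨X, hXS⟩
    -- members of S intersect O nontrivially
    have hmeetO : ∀ X ∈ S, X ⊓ O ≠ ⊥ := by
      intro X hX hbot
      have h := Submodule.finrank_sup_add_finrank_inf_eq X O
      rw [hbot, finrank_bot, (hts X hX).1, hdimO] at h
      have h3 : finrank K (X ⊔ O : Submodule K V) ≤ 4 * m := hdim ▸ Submodule.finrank_le _
      omega
    -- builder for extensions of U₀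
    have hbuild : ∀ v : V, v ∈ O → Q v = 0 → v ∉ U₀ →
        finrank K (U₀ ⊔ Submodule.span K {v} : Submodule K V) = 2 * m ∧
        (∀ x ∈ U₀ ⊔ Submodule.span K {v}, Q x = 0) := by
      intro v hvO hvQ hvU₀
      have hvne : v ≠ 0 := by
        intro h; exact hvU₀ (h ▸ zero_mem U₀)
      have hQs : ∀ x ∈ U₀ ⊔ Submodule.span K {v}, Q x = 0 := by
        intro x hx
        obtain ⟨u, hu, s, hs, rfl⟩ := mem_sup.mp hx
        obtain ⟨c, rfl⟩ := mem_span_singleton.mp hs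
        rw [hQadd' Q u (c • v), hU₀Q u hu, QuadraticMap.map_smul, smul_eq_mul, hvQ,
          polar_smul_right]
        have : polar Q u v = 0 := by
          rw [hO, hmemorth] at hvO
          exact hvO u hu
        rw [this, smul_zero]
        ring
      refine ⟨?_, hQs⟩
      have hinfv : U₀ ⊓ Submodule.span K {v} = ⊥ := by
        rw [eq_bot_iff]
        rintro x ⟨hxU₀, hxs⟩
        obtain ⟨c, rfl⟩ := mem_span_singleton.mp hxs
        rcases eq_or_ne c 0 with h | h
        · rw [h, zero_smul]; exact zero_mem _
        · exfalso
          apply hvU₀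
          have : v = c⁻¹ • (c • v) := by rw [smul_smul, inv_mul_cancel₀ h, one_smul]
          rw [this]
          exact smul_mem U₀ _ hxU₀
      have h := Submodule.finrank_sup_add_finrank_inf_eq U₀ (Submodule.span K {v})
      rw [hinfv, finrank_bot, finrank_span_singleton hvne] at h
      omega
    -- extensions of U₀ give members of S meeting them off U₀
    have hnotS : ∀ v : V, v ∈ O → Q v = 0 → v ∉ U₀ →
        ∃ X₂ ∈ S, ∃ u₂ : V, u₂ ∈ X₂ ∧ u₂ ≠ 0 ∧
          ∃ (b : V) (c : K), b ∈ U₀ ∧ c ≠ 0 ∧ u₂ = b + c • v := by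
      intro v hvO hvQ hvU₀
      obtain ⟨hd, hQs⟩ := hbuild v hvO hvQ hvU₀
      set Yv := U₀ ⊔ Submodule.span K {v} with hYv
      have hYS : Yv ∉ S := by
        intro hin
        obtain ⟨u, huU₀, hune⟩ := Submodule.exists_mem_ne_zero_of_ne_bot hU₀netop
        exact hune (hXU₀ Yv hin u (mem_sup_left huU₀) huU₀)
      obtain ⟨X₂, hX₂S, hbne⟩ := hmax Yv hYS hd hQs
      obtain ⟨u₂, hu₂mem, hu₂ne⟩ := Submodule.exists_mem_ne_zero_of_ne_bot hbne
      obtain ⟨hu₂X₂, hu₂Yv⟩ := hu₂mem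
      obtain ⟨b, hb, s, hs, hu₂eq⟩ := mem_sup.mp hu₂Yv
      obtain ⟨c, rfl⟩ := mem_span_singleton.mp hs
      have hc : c ≠ 0 := by
        intro h
        rw [h, zero_smul, add_zero] at hu₂eq
        exact hu₂ne (hXU₀ X₂ hX₂S u₂ hu₂X₂ (hu₂eq ▸ hb))
      exact ⟨X₂, hX₂S, u₂, hu₂X₂, hu₂ne, b, c, hb, hc, hu₂eq.symm⟩
    -- first extension direction
    obtain ⟨v₁', hv₁'mem, hv₁'ne⟩ :=
      Submodule.exists_mem_ne_zero_of_ne_bot (hmeetO X' hX'S)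
    obtain ⟨hv₁'X, hv₁'O⟩ := hv₁'mem
    have hv₁'Q : Q v₁' = 0 := (hts X' hX'S).2 v₁' hv₁'X
    have hv₁'U₀ : v₁' ∉ U₀ := fun h => hv₁'ne (hXU₀ X' hX'S v₁' hv₁'X h)
    obtain ⟨X₁, hX₁S, v₁, hv₁X₁, hv₁ne, a, c₁, haU₀, hc₁, hv₁eq⟩ :=
      hnotS v₁' hv₁'O hv₁'Q hv₁'U₀
    have hv₁O : v₁ ∈ O := by
      rw [hv₁eq]
      exact add_mem (hU₀O haU₀) (Submodule.smul_mem O c₁ hv₁'O)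
    have hv₁Q : Q v₁ = 0 := (hts X₁ hX₁S).2 v₁ hv₁X₁
    have hv₁U₀ : v₁ ∉ U₀ := fun h => hv₁ne (hXU₀ X₁ hX₁S v₁ hv₁X₁ h)
    -- find w in O not orthogonal to v₁
    have hv₁notorth : ¬ (∀ n ∈ O, polar Q n v₁ = 0) := by
      intro hall
      apply hv₁U₀
      have : v₁ ∈ LinearMap.BilinForm.orthogonal Q.polarBilin O := by
        rw [hmemorth]
        exact hall
      rw [hO, horthorth U₀] at this
      exact this
    push_neg at hv₁notorth
    obtain ⟨w, hwO, hwv₁⟩ := hv₁notorth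
    set p := polar Q v₁ w with hp
    have hpne : p ≠ 0 := by
      rw [hp, polar_comm]
      exact hwv₁
    set w' := p⁻¹ • w with hw'
    have hw'O : w' ∈ O := Submodule.smul_mem O _ hwO
    have hw'v₁ : polar Q v₁ w' = 1 := by
      rw [hw', polar_smul_right, smul_eq_mul, ← hp, inv_mul_cancel₀ hpne]
    -- second extension direction
    set v₂ := Q w' • v₁ + w' with hv₂
    have hv₂O : v₂ ∈ O := add_mem (Submodule.smul_mem O _ hv₁O) hw'O
    have hv₂Q : Q v₂ = 0 := by
      rw [hv₂, hQadd' Q (Q w' • v₁) w', QuadraticMap.map_smul, smul_eq_mul, hv₁Q,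
        polar_smul_left, smul_eq_mul, hw'v₁]
      calc Q w' * Q w' * 0 + Q w' + Q w' * 1 = Q w' + Q w' := by ring
        _ = 0 := haa _
    have hpv₁v₂ : polar Q v₁ v₂ = 1 := by
      rw [hv₂, polar_add_right, polar_smul_right, hpss, smul_zero, hw'v₁, zero_add]
    have hv₂U₀ : v₂ ∉ U₀ := by
      intro h
      have : polar Q v₂ v₁ = 0 := by
        rw [hO, hmemorth] at hv₁O
        exact hv₁O v₂ h
      rw [polar_comm] at this
      rw [this] at hpv₁v₂
      exact zero_ne_one hpv₁v₂
    obtain ⟨X₂, hX₂S, u₂, hu₂X₂, hu₂ne, b, c₂, hbU₀, hc₂, hu₂eq⟩ :=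
      hnotS v₂ hv₂O hv₂Q hv₂U₀
    have hu₂O : u₂ ∈ O := by
      rw [hu₂eq]
      exact add_mem (hU₀O hbU₀) (Submodule.smul_mem O c₂ hv₂O)
    -- the key pairing value
    have hv₁b : polar Q v₁ b = 0 := by
      rw [hO, hmemorth] at hv₁O
      rw [polar_comm _ _ _]
      exact hv₁O b hbU₀
    have hkey : polar Q v₁ u₂ = c₂ := by
      rw [hu₂eq, polar_add_right, polar_smul_right, hv₁b, hpv₁v₂, smul_eq_mul,
        mul_one, zero_add]
    by_cases hXX : X₁ = X₂
    · -- same member: contradiction with total singularity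
      have := hpolarW X₂ (hts X₂ hX₂S).2 v₁ (hXX ▸ hv₁X₁) u₂ hu₂X₂
      rw [hkey] at this
      exact hc₂ this
    · -- different members: complementary subspaces
      have hXXbot : X₁ ⊓ X₂ = ⊥ := hdisj X₁ hX₁S X₂ hX₂S hXX
      have hsupXX : X₁ ⊔ X₂ = ⊤ := by
        apply Submodule.eq_top_of_finrank_eq
        have h := Submodule.finrank_sup_add_finrank_inf_eq X₁ X₂
        rw [hXXbot, finrank_bot, (hts X₁ hX₁S).1, (hts X₂ hX₂S).1] at h
        rw [hdim]
        omega
      by_cases hD : finrank K (X₁ ⊓ O : Submodule K V) ≤ 1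
      · -- X₁ ∩ O = span v₁
        have hv₁D : v₁ ∈ X₁ ⊓ O := ⟨hv₁X₁, hv₁O⟩
        have hDspan : X₁ ⊓ O = Submodule.span K {v₁} := by
          apply (Submodule.eq_of_le_of_finrank_le _ _).symm
          · rw [Submodule.span_le, Set.singleton_subset_iff]
            exact hv₁D
          · rw [finrank_span_singleton hv₁ne]
            exact hD
        -- complementary projections
        have hcompl : IsCompl X₁ X₂ := ⟨disjoint_iff.mpr hXXbot, codisjoint_iff.mpr hsupXX⟩
        set π₁ := X₁.projectionOnto X₂ hcompl with hπ₁
        set π₂ := X₂.projectionOnto X₁ hcompl.symm with hπ₂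
        have hππ : ∀ x : V, ((π₁ x : V) + (π₂ x : V)) = x := fun x =>
          Submodule.projection_add_projection_eq_self hcompl x
        -- the alternating form on U₀
        set bU : U₀ →ₗ[K] U₀ →ₗ[K] K :=
          LinearMap.compl₁₂ Q.polarBilin (X₁.subtype.comp (π₁.comp U₀.subtype)) U₀.subtype with hbU
        have hbUapp : ∀ x y : U₀, bU x y = polar Q (π₁ (x : V) : V) (y : V) := by
          intro x y
          rfl
        have haltU : ∀ x : U₀, bU x x = 0 := by
          intro x
          rw [hbUapp]
          have h1 : polar Q (π₁ (x : V) : V) (π₂ (x : V) : V) = 0 := by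
            rw [polar, hππ (x : V)]
            rw [hU₀Q _ x.2, (hts X₁ hX₁S).2 _ (π₁ (x : V)).2, (hts X₂ hX₂S).2 _ (π₂ (x : V)).2]
            ring
          calc polar Q (π₁ (x : V) : V) (x : V)
              = polar Q (π₁ (x : V) : V) ((π₁ (x : V) : V) + (π₂ (x : V) : V)) := by
                rw [hππ (x : V)]
            _ = 0 := by rw [polar_add_right, hpss, h1, add_zero]
        have hoddU₀ : Odd (finrank K U₀) := ⟨m - 1, by omega⟩
        obtain ⟨y₀, hy₀ne, hy₀⟩ := alt_odd_radical K (finrank K U₀) hoddU₀ U₀ rfl bU haltU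
        -- π₁ y₀ lies in X₁ ∩ O
        have hπy₀O : ((π₁ (y₀ : V) : V)) ∈ O := by
          rw [hO, hmemorth]
          intro n hn
          have := hy₀ ⟨n, hn⟩
          rw [hbUapp] at this
          rw [polar_comm _ _ _]
          exact this
        have hπy₀D : (π₁ (y₀ : V) : V) ∈ Submodule.span K {v₁} := by
          rw [← hDspan]
          exact ⟨(π₁ (y₀ : V)).2, hπy₀O⟩
        obtain ⟨c, hc⟩ := mem_span_singleton.mp hπy₀D
        -- polar (π₁ y₀) u₂ = 0
        have hy₀u₂ : polar Q ((y₀ : V)) u₂ = 0 := by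
          rw [hO, hmemorth] at hu₂O
          exact hu₂O (y₀ : V) y₀.2
        have hπ₂y₀u₂ : polar Q ((π₂ (y₀ : V) : V)) u₂ = 0 :=
          hpolarW X₂ (hts X₂ hX₂S).2 _ (π₂ (y₀ : V)).2 u₂ hu₂X₂
        have hπ₁y₀u₂ : polar Q ((π₁ (y₀ : V) : V)) u₂ = 0 := by
          have h8 : polar Q ((π₁ (y₀ : V) : V) + (π₂ (y₀ : V) : V)) u₂ = 0 := by
            rw [hππ (y₀ : V)]
            exact hy₀u₂
          rw [polar_add_left, hπ₂y₀u₂, add_zero] at h8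
          exact h8
        -- conclude c = 0 and then y₀ = 0
        have hc0 : c = 0 := by
          rw [← hc, polar_smul_left, hkey, smul_eq_mul] at hπ₁y₀u₂
          rcases mul_eq_zero.mp hπ₁y₀u₂ with h | h
          · exact h
          · exact absurd h hc₂
        have hπ₁y₀0 : (π₁ (y₀ : V) : V) = 0 := by
          rw [← hc, hc0, zero_smul]
        have hy₀X₂ : (y₀ : V) ∈ X₂ := by
          have h9 : (π₂ (y₀ : V) : V) = (y₀ : V) := by
            conv_rhs => rw [← hππ (y₀ : V)]
            rw [hπ₁y₀0, zero_add]
          exact h9 ▸ (π₂ (y₀ : V)).2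
        have : (y₀ : V) = 0 := hXU₀ X₂ hX₂S (y₀ : V) hy₀X₂ y₀.2
        exact hy₀ne (Subtype.ext this)
      · -- X₁ ∩ O is large: O = U₀ ⊔ (X₁ ⊓ O)
        push_neg at hD
        have hinfD : U₀ ⊓ (X₁ ⊓ O) = ⊥ := by
          rw [eq_bot_iff]
          rintro x ⟨hxU₀, hxX₁, _⟩
          have : x = 0 := hXU₀ X₁ hX₁S x hxX₁ hxU₀
          simp [this]
        have hOeq : U₀ ⊔ (X₁ ⊓ O) = O := by
          apply Submodule.eq_of_le_of_finrank_le
          · exact sup_le hU₀O inf_le_right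
          · have h := Submodule.finrank_sup_add_finrank_inf_eq U₀ (X₁ ⊓ O)
            rw [hinfD, finrank_bot] at h
            omega
        have hu₂mem : u₂ ∈ U₀ ⊔ (X₁ ⊓ O) := by rw [hOeq]; exact hu₂O
        obtain ⟨u, hu, d, hd, hu₂eq2⟩ := mem_sup.mp hu₂mem
        have h10 : polar Q v₁ u = 0 := by
          rw [hO, hmemorth] at hv₁O
          rw [polar_comm _ _ _]
          exact hv₁O u hu
        have h11 : polar Q v₁ d = 0 :=
          hpolarW X₁ (hts X₁ hX₁S).2 v₁ hv₁X₁ d hd.1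
        have : polar Q v₁ u₂ = 0 := by
          rw [← hu₂eq2, polar_add_right, h10, h11, add_zero]
        rw [hkey] at this
        exact hc₂ this
end

section
/- Let q be a prime power and let Ω be the set of singular points of a nondegenerate elliptic quadric on a 4-dimensional subspace W (of minus type) of a nondegenerate orthogonal F_q-space V. Then Ω is a maximal orthogonal partial ovoid of V: no two points of Ω are perpendicular, and every singular point of V is perpendicular to some point of Ω. -/
open QuadraticMap MvPolynomial

lemma quad3_isotropic {K : Type} [Field K] [Fintype K] {M : Type} [AddCommGroup M] [Module K M]
    (Q : QuadraticForm K M) (v : Fin 3 → M) (hv : LinearIndependent K v) :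
    ∃ m ∈ Submodule.span K (Set.range v), m ≠ 0 ∧ Q m = 0 := by
  classical
  set f : MvPolynomial (Fin 3) K :=
    (C (Q (v 0)) * X 0 ^ 2 + C (Q (v 1)) * X 1 ^ 2 + C (Q (v 2)) * X 2 ^ 2)
    + (C (polar Q (v 0) (v 1)) * (X 0 * X 1) + C (polar Q (v 0) (v 2)) * (X 0 * X 2)
      + C (polar Q (v 1) (v 2)) * (X 1 * X 2)) with hf
  have heval : ∀ x : Fin 3 → K, eval x f = Q (x 0 • v 0 + x 1 • v 1 + x 2 • v 2) := by
    intro x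
    have e1 : Q (x 0 • v 0 + x 1 • v 1 + x 2 • v 2)
        = Q (x 0 • v 0 + x 1 • v 1) + Q (x 2 • v 2)
          + polar Q (x 0 • v 0 + x 1 • v 1) (x 2 • v 2) := by
      simp [QuadraticMap.polar]
    have e2 : Q (x 0 • v 0 + x 1 • v 1) = Q (x 0 • v 0) + Q (x 1 • v 1)
        + polar Q (x 0 • v 0) (x 1 • v 1) := by
      simp [QuadraticMap.polar]
    rw [e1, e2, polar_add_left, polar_smul_left, polar_smul_left, polar_smul_left,
      polar_smul_right, polar_smul_right, polar_smul_right,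
      QuadraticMap.map_smul, QuadraticMap.map_smul, QuadraticMap.map_smul]
    simp [hf, smul_eq_mul]
    ring
  have hdeg : f.totalDegree < 3 := by
    have h2 : ∀ (a : K) (g : MvPolynomial (Fin 3) K), g.totalDegree ≤ 2 →
        (C a * g).totalDegree ≤ 2 := by
      intro a g hg
      calc (C a * g).totalDegree ≤ (C a).totalDegree + g.totalDegree := totalDegree_mul _ _
        _ ≤ 0 + 2 := by gcongr; exact le_of_eq (totalDegree_C a)
        _ = 2 := by norm_num
    have hXX : ∀ i j : Fin 3, (X i * X j : MvPolynomial (Fin 3) K).totalDegree ≤ 2 := by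
      intro i j
      calc (X i * X j : MvPolynomial (Fin 3) K).totalDegree
          ≤ (X i : MvPolynomial (Fin 3) K).totalDegree + (X j : MvPolynomial (Fin 3) K).totalDegree := totalDegree_mul _ _
        _ ≤ 2 := by rw [totalDegree_X, totalDegree_X]
    have hX2 : ∀ i : Fin 3, ((X i : MvPolynomial (Fin 3) K) ^ 2).totalDegree ≤ 2 := by
      intro i
      calc ((X i : MvPolynomial (Fin 3) K) ^ 2).totalDegree ≤ 2 * (X i : MvPolynomial (Fin 3) K).totalDegree :=
        totalDegree_pow _ _
        _ ≤ 2 := by rw [totalDegree_X]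
    have : f.totalDegree ≤ 2 := by
      rw [hf]
      refine le_trans (totalDegree_add _ _) (max_le ?_ ?_) <;>
        refine le_trans (totalDegree_add _ _) (max_le (le_trans (totalDegree_add _ _) (max_le ?_ ?_)) ?_) <;>
        first
          | with_reducible exact h2 _ _ (hX2 _)
          | with_reducible exact h2 _ _ (hXX _ _)
    omega
  -- Chevalley-Warning
  obtain ⟨p, hp⟩ := CharP.exists K
  haveI : Fact (Nat.Prime p) := ⟨CharP.char_is_prime K p⟩
  have hdvd := char_dvd_card_solutions p (by convert hdeg; simp)
  have hzero : (⟨0, by rw [heval]; simp⟩ : { x : Fin 3 → K // eval x f = 0 }) ∈ Finset.univ :=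
    Finset.mem_univ _
  have hcard : 2 ≤ Fintype.card { x : Fin 3 → K // eval x f = 0 } := by
    have hpos : 0 < Fintype.card { x : Fin 3 → K // eval x f = 0 } :=
      Fintype.card_pos_iff.mpr ⟨⟨0, by rw [heval]; simp⟩⟩
    have := Nat.le_of_dvd hpos hdvd
    have hp2 := (Fact.out : Nat.Prime p).two_le
    omega
  obtain ⟨a, b, hab⟩ := Fintype.exists_pair_of_one_lt_card hcard
  have : a.1 ≠ 0 ∨ b.1 ≠ 0 := by
    by_contra h
    push_neg at h
    exact hab (Subtype.ext (h.1.trans h.2.symm))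
  obtain ⟨x, hx0, hxf⟩ : ∃ x : Fin 3 → K, x ≠ 0 ∧ eval x f = 0 := by
    rcases this with h | h
    · exact ⟨a.1, h, a.2⟩
    · exact ⟨b.1, h, b.2⟩
  have hmem : x 0 • v 0 + x 1 • v 1 + x 2 • v 2 ∈ Submodule.span K (Set.range v) := by
    have h0 : ∀ i, v i ∈ Submodule.span K (Set.range v) := fun i =>
      Submodule.subset_span ⟨i, rfl⟩
    exact Submodule.add_mem _ (Submodule.add_mem _ (Submodule.smul_mem _ _ (h0 0))
      (Submodule.smul_mem _ _ (h0 1))) (Submodule.smul_mem _ _ (h0 2))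
  refine ⟨x 0 • v 0 + x 1 • v 1 + x 2 • v 2, hmem, ?_, by rw [← heval, hxf]⟩
  intro hm
  apply hx0
  have h3 : ∑ i : Fin 3, x i • v i = 0 := by
    rw [Fin.sum_univ_three]; exact hm
  have := linearIndependent_iff'.mp hv Finset.univ x (by simpa using h3)
  funext i
  exact this i (Finset.mem_univ i)



/-- The set `Ω` of singular points of a nondegenerate elliptic
quadric on a 4-dimensional minus-type subspace `W` of a nondegenerate
orthogonal `F_q`-space `V` is a maximal orthogonal partial ovoid of `V`: no two
points of `Ω` are perpendicular, and every singular point of `V` is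
perpendicular to some point of `Ω`. -/
theorem stmt_11 (q : ℕ) (hq : IsPrimePow q)
    (K : Type) [Field K] [Fintype K] (hK : Fintype.card K = q)
    (V : Type) [AddCommGroup V] [Module K V] [FiniteDimensional K V]
    (Q : QuadraticForm K V)
    -- `V` nondegenerate: no nonzero singular vector in the radical
    (hnd : ∀ v : V, Q v = 0 → (∀ w : V, QuadraticMap.polar Q v w = 0) → v = 0)
    (W : Submodule K V) (hW4 : Module.finrank K W = 4)
    -- the restriction of `Q` to `W` is nondegenerate:
    (hWnd : ∀ v ∈ W, Q v = 0 → (∀ w ∈ W, QuadraticMap.polar Q v w = 0) → v = 0)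
    -- `W` is of minus type (elliptic): no totally singular line in `W`
    (hWminus : ¬ ∃ L : Submodule K V, L ≤ W ∧ Module.finrank K L = 2 ∧
      ∀ v ∈ L, Q v = 0)
    -- `Ω` is the set of singular points of `W`:
    (Ω : Set (Submodule K V))
    (hΩ : Ω = {p : Submodule K V | p ≤ W ∧ Module.finrank K p = 1 ∧
      ∀ v ∈ p, Q v = 0}) :
    -- no two (distinct) points of `Ω` are perpendicular:
    (∀ p₁ ∈ Ω, ∀ p₂ ∈ Ω, p₁ ≠ p₂ →
      ∃ u ∈ p₁, ∃ v ∈ p₂, QuadraticMap.polar Q u v ≠ 0) ∧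
    -- every singular point of `V` is perpendicular to some point of `Ω`:
    (∀ x : V, x ≠ 0 → Q x = 0 →
      ∃ p ∈ Ω, ∀ v ∈ p, QuadraticMap.polar Q x v = 0) := by

  subst hΩ
  constructor
  · rintro p₁ ⟨h₁W, h₁r, h₁s⟩ p₂ ⟨h₂W, h₂r, h₂s⟩ hne
    by_contra hcon
    push_neg at hcon
    apply hWminus
    have hinf : p₁ ⊓ p₂ = ⊥ := by
      by_contra hbot
      have hle : Module.finrank K ↥(p₁ ⊓ p₂) ≤ 1 := h₁r ▸ Submodule.finrank_mono inf_le_left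
      have hpos : Module.finrank K ↥(p₁ ⊓ p₂) ≠ 0 := by
        intro h0
        exact hbot (Submodule.finrank_eq_zero.mp h0)
      have h1 : Module.finrank K ↥(p₁ ⊓ p₂) = 1 := by omega
      have e1 : p₁ ⊓ p₂ = p₁ := Submodule.eq_of_le_of_finrank_eq inf_le_left (h1.trans h₁r.symm)
      have e2 : p₁ ⊓ p₂ = p₂ := Submodule.eq_of_le_of_finrank_eq inf_le_right (h1.trans h₂r.symm)
      exact hne (e1.symm.trans e2)
    refine ⟨p₁ ⊔ p₂, sup_le h₁W h₂W, ?_, ?_⟩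
    · have := Submodule.finrank_sup_add_finrank_inf_eq p₁ p₂
      rw [hinf, h₁r, h₂r] at this
      simpa using this
    · intro w hw
      rw [Submodule.mem_sup] at hw
      obtain ⟨a, ha, b, hb, rfl⟩ := hw
      have hpol := hcon a ha b hb
      rw [QuadraticMap.polar, h₁s a ha, h₂s b hb] at hpol
      simpa using hpol
  · intro x hx hQx
    classical
    set g : V →ₗ[K] K := QuadraticMap.polarBilin Q x with hg
    set S : Submodule K V := W ⊓ LinearMap.ker g with hS
    have hrange : Module.finrank K ↥(LinearMap.range g) ≤ 1 := by
      simpa using Submodule.finrank_le (LinearMap.range g)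
    have hrk := LinearMap.finrank_range_add_finrank_ker g
    have hsup : Module.finrank K ↥(W ⊔ LinearMap.ker g) ≤ Module.finrank K V :=
      Submodule.finrank_le _
    have hW_le : Module.finrank K W ≤ Module.finrank K V := Submodule.finrank_le _
    have hdim := Submodule.finrank_sup_add_finrank_inf_eq W (LinearMap.ker g)
    have h3 : 3 ≤ Module.finrank K S := by rw [hS]; omega
    let b := Module.finBasis K S
    let v : Fin 3 → V := fun i => (b (Fin.castLE h3 i) : V)
    have hvS : ∀ i, v i ∈ S := fun i => (b (Fin.castLE h3 i)).2
    have hvi : LinearIndependent K v := by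
      have h1 : LinearIndependent K (fun i : Fin 3 => b (Fin.castLE h3 i)) :=
        b.linearIndependent.comp (Fin.castLE h3) (Fin.castLE_injective h3)
      exact h1.map' S.subtype (Submodule.ker_subtype S)
    obtain ⟨m, hmspan, hm0, hmQ⟩ := quad3_isotropic Q v hvi
    have hmS : m ∈ S := by
      have : Submodule.span K (Set.range v) ≤ S := by
        rw [Submodule.span_le]
        rintro _ ⟨i, rfl⟩
        exact hvS i
      exact this hmspan
    have hmW : m ∈ W := hmS.1
    have hmperp : QuadraticMap.polar Q x m = 0 := by
      have h : g m = 0 := hmS.2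
      rw [hg] at h
      simpa using h
    refine ⟨Submodule.span K {m}, ⟨?_, ?_, ?_⟩, ?_⟩
    · rwa [Submodule.span_singleton_le_iff_mem]
    · exact finrank_span_singleton hm0
    · intro u hu
      obtain ⟨c, rfl⟩ := Submodule.mem_span_singleton.mp hu
      rw [QuadraticMap.map_smul, hmQ, smul_zero]
    · intro u hu
      obtain ⟨c, rfl⟩ := Submodule.mem_span_singleton.mp hu
      rw [QuadraticMap.polar_smul_right, hmperp, smul_zero]
end

section
/- Let q be an even prime power, F = F_{q³}, K = F_q, T : F → K the trace and N : F → K the norm. Equip V = K ⊕ F ⊕ F ⊕ K with the quadratic form Q(a,β,γ,d) = ad + T(βγ). Then the q³ + 1 points ⟨(0,0,0,1)⟩ and ⟨(1, t, t^{q+q²}, N(t))⟩ for t ∈ F form an ovoid of the O⁺(8,q)-space V: the points are singular, pairwise non-perpendicular, and every maximal totally singular subspace contains exactly one of them. -/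
section Aux

variable {q : ℕ} {K L : Type} [Field K] [Field L] [Algebra K L] [Fintype K] [Fintype L]

lemma aux_two_pow (hq : IsPrimePow q) (hqe : Even q) : ∃ m : ℕ, 0 < m ∧ q = 2 ^ m := by
  obtain ⟨p, k, hp, hk, hpk⟩ := hq
  have hpp : Nat.Prime p := Nat.prime_iff.mpr hp
  have h2p : (2 : ℕ) ∣ p := by
    have : (2 : ℕ) ∣ p ^ k := by rw [hpk]; exact hqe.two_dvd
    exact Nat.Prime.dvd_of_dvd_pow Nat.prime_two this
  have hp2 : p = 2 := ((Nat.prime_dvd_prime_iff_eq Nat.prime_two hpp).mp h2p).symm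
  exact ⟨k, hk, by rw [← hpk, hp2]⟩

lemma aux_charK (hK : Fintype.card K = q) (h2 : ∃ m : ℕ, 0 < m ∧ q = 2 ^ m) : CharP K 2 := by
  obtain ⟨m, hm, rfl⟩ := h2
  have hchar : CharP K (ringChar K) := ringChar.charP K
  obtain ⟨n, hp, hcard⟩ := FiniteField.card K (ringChar K)
  have hdvd : ringChar K ∣ 2 ^ m := by
    rw [← hK, hcard]
    exact dvd_pow_self (ringChar K) n.ne_zero
  have h2' : ringChar K ∣ 2 := Nat.Prime.dvd_of_dvd_pow hp hdvd
  have : ringChar K = 2 := (Nat.prime_dvd_prime_iff_eq hp Nat.prime_two).mp h2'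
  rwa [this] at hchar

end Aux

section Aux2

variable (q : ℕ) {K L : Type} [Field K] [Field L] [Algebra K L] [Fintype K] [Fintype L]

/-- The Frobenius `x ↦ x ^ q` as a `K`-algebra homomorphism of `L`. -/
noncomputable def frobA [CharP L 2] (hK : Fintype.card K = q)
    (h2 : ∃ m : ℕ, 0 < m ∧ q = 2 ^ m) : L →ₐ[K] L where
  toFun x := x ^ q
  map_one' := one_pow q
  map_mul' x y := mul_pow x y q
  map_zero' := zero_pow (by obtain ⟨m, hm, rfl⟩ := h2; positivity)
  map_add' x y := by
    obtain ⟨m, hm, rfl⟩ := h2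
    haveI : Fact (Nat.Prime 2) := ⟨Nat.prime_two⟩
    exact add_pow_char_pow x y 2 m
  commutes' c := by
    rw [← map_pow]
    congr 1
    rw [← hK]
    exact FiniteField.pow_card c

variable [CharP L 2]
variable (hK : Fintype.card K = q) (h2 : ∃ m : ℕ, 0 < m ∧ q = 2 ^ m)

set_option linter.unusedSectionVars false

lemma frobA_apply (x : L) : frobA q hK h2 x = x ^ q := rfl

lemma frobA_three (hL : Fintype.card L = q ^ 3) (x : L) :
    frobA q hK h2 (frobA q hK h2 (frobA q hK h2 x)) = x := by
  simp only [frobA_apply]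
  rw [← pow_mul, ← pow_mul]
  have h3 : q * (q * q) = q ^ 3 := by ring
  rw [h3, ← hL]
  exact FiniteField.pow_card x

lemma frobA_pow_add (x : L) : x ^ (q + q ^ 2) = frobA q hK h2 x * frobA q hK h2 (frobA q hK h2 x) := by
  simp only [frobA_apply]
  rw [pow_add]
  congr 1
  rw [pow_two, pow_mul]

lemma aux_exists_pow_ne (h2 : ∃ m : ℕ, 0 < m ∧ q = 2 ^ m) (hL : Fintype.card L = q ^ 3) (j : ℕ) (hj0 : 0 < j) (hj : j < 3) :
    ∃ x : L, x ^ q ^ j ≠ x := by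
  obtain ⟨m, hm, hq2⟩ := h2
  have hq1 : 1 < q := by
    rw [hq2]; exact Nat.one_lt_two_pow_iff.mpr hm.ne'
  classical
  by_contra hall
  push_neg at hall
  obtain ⟨g, hg⟩ := IsCyclic.exists_generator (α := Lˣ)
  have horder : orderOf g = Nat.card Lˣ := orderOf_eq_card_of_forall_mem_zpowers hg
  have hgval : (g : L) ^ q ^ j = (g : L) := hall _
  have hgu : g ^ q ^ j = g := Units.ext (by push_cast [Units.val_pow_eq_pow_val]; exact hgval)
  have hqj1 : 1 ≤ q ^ j := Nat.one_le_pow _ _ (by omega)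
  have hgu' : g ^ (q ^ j - 1) * g = g := by
    rw [← pow_succ, Nat.sub_add_cancel hqj1, hgu]
  have hgone : g ^ (q ^ j - 1) = 1 := by
    have h1 : g ^ (q ^ j - 1) * g = 1 * g := by rw [hgu', one_mul]
    exact mul_right_cancel h1
  have hdvd : orderOf g ∣ q ^ j - 1 := orderOf_dvd_of_pow_eq_one hgone
  have hcardu : Nat.card Lˣ = q ^ 3 - 1 := by
    rw [Nat.card_eq_fintype_card, Fintype.card_units, hL]
  have hjlt : q ^ j < q ^ 3 := Nat.pow_lt_pow_right hq1 hj
  have hq3 : 1 < q ^ 3 := Nat.one_lt_pow (by omega) hq1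
  have hqj2 : 2 ≤ q ^ j := le_trans hq1 (Nat.le_self_pow hj0.ne' q)
  have := Nat.le_of_dvd (by omega) hdvd
  rw [horder, hcardu] at this
  omega

lemma aux_finrank (hK : Fintype.card K = q) (h2 : ∃ m : ℕ, 0 < m ∧ q = 2 ^ m)
    (hL : Fintype.card L = q ^ 3) : Module.finrank K L = 3 := by
  obtain ⟨m, hm, hq2⟩ := h2
  have hq1 : 1 < q := by rw [hq2]; exact Nat.one_lt_two_pow_iff.mpr hm.ne'
  have hcard := Module.card_eq_pow_finrank (K := K) (V := L)
  rw [hK, hL] at hcard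
  exact (Nat.pow_right_injective hq1 hcard.symm)

include hK h2 in
lemma aux_tr_nm (hL : Fintype.card L = q ^ 3) :
    (∀ x : L, algebraMap K L (Algebra.trace K L x)
      = x + frobA q hK h2 x + frobA q hK h2 (frobA q hK h2 x)) ∧
    (∀ x : L, algebraMap K L (Algebra.norm K x)
      = x * (frobA q hK h2 x * frobA q hK h2 (frobA q hK h2 x))) := by
  classical
  set σ₀ : L →ₐ[K] L := frobA q hK h2 with hσ₀def
  have hσinj : Function.Injective σ₀ := RingHom.injective (σ₀ : L →+* L)
  have hbij : Function.Bijective σ₀ := ⟨hσinj, Finite.surjective_of_injective hσinj⟩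
  set σ : L ≃ₐ[K] L := AlgEquiv.ofBijective σ₀ hbij with hσdef
  have hσap : ∀ x : L, σ x = σ₀ x := fun _ => rfl
  have hσ0ap : ∀ x : L, σ₀ x = x ^ q := fun _ => rfl
  have hσ1 : σ ≠ 1 := by
    obtain ⟨x, hx⟩ := aux_exists_pow_ne q h2 hL 1 one_pos (by omega)
    intro h
    apply hx
    have := congrArg (fun e : L ≃ₐ[K] L => e x) h
    simpa [hσap, hσ0ap, pow_one] using this
  have hσσ1 : σ * σ ≠ 1 := by
    obtain ⟨x, hx⟩ := aux_exists_pow_ne q h2 hL 2 two_pos (by omega)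
    intro h
    apply hx
    have := congrArg (fun e : L ≃ₐ[K] L => e x) h
    simp only [AlgEquiv.mul_apply, AlgEquiv.one_apply, hσap, hσ0ap] at this
    rw [← pow_mul, ← pow_two] at this
    exact this
  have hσσσ : σ ≠ σ * σ := by
    intro h
    apply hσ1
    have : σ * 1 = σ * σ := by rw [mul_one]; exact h
    have := mul_left_cancel this
    exact this.symm ▸ rfl
  have hcard3 : Fintype.card (L ≃ₐ[K] L) = 3 := by
    rw [← Nat.card_eq_fintype_card, IsGalois.card_aut_eq_finrank, aux_finrank q hK h2 hL]
  have huniv : ({1, σ, σ * σ} : Finset (L ≃ₐ[K] L)) = Finset.univ := by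
    apply Finset.eq_univ_of_card
    rw [hcard3]
    rw [Finset.card_insert_of_notMem (by simp [Ne.symm hσ1, Ne.symm hσσ1]),
      Finset.card_insert_of_notMem (by simp [hσσσ]), Finset.card_singleton]
  constructor
  · intro x
    rw [trace_eq_sum_automorphisms, ← huniv,
      Finset.sum_insert (by simp [Ne.symm hσ1, Ne.symm hσσ1]),
      Finset.sum_insert (by simp [hσσσ]), Finset.sum_singleton]
    simp only [AlgEquiv.one_apply, AlgEquiv.mul_apply, hσap]
    ring
  · intro x
    rw [Algebra.norm_eq_prod_automorphisms, ← huniv,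
      Finset.prod_insert (by simp [Ne.symm hσ1, Ne.symm hσσ1]),
      Finset.prod_insert (by simp [hσσσ]), Finset.prod_singleton]
    simp only [AlgEquiv.one_apply, AlgEquiv.mul_apply, hσap]

include hK h2 in
lemma aux_key (hL : Fintype.card L = q ^ 3) (a b : L) :
    Algebra.trace K L ((a + b) * (a ^ (q + q ^ 2) + b ^ (q + q ^ 2)))
      = Algebra.norm K (a + b) := by
  have h2L : (2 : L) = 0 := CharTwo.two_eq_zero
  obtain ⟨htr, hnm⟩ := aux_tr_nm q hK h2 hL
  apply RingHom.injective (algebraMap K L)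
  rw [htr, hnm, frobA_pow_add q hK h2, frobA_pow_add q hK h2]
  simp only [map_add, map_mul, frobA_three q hK h2 hL]
  linear_combination (a * frobA q hK h2 a * frobA q hK h2 (frobA q hK h2 a)
    + b * frobA q hK h2 b * frobA q hK h2 (frobA q hK h2 b)) * h2L

include hK h2 in
lemma aux_key0 (hL : Fintype.card L = q ^ 3) (t : L) :
    Algebra.trace K L (t * t ^ (q + q ^ 2)) = Algebra.norm K t := by
  have h := aux_key q hK h2 hL t 0
  have hq0 : q + q ^ 2 ≠ 0 := by
    obtain ⟨m, hm, rfl⟩ := h2; positivity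
  simpa [zero_pow hq0] using h

include hK h2 in
lemma aux_norm_ne (hL : Fintype.card L = q ^ 3) (x : L) (hx : x ≠ 0) :
    Algebra.norm K x ≠ 0 := by
  intro h0
  have hq0 : q ≠ 0 := by obtain ⟨m, hm, rfl⟩ := h2; positivity
  have h := (aux_tr_nm q hK h2 hL).2 x
  rw [h0, map_zero] at h
  simp only [frobA_apply] at h
  rcases mul_eq_zero.mp h.symm with h' | h'
  · exact hx h'
  rcases mul_eq_zero.mp h' with h'' | h''
  · exact hx (pow_eq_zero_iff hq0 |>.mp h'')
  · exact hx (pow_eq_zero_iff hq0 |>.mp (pow_eq_zero_iff hq0 |>.mp h''))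

include hK h2 in
lemma aux_quot_inj (hL : Fintype.card L = q ^ 3) (U : Submodule K (L × L))
    (hU : ∀ z ∈ U, Algebra.trace K L (z.1 * z.2) = 0) (s t : L)
    (h : ((s, s ^ (q + q ^ 2)) - (t, t ^ (q + q ^ 2)) : L × L) ∈ U) : s = t := by
  by_contra hst
  have h0 := hU _ h
  simp only [Prod.fst_sub, Prod.snd_sub, CharTwo.sub_eq_add, Prod.mk_add_mk] at h0
  rw [aux_key q hK h2 hL s t] at h0
  have hne : s + t ≠ 0 := by
    intro hc
    exact hst ((eq_neg_of_add_eq_zero_left hc).trans (CharTwo.neg_eq t))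
  exact aux_norm_ne q hK h2 hL _ hne h0

end Aux2

/-- Projection of `V = K × L × L × K` onto the two middle coordinates. -/
def projLL (K L : Type) [Field K] [Field L] [Algebra K L] :
    (K × L × L × K) →ₗ[K] L × L where
  toFun u := (u.2.1, u.2.2.1)
  map_add' _ _ := rfl
  map_smul' _ _ := rfl



/-- For `q` even, `F = F_{q³}`, `K = F_q`, with trace `T` and norm
`N`, the quadratic form `Q(a,β,γ,d) = ad + T(βγ)` on `V = K ⊕ F ⊕ F ⊕ K` makes
`V` an `O⁺(8,q)`-space, and the `q³+1` points `⟨(0,0,0,1)⟩` and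
`⟨(1, t, t^{q+q²}, N(t))⟩` for `t ∈ F` form an ovoid: they are singular,
pairwise non-perpendicular, and every maximal totally singular (i.e.
4-dimensional totally singular) subspace contains exactly one of them. -/
theorem stmt_15 (q : ℕ) (hq : IsPrimePow q) (hqe : Even q)
    (K L : Type) [Field K] [Field L] [Algebra K L] [Fintype K] [Fintype L]
    (hK : Fintype.card K = q) (hL : Fintype.card L = q ^ 3)
    (Q : K × L × L × K → K)
    (hQ : ∀ v : K × L × L × K,
      Q v = v.1 * v.2.2.2 + Algebra.trace K L (v.2.1 * v.2.2.1))
    (B : K × L × L × K → K × L × L × K → K)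
    (hB : ∀ u v, B u v = Q (u + v) - Q u - Q v)
    (Ω : Set (Submodule K (K × L × L × K)))
    (hΩ : Ω = {Submodule.span K {((0 : K), (0 : L), (0 : L), (1 : K))}} ∪
      {P | ∃ t : L, P = Submodule.span K
        {((1 : K), t, t ^ (q + q ^ 2), Algebra.norm K t)}}) :
    Ω.ncard = q ^ 3 + 1 ∧
    -- the points are singular:
    (∀ p ∈ Ω, ∀ v ∈ p, Q v = 0) ∧
    -- pairwise non-perpendicular:
    (∀ p₁ ∈ Ω, ∀ p₂ ∈ Ω, p₁ ≠ p₂ → ∃ u ∈ p₁, ∃ v ∈ p₂, B u v ≠ 0) ∧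
    -- every maximal totally singular subspace contains exactly one of them:
    (∀ M : Submodule K (K × L × L × K), Module.finrank K M = 4 →
      (∀ v ∈ M, Q v = 0) → ∃! p, p ∈ Ω ∧ p ≤ M) := by
  classical
  have h2 : ∃ m : ℕ, 0 < m ∧ q = 2 ^ m := aux_two_pow hq hqe
  haveI hCK : CharP K 2 := aux_charK hK h2
  haveI hCL : CharP L 2 := charP_of_injective_algebraMap (algebraMap K L).injective 2
  have h2K : (2 : K) = 0 := CharTwo.two_eq_zero
  have hq1 : 1 < q := by
    obtain ⟨m, hm, rfl⟩ := h2; exact Nat.one_lt_two_pow_iff.mpr hm.ne'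
  have hrankL : Module.finrank K L = 3 := aux_finrank q hK h2 hL
  -- convenient form of Q
  have hQ' : ∀ (a : K) (x y : L) (dd : K),
      Q (a, x, y, dd) = a * dd + Algebra.trace K L (x * y) := fun a x y dd => hQ _
  have hKeq : ∀ a b : K, a + b = 0 → a = b := fun a b h =>
    (eq_neg_of_add_eq_zero_left h).trans (CharTwo.neg_eq b)
  have hLne : ∀ a b : L, a ≠ b → a + b ≠ 0 := fun a b hab h =>
    hab ((eq_neg_of_add_eq_zero_left h).trans (CharTwo.neg_eq b))
  -- the points
  have hQe : Q ((0 : K), (0 : L), (0 : L), (1 : K)) = 0 := by rw [hQ']; simp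
  have hQP : ∀ t : L, Q ((1 : K), t, t ^ (q + q ^ 2), Algebra.norm K t) = 0 := by
    intro t
    rw [hQ', aux_key0 q hK h2 hL, one_mul]
    exact CharTwo.add_self_eq_zero _
  have hsmul : ∀ (c a : K) (x y : L) (dd : K),
      c • ((a, x, y, dd) : K × L × L × K) = (c * a, c • x, c • y, c * dd) :=
    fun _ _ _ _ _ => rfl
  have hQsmul : ∀ (c a : K) (x y : L) (dd : K),
      Q (c • ((a, x, y, dd) : K × L × L × K)) = c ^ 2 * Q (a, x, y, dd) := by
    intro c a x y dd
    rw [hsmul, hQ', hQ']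
    have hxy : (c • x) * (c • y) = (c * c) • (x * y) := by
      rw [smul_mul_assoc, mul_smul_comm, smul_smul]
    rw [hxy, map_smul, smul_eq_mul]
    ring
  -- reformulation of Ω
  have hΩ' : Ω = insert (Submodule.span K {((0 : K), (0 : L), (0 : L), (1 : K))})
      (Set.range fun t : L => Submodule.span K
        {((1 : K), t, t ^ (q + q ^ 2), Algebra.norm K t)}) := by
    rw [hΩ, Set.insert_eq]
    congr 1
    ext P₀
    constructor
    · rintro ⟨t, ht⟩; exact ⟨t, ht.symm⟩
    · rintro ⟨t, ht⟩; exact ⟨t, ht.symm⟩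
  have hΩe : Submodule.span K {((0 : K), (0 : L), (0 : L), (1 : K))} ∈ Ω := by
    rw [hΩ']; exact Set.mem_insert _ _
  have hΩP : ∀ t : L, Submodule.span K
      {((1 : K), t, t ^ (q + q ^ 2), Algebra.norm K t)} ∈ Ω := by
    intro t; rw [hΩ']; exact Set.mem_insert_of_mem _ ⟨t, rfl⟩
  have hmemΩ : ∀ p ∈ Ω, p = Submodule.span K {((0 : K), (0 : L), (0 : L), (1 : K))} ∨
      ∃ t : L, p = Submodule.span K {((1 : K), t, t ^ (q + q ^ 2), Algebra.norm K t)} := by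
    intro p hp
    rw [hΩ'] at hp
    rcases Set.mem_insert_iff.mp hp with h | h
    · exact Or.inl h
    · obtain ⟨t, ht⟩ := h; exact Or.inr ⟨t, ht.symm⟩
  -- Part 1 : cardinality
  have hpart1 : Ω.ncard = q ^ 3 + 1 := by
    have hPinj' : ∀ s t : L, Submodule.span K
          {((1 : K), s, s ^ (q + q ^ 2), Algebra.norm K s)} = Submodule.span K
          {((1 : K), t, t ^ (q + q ^ 2), Algebra.norm K t)} → s = t := by
      intro s t h
      have hs : ((1 : K), s, s ^ (q + q ^ 2), Algebra.norm K s) ∈ Submodule.span K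
          {((1 : K), t, t ^ (q + q ^ 2), Algebra.norm K t)} := by
        rw [← h]; exact Submodule.mem_span_singleton_self _
      obtain ⟨c, hc⟩ := Submodule.mem_span_singleton.mp hs
      rw [hsmul] at hc
      have h1 : c * 1 = 1 := congrArg (fun v : K × L × L × K => v.1) hc
      have hc1 : c = 1 := by simpa using h1
      rw [hc1] at hc
      have h2' : (1 : K) • t = s := congrArg (fun v : K × L × L × K => v.2.1) hc
      simpa using h2'.symm
    have hPinj : Function.Injective fun t : L => Submodule.span K
        {((1 : K), t, t ^ (q + q ^ 2), Algebra.norm K t)} := fun s t h => hPinj' s t h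
    have hnot : Submodule.span K {((0 : K), (0 : L), (0 : L), (1 : K))} ∉
        Set.range fun t : L => Submodule.span K
          {((1 : K), t, t ^ (q + q ^ 2), Algebra.norm K t)} := by
      rintro ⟨t, ht⟩
      have : ((1 : K), t, t ^ (q + q ^ 2), Algebra.norm K t) ∈
          Submodule.span K {((0 : K), (0 : L), (0 : L), (1 : K))} := by
        rw [← ht]; exact Submodule.mem_span_singleton_self _
      obtain ⟨c, hc⟩ := Submodule.mem_span_singleton.mp this
      rw [hsmul] at hc
      have h1 : c * 0 = 1 := congrArg (fun v : K × L × L × K => v.1) hc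
      simp at h1
    rw [hΩ', Set.ncard_insert_of_notMem hnot (Set.toFinite _), ← Set.image_univ,
      Set.ncard_image_of_injective _ hPinj, Set.ncard_univ, Nat.card_eq_fintype_card, hL]
  -- Part 2 : singularity
  have hpart2 : ∀ p ∈ Ω, ∀ v ∈ p, Q v = 0 := by
    intro p hp v hv
    rcases hmemΩ p hp with rfl | ⟨t, rfl⟩
    · obtain ⟨c, hc⟩ := Submodule.mem_span_singleton.mp hv
      rw [← hc, hQsmul, hQe, mul_zero]
    · obtain ⟨c, hc⟩ := Submodule.mem_span_singleton.mp hv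
      rw [← hc, hQsmul, hQP, mul_zero]
  -- Part 3 : pairwise non-perpendicularity
  have hpart3 : ∀ p₁ ∈ Ω, ∀ p₂ ∈ Ω, p₁ ≠ p₂ → ∃ u ∈ p₁, ∃ v ∈ p₂, B u v ≠ 0 := by
    intro p₁ hp₁ p₂ hp₂ hne
    rcases hmemΩ p₁ hp₁ with rfl | ⟨s, rfl⟩ <;> rcases hmemΩ p₂ hp₂ with rfl | ⟨t, rfl⟩
    · exact absurd rfl hne
    · refine ⟨_, Submodule.mem_span_singleton_self _, _,
        Submodule.mem_span_singleton_self _, ?_⟩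
      rw [hB]
      have hsum : ((0 : K), (0 : L), (0 : L), (1 : K)) +
          ((1 : K), t, t ^ (q + q ^ 2), Algebra.norm K t)
          = ((1 : K), t, t ^ (q + q ^ 2), 1 + Algebra.norm K t) := by
        simp [Prod.mk_add_mk]
      rw [hsum, hQe, hQP, hQ', aux_key0 q hK h2 hL, sub_zero, sub_zero]
      have hval : 1 * (1 + Algebra.norm K t) + Algebra.norm K t = 1 := by
        linear_combination Algebra.norm K t * h2K
      rw [hval]
      exact one_ne_zero
    · refine ⟨_, Submodule.mem_span_singleton_self _, _,
        Submodule.mem_span_singleton_self _, ?_⟩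
      rw [hB]
      have hsum : ((1 : K), s, s ^ (q + q ^ 2), Algebra.norm K s) +
          ((0 : K), (0 : L), (0 : L), (1 : K))
          = ((1 : K), s, s ^ (q + q ^ 2), 1 + Algebra.norm K s) := by
        simp [Prod.mk_add_mk, add_comm]
      rw [hsum, hQe, hQP, hQ', aux_key0 q hK h2 hL, sub_zero, sub_zero]
      have hval : 1 * (1 + Algebra.norm K s) + Algebra.norm K s = 1 := by
        linear_combination Algebra.norm K s * h2K
      rw [hval]
      exact one_ne_zero
    · have hst : s ≠ t := fun h => hne (by rw [h])
      refine ⟨_, Submodule.mem_span_singleton_self _, _,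
        Submodule.mem_span_singleton_self _, ?_⟩
      rw [hB]
      have h11 : (1 : K) + 1 = 0 := by rw [one_add_one_eq_two, h2K]
      have hsum : ((1 : K), s, s ^ (q + q ^ 2), Algebra.norm K s) +
          ((1 : K), t, t ^ (q + q ^ 2), Algebra.norm K t)
          = ((0 : K), s + t, s ^ (q + q ^ 2) + t ^ (q + q ^ 2),
              Algebra.norm K s + Algebra.norm K t) := by
        rw [Prod.mk_add_mk, Prod.mk_add_mk, Prod.mk_add_mk, h11]
      rw [hsum, hQP, hQP, hQ', aux_key q hK h2 hL, sub_zero, sub_zero, zero_mul, zero_add]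
      exact aux_norm_ne q hK h2 hL _ (hLne s t hst)
  refine ⟨hpart1, hpart2, hpart3, ?_⟩
  -- Part 4
  intro M hM4 hsing
  have hexist : ∃ p, p ∈ Ω ∧ p ≤ M := by
    set πa : (K × L × L × K) →ₗ[K] K := LinearMap.fst K K (L × L × K) with hπa
    set π' := projLL K L with hπ'
    have hπ'app : ∀ u : K × L × L × K, π' u = (u.2.1, u.2.2.1) := fun _ => rfl
    by_cases hcase : ∀ u ∈ M, u.1 = (0 : K)
    · -- the distinguished point lies in `M`
      have heM : ((0 : K), (0 : L), (0 : L), (1 : K)) ∈ M := by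
        by_contra heM
        have hinj0 : ∀ w ∈ M, π' w = 0 → w = 0 := by
          rintro ⟨w1, w2, w3, w4⟩ hw h0
          have hw1 : w1 = 0 := hcase _ hw
          simp only [hπ'app, Prod.mk_eq_zero] at h0
          obtain ⟨hw2, hw3⟩ := h0
          by_cases hw4 : w4 = 0
          · subst hw1; subst hw2; subst hw3; subst hw4; rfl
          · exfalso
            apply heM
            have hsm := M.smul_mem w4⁻¹ hw
            subst hw1; subst hw2; subst hw3
            rw [hsmul] at hsm
            simpa [inv_mul_cancel₀ hw4] using hsm
        set U' := Submodule.map π' M with hU'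
        have hU'ts : ∀ z ∈ U', Algebra.trace K L (z.1 * z.2) = 0 := by
          rintro z ⟨w, hwM, rfl⟩
          have hq0 := hsing w hwM
          rw [hQ] at hq0
          rw [hcase w hwM, zero_mul, zero_add] at hq0
          exact hq0
        have hinj : Function.Injective (π' ∘ₗ M.subtype) := by
          intro x y hxy
          have hmem : ((x : K × L × L × K) - y) ∈ M := M.sub_mem x.2 y.2
          have h0 : π' ((x : K × L × L × K) - y) = 0 := by
            rw [map_sub, sub_eq_zero]; exact hxy
          have hxy0 := hinj0 _ hmem h0
          exact Subtype.ext (by rwa [sub_eq_zero] at hxy0)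
        have hU'rank : Module.finrank K U' = 4 := by
          have hrange : U' = LinearMap.range (π' ∘ₗ M.subtype) := by
            rw [LinearMap.range_comp, Submodule.range_subtype]
          rw [hrange, LinearMap.finrank_range_of_inj hinj, hM4]
        haveI : Finite ((L × L) ⧸ U') := Quotient.finite _
        haveI : Fintype ((L × L) ⧸ U') := Fintype.ofFinite _
        have hg : Function.Injective
            (fun t : L => Submodule.Quotient.mk (p := U') (t, t ^ (q + q ^ 2))) := by
          intro s t h
          exact aux_quot_inj q hK h2 hL U' hU'ts s t ((Submodule.Quotient.eq U').mp h)
        have hle := Fintype.card_le_of_injective _ hg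
        rw [hL, Module.card_eq_pow_finrank (K := K) (V := (L × L) ⧸ U'), hK] at hle
        have h6 := Submodule.finrank_quotient_add_finrank U'
        rw [Module.finrank_prod, hrankL, hU'rank] at h6
        have hfr : Module.finrank K ((L × L) ⧸ U') = 2 := by omega
        rw [hfr] at hle
        have : q ^ 2 < q ^ 3 := Nat.pow_lt_pow_right hq1 (by omega)
        omega
      exact ⟨_, hΩe, Submodule.span_le.mpr (Set.singleton_subset_iff.mpr heM)⟩
    · push_neg at hcase
      obtain ⟨v₀, hv₀M, hv₀⟩ := hcase
      obtain ⟨va, vβ, vγ, vd⟩ := v₀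
      have hva : va ≠ 0 := hv₀
      have hv'M : ((1 : K), va⁻¹ • vβ, va⁻¹ • vγ, va⁻¹ * vd) ∈ M := by
        have hsm := M.smul_mem va⁻¹ hv₀M
        rw [hsmul] at hsm
        rwa [inv_mul_cancel₀ hva] at hsm
      set β := va⁻¹ • vβ with hβ
      set γ := va⁻¹ • vγ with hγ
      set d := va⁻¹ * vd with hd
      set W := M ⊓ LinearMap.ker πa with hW
      have hWrank : Module.finrank K W = 3 := by
        set φ : M →ₗ[K] K := πa ∘ₗ M.subtype with hφ
        have hφsurj : LinearMap.range φ = ⊤ := by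
          rw [LinearMap.range_eq_top]
          intro c
          refine ⟨c • ⟨((1 : K), β, γ, d), hv'M⟩, ?_⟩
          have happ : φ ⟨((1 : K), β, γ, d), hv'M⟩ = 1 := rfl
          rw [map_smul, happ, smul_eq_mul, mul_one]
        have hrn := LinearMap.finrank_range_add_finrank_ker φ
        rw [hφsurj, finrank_top, Module.finrank_self, hM4] at hrn
        have hkerW : Submodule.map M.subtype (LinearMap.ker φ) = W := by
          rw [hφ, LinearMap.ker_comp, Submodule.map_comap_subtype]
        rw [← hkerW, Submodule.finrank_map_subtype_eq]
        omega
      have hWinj0 : ∀ w ∈ W, π' w = 0 → w = 0 := by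
        rintro ⟨w1, w2, w3, w4⟩ hw h0
        obtain ⟨hwM, hwk⟩ := Submodule.mem_inf.mp hw
        have hw1 : w1 = 0 := LinearMap.mem_ker.mp hwk
        simp only [hπ'app, Prod.mk_eq_zero] at h0
        obtain ⟨hw2, hw3⟩ := h0
        subst hw1; subst hw2; subst hw3
        have e1 := hsing _ (M.add_mem hv'M hwM)
        rw [show ((1 : K), β, γ, d) + ((0 : K), (0 : L), (0 : L), w4)
            = ((1 : K), β, γ, d + w4) by simp [Prod.mk_add_mk]] at e1
        rw [hQ'] at e1
        have e2 := hsing _ hv'M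
        rw [hQ'] at e2
        have hw4 : w4 = 0 := by linear_combination e1 - e2
        subst hw4; rfl
      set U := Submodule.map π' W with hU
      have hinjW : Function.Injective (π' ∘ₗ W.subtype) := by
        intro x y hxy
        have hmem : ((x : K × L × L × K) - y) ∈ W := W.sub_mem x.2 y.2
        have h0 : π' ((x : K × L × L × K) - y) = 0 := by
          rw [map_sub, sub_eq_zero]; exact hxy
        have hxy0 := hWinj0 _ hmem h0
        exact Subtype.ext (by rwa [sub_eq_zero] at hxy0)
      have hUrank : Module.finrank K U = 3 := by
        have hrange : U = LinearMap.range (π' ∘ₗ W.subtype) := by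
          rw [LinearMap.range_comp, Submodule.range_subtype]
        rw [hrange, LinearMap.finrank_range_of_inj hinjW, hWrank]
      have hUts : ∀ z ∈ U, Algebra.trace K L (z.1 * z.2) = 0 := by
        rintro z ⟨w, hwW, rfl⟩
        obtain ⟨hwM, hwk⟩ := Submodule.mem_inf.mp hwW
        have hq0 := hsing w hwM
        rw [hQ] at hq0
        rw [show w.1 = 0 from LinearMap.mem_ker.mp hwk, zero_mul, zero_add] at hq0
        exact hq0
      haveI : Finite ((L × L) ⧸ U) := Quotient.finite _
      haveI : Fintype ((L × L) ⧸ U) := Fintype.ofFinite _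
      have hcardQ : Fintype.card ((L × L) ⧸ U) = q ^ 3 := by
        rw [Module.card_eq_pow_finrank (K := K), hK]
        have h6 := Submodule.finrank_quotient_add_finrank U
        rw [Module.finrank_prod, hrankL, hUrank] at h6
        have hfr : Module.finrank K ((L × L) ⧸ U) = 3 := by omega
        rw [hfr]
      have hginj : Function.Injective (fun t : L =>
          Submodule.Quotient.mk (p := U) ((t, t ^ (q + q ^ 2)) + (β, γ))) := by
        intro s t h
        apply aux_quot_inj q hK h2 hL U hUts s t
        have hmem := (Submodule.Quotient.eq U).mp h
        have heq : ((s, s ^ (q + q ^ 2)) : L × L) - (t, t ^ (q + q ^ 2))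
            = ((s, s ^ (q + q ^ 2)) + (β, γ)) - ((t, t ^ (q + q ^ 2)) + (β, γ)) := by abel
        rwa [heq]
      have hgbij := (Fintype.bijective_iff_injective_and_card _).mpr
        ⟨hginj, by rw [hL, hcardQ]⟩
      obtain ⟨t, hgt⟩ := hgbij.2 0
      have hmemU : ((t, t ^ (q + q ^ 2)) + (β, γ) : L × L) ∈ U :=
        (Submodule.Quotient.mk_eq_zero U).mp hgt
      obtain ⟨w, hwW, hwπ⟩ := hmemU
      obtain ⟨hwM, hwk⟩ := Submodule.mem_inf.mp hwW
      obtain ⟨w1, w2, w3, w4⟩ := w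
      have hw1 : w1 = 0 := LinearMap.mem_ker.mp hwk
      simp only [hπ'app, Prod.mk_add_mk, Prod.mk.injEq] at hwπ
      obtain ⟨hw2, hw3⟩ := hwπ
      have hchar2L : ∀ x y : L, x + (y + x) = y := fun x y => by
        rw [add_comm y x, ← add_assoc, CharTwo.add_self_eq_zero, zero_add]
      have hsum : ((1 : K), β, γ, d) + (w1, w2, w3, w4)
          = ((1 : K), t, t ^ (q + q ^ 2), d + w4) := by
        subst hw1; subst hw2; subst hw3
        simp [Prod.mk_add_mk, hchar2L]
      have hPtM : ((1 : K), t, t ^ (q + q ^ 2), d + w4) ∈ M := by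
        rw [← hsum]; exact M.add_mem hv'M hwM
      have e := hsing _ hPtM
      rw [hQ', aux_key0 q hK h2 hL, one_mul] at e
      have hdn : d + w4 = Algebra.norm K t := hKeq _ _ e
      rw [hdn] at hPtM
      exact ⟨_, hΩP t, Submodule.span_le.mpr (Set.singleton_subset_iff.mpr hPtM)⟩
  obtain ⟨p, hpΩ, hpM⟩ := hexist
  refine ⟨p, ⟨hpΩ, hpM⟩, ?_⟩
  rintro y ⟨hyΩ, hyM⟩
  by_contra hne
  obtain ⟨u, hu, v, hv, hBne⟩ := hpart3 y hyΩ p hpΩ hne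
  apply hBne
  rw [hB, hsing u (hyM hu), hsing v (hpM hv), hsing (u + v) (M.add_mem (hyM hu) (hpM hv))]
  ring
end
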